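/- arXiv:1202.4686 — 3 statements merged into one kernel-verified Lean document; each statement's English description precedes it below -/
import Mathlib

section
/- Cone Lemma: Let 𝒯 be a parallelogram tiling and let α > 0 be a lower bound on all interior angles of the tiles. Let W be the worm determined by a tile T and an edge e of T with endpoints e₁, e₂. Then no tile of W intersects the open cone e₁ + C(e₁ − e₂, α) or the open cone e₂ + C(e₂ − e₁, α), where C(x, α) = { z ∈ ℝ² : the angle between x and z is strictly less than α }. -/
open InnerProductGeometry Real RealInnerProductSpace

noncomputable section

/-- A parallelogram in ℝ², given by a base point and two linearly independent edge vectors. -/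
structure Pgram where
  a : EuclideanSpace ℝ (Fin 2)
  u : EuclideanSpace ℝ (Fin 2)
  v : EuclideanSpace ℝ (Fin 2)
  indep : LinearIndependent ℝ ![u, v]

namespace Pgram

def carrier (P : Pgram) : Set (EuclideanSpace ℝ (Fin 2)) :=
  {x | ∃ s t : ℝ, s ∈ Set.Icc (0:ℝ) 1 ∧ t ∈ Set.Icc (0:ℝ) 1 ∧ x = P.a + s • P.u + t • P.v}

def vertexSet (P : Pgram) : Set (EuclideanSpace ℝ (Fin 2)) := {P.a, P.a + P.u, P.a + P.u + P.v, P.a + P.v}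

def edgeSet (P : Pgram) : Set (Set (EuclideanSpace ℝ (Fin 2))) :=
  { segment ℝ P.a (P.a + P.u), segment ℝ (P.a + P.v) (P.a + P.v + P.u),
    segment ℝ P.a (P.a + P.v), segment ℝ (P.a + P.u) (P.a + P.u + P.v) }

end Pgram

/-- A locally finite, vertex-to-vertex tiling of the plane by parallelograms. -/
structure PgramTiling where
  tiles : Set Pgram
  covers : ∀ x : EuclideanSpace ℝ (Fin 2), ∃ P ∈ tiles, x ∈ P.carrier
  disjointInt : ∀ P ∈ tiles, ∀ Q ∈ tiles, P ≠ Q → interior P.carrier ∩ interior Q.carrier = ∅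
  locallyFinite : ∀ x : EuclideanSpace ℝ (Fin 2), ∀ r : ℝ,
    {P | P ∈ tiles ∧ (P.carrier ∩ Metric.ball x r).Nonempty}.Finite
  vertexToVertex : ∀ P ∈ tiles, ∀ Q ∈ tiles, ∀ x ∈ P.vertexSet, x ∈ Q.carrier → x ∈ Q.vertexSet

/-- A worm: a bi-infinite sequence of tiles, consecutive ones sharing an edge parallel to
a fixed direction `dir`, never backtracking. -/
structure Worm (𝒯 : PgramTiling) where
  seq : ℤ → Pgram
  edge : ℤ → Set (EuclideanSpace ℝ (Fin 2))
  dir : EuclideanSpace ℝ (Fin 2)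
  dir_ne : dir ≠ 0
  mem : ∀ n, seq n ∈ 𝒯.tiles
  edge_mem : ∀ n, edge n ∈ (seq n).edgeSet ∧ edge n ∈ (seq (n+1)).edgeSet
  edge_par : ∀ n, ∃ p q : EuclideanSpace ℝ (Fin 2), edge n = segment ℝ p q ∧ ∃ c : ℝ, q - p = c • dir
  edge_opp : ∀ n, edge n ≠ edge (n - 1)

def Worm.tileSet {𝒯 : PgramTiling} (W : Worm 𝒯) : Set Pgram := Set.range W.seq

def Worm.carrier {𝒯 : PgramTiling} (W : Worm 𝒯) : Set (EuclideanSpace ℝ (Fin 2)) := ⋃ n : ℤ, (W.seq n).carrier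

/-- Congruence of parallelograms: related by an isometry of the plane. -/
def PgramCongruent (P Q : Pgram) : Prop := ∃ f : (EuclideanSpace ℝ (Fin 2)) ≃ᵢ (EuclideanSpace ℝ (Fin 2)), f '' P.carrier = Q.carrier

/-- Q is a translate of P. -/
def IsTranslate (P Q : Pgram) : Prop := ∃ t : EuclideanSpace ℝ (Fin 2), Q.carrier = (fun x => x + t) '' P.carrier

/-- The set of interior angles of the tiles of a tiling. -/
def interiorAngles (𝒯 : PgramTiling) : Set ℝ :=
  {θ | ∃ P ∈ 𝒯.tiles, θ = angle P.u P.v ∨ θ = π - angle P.u P.v}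

/-- The open cone of angle `α` about the direction `x`. -/
def cone (x : EuclideanSpace ℝ (Fin 2)) (α : ℝ) : Set (EuclideanSpace ℝ (Fin 2)) := {z | z ≠ 0 ∧ angle x z < α}

/-- Two parallelograms are edge-adjacent if they share a full edge. -/
def EdgeAdjacent (P Q : Pgram) : Prop := ∃ e, e ∈ P.edgeSet ∧ e ∈ Q.edgeSet



/-! ### Coordinate utilities -/

abbrev E2 := EuclideanSpace ℝ (Fin 2)

def perp (d : E2) : E2 := WithLp.toLp 2 ![-(d 1), d 0]

lemma inner2 (x y : E2) : ⟪x, y⟫ = x 0 * y 0 + x 1 * y 1 := by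
  simp [PiLp.inner_apply, Fin.sum_univ_two, RCLike.inner_apply, mul_comm]

@[simp] lemma perp_apply0 (d : E2) : perp d 0 = -(d 1) := rfl
@[simp] lemma perp_apply1 (d : E2) : perp d 1 = d 0 := rfl

lemma inner_perp_self (d : E2) : ⟪d, perp d⟫ = 0 := by
  simp [inner2]; ring

lemma perp_expand (d w : E2) : ⟪d, d⟫ • w = ⟪w, d⟫ • d + ⟪w, perp d⟫ • perp d := by
  rw [inner2 d d]
  ext i
  fin_cases i <;>
    simp [inner2, PiLp.smul_apply, PiLp.add_apply, smul_eq_mul] <;> ring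

lemma inner_sq_add (d w : E2) : ⟪w, d⟫ ^ 2 + ⟪w, perp d⟫ ^ 2 = ⟪d, d⟫ * ⟪w, w⟫ := by
  simp only [inner2, perp_apply0, perp_apply1]; ring

lemma inner_self_pos' {d : E2} (hd : d ≠ 0) : 0 < ⟪d, d⟫ := by rw [real_inner_self_eq_norm_sq]; exact pow_pos (norm_pos_iff.mpr hd) 2

/-- endpoints of a nondegenerate segment are determined -/
lemma seg_eq {V : Type*} [AddCommGroup V] [Module ℝ V] {a b c d : V} (hab : a ≠ b)
    (h : segment ℝ a b = segment ℝ c d) : (c = a ∧ d = b) ∨ (c = b ∧ d = a) := by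
  have hba : b - a ≠ 0 := sub_ne_zero.mpr (Ne.symm hab)
  have hc : c ∈ segment ℝ a b := h ▸ left_mem_segment ℝ c d
  have hd' : d ∈ segment ℝ a b := h ▸ right_mem_segment ℝ c d
  have ha : a ∈ segment ℝ c d := h.symm ▸ left_mem_segment ℝ a b
  have hb : b ∈ segment ℝ c d := h.symm ▸ right_mem_segment ℝ a b
  rw [segment_eq_image' ℝ a b] at hc hd'
  obtain ⟨s, hs, rfl⟩ := hc
  obtain ⟨s', hs', rfl⟩ := hd'
  rw [segment_eq_image' ℝ _ _] at ha hb
  obtain ⟨τ, hτ, hτe⟩ := ha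
  obtain ⟨τ', hτ', hτe'⟩ := hb
  dsimp only at hτe hτe'
  have h1 : (s + τ * (s' - s)) • (b - a) = (0:ℝ) • (b - a) := by
    rw [zero_smul]
    have : a + s • (b - a) + τ • (a + s' • (b - a) - (a + s • (b - a))) = a := hτe
    have h2 : (s + τ * (s' - s)) • (b - a) = a + s • (b-a) + τ • (a + s' • (b - a) - (a + s • (b - a))) - a := by
      module
    rw [h2, this]; abel
  have h2 : (s + τ' * (s' - s)) • (b - a) = (1:ℝ) • (b - a) := by
    rw [one_smul]
    have : a + s • (b - a) + τ' • (a + s' • (b - a) - (a + s • (b - a))) = b := hτe'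
    have h3 : (s + τ' * (s' - s)) • (b - a) = a + s • (b-a) + τ' • (a + s' • (b - a) - (a + s • (b - a))) - a := by
      module
    rw [h3, this]
  have e1 : s + τ * (s' - s) = 0 := by
    have := sub_eq_zero.mpr h1
    rw [← sub_smul] at this
    exact sub_eq_zero.mp (by simpa [hba] using (smul_eq_zero.mp this).resolve_right (by exact hba))
  have e2 : s + τ' * (s' - s) = 1 := by
    have := sub_eq_zero.mpr h2
    rw [← sub_smul] at this
    exact sub_eq_zero.mp (by simpa [hba] using (smul_eq_zero.mp this).resolve_right (by exact hba))
  obtain ⟨hs0, hs1⟩ := hs; obtain ⟨hs'0, hs'1⟩ := hs'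
  obtain ⟨hτ0, hτ1⟩ := hτ; obtain ⟨hτ'0, hτ'1⟩ := hτ'
  rcases le_or_gt s s' with hss | hss
  · left
    have hs_eq : s = 0 := by nlinarith
    have hs'_eq : s' = 1 := by nlinarith
    constructor
    · rw [hs_eq]; module
    · rw [hs'_eq]; module
  · right
    have hs_eq : s = 1 := by nlinarith
    have hs'_eq : s' = 0 := by nlinarith
    constructor
    · rw [hs_eq]; module
    · rw [hs'_eq]; module

/-! ### Parallelogram structure -/

lemma pair_zero {u v : E2} (h : LinearIndependent ℝ ![u, v]) :
    ∀ s t : ℝ, s • u + t • v = 0 → s = 0 ∧ t = 0 := by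
  intro s t hst
  have h01 : (![u, v] 0) = u := rfl
  exact LinearIndependent.pair_iff.mp (h01 ▸ h) s t hst

lemma self_ne_add {x d : E2} (hd : d ≠ 0) : x ≠ x + d := fun h => hd (left_eq_add.mp h)

lemma seg_ne {x d w : E2} (hd : d ≠ 0) (hw : w ≠ 0) :
    segment ℝ (x + w) (x + w + d) ≠ segment ℝ x (x + d) := by
  intro h
  rcases seg_eq (self_ne_add hd (x := x + w)) h with ⟨h1, h2⟩ | ⟨h1, h2⟩
  · exact hw (left_eq_add.mp h1)
  · have hw' : d = w := add_left_cancel h2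
    have h1' : x = x + (w + d) := by rw [← add_assoc]; exact h1
    have hzero : w + d = 0 := left_eq_add.mp h1'
    apply hd
    have h2d : (2:ℝ) • d = 0 := by rw [two_smul]; rw [hw'] at hzero ⊢; exact hzero
    rcases smul_eq_zero.mp h2d with h | h
    · norm_num at h
    · exact h

def repAt (P : Pgram) (x d w : E2) : Prop :=
  P.carrier = {z | ∃ s t : ℝ, s ∈ Set.Icc (0:ℝ) 1 ∧ t ∈ Set.Icc (0:ℝ) 1 ∧ z = x + s • d + t • w}

def PgA (P : Pgram) (x d : E2) : Prop :=
  ∃ w : E2,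
    segment ℝ (x + w) (x + w + d) ∈ P.edgeSet ∧
    segment ℝ (x + w) (x + w + d) ≠ segment ℝ x (x + d) ∧
    repAt P x d w ∧
    ⟪w, perp d⟫ ≠ 0 ∧
    (angle d w = angle P.u P.v ∨ angle d w = π - angle P.u P.v) ∧
    ∀ F ∈ P.edgeSet, (∃ y c, c ≠ (0:ℝ) ∧ F = segment ℝ y (y + c • d)) →
      F = segment ℝ x (x + d) ∨ F = segment ℝ (x + w) (x + w + d)

/-! flips -/

def flipU (P : Pgram) : Pgram :=
  ⟨P.a + P.u, -P.u, P.v, by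
    rw [LinearIndependent.pair_iff]
    intro s t hst
    have := pair_zero P.indep (-s) t (by rw [neg_smul, ← smul_neg]; exact hst)
    exact ⟨by linarith [this.1], this.2⟩⟩

def flipV (P : Pgram) : Pgram :=
  ⟨P.a + P.v, P.u, -P.v, by
    rw [LinearIndependent.pair_iff]
    intro s t hst
    have := pair_zero P.indep s (-t) (by rw [neg_smul, ← smul_neg]; exact hst)
    exact ⟨this.1, by linarith [this.2]⟩⟩

def swapUV (P : Pgram) : Pgram :=
  ⟨P.a, P.v, P.u, by
    rw [LinearIndependent.pair_iff]
    intro s t hst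
    have := pair_zero P.indep t s (by rw [add_comm]; exact hst)
    exact ⟨this.2, this.1⟩⟩

lemma carrier_flipU (P : Pgram) : (flipU P).carrier = P.carrier := by
  ext z
  constructor
  · rintro ⟨s, t, hs, ht, rfl⟩
    exact ⟨1 - s, t, ⟨by linarith [hs.1, hs.2], by linarith [hs.1]⟩, ht, by
      show P.a + P.u + s • (-P.u) + t • P.v = _ ; module⟩
  · rintro ⟨s, t, hs, ht, rfl⟩
    exact ⟨1 - s, t, ⟨by linarith [hs.2], by linarith [hs.1]⟩, ht, by
      show _ = P.a + P.u + (1 - s) • (-P.u) + t • P.v ; module⟩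

lemma carrier_flipV (P : Pgram) : (flipV P).carrier = P.carrier := by
  ext z
  constructor
  · rintro ⟨s, t, hs, ht, rfl⟩
    exact ⟨s, 1 - t, hs, ⟨by linarith [ht.1, ht.2], by linarith [ht.1]⟩, by
      show P.a + P.v + s • P.u + t • (-P.v) = _ ; module⟩
  · rintro ⟨s, t, hs, ht, rfl⟩
    exact ⟨s, 1 - t, hs, ⟨by linarith [ht.2], by linarith [ht.1]⟩, by
      show _ = P.a + P.v + s • P.u + (1 - t) • (-P.v) ; module⟩

lemma carrier_swapUV (P : Pgram) : (swapUV P).carrier = P.carrier := by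
  ext z
  constructor
  · rintro ⟨s, t, hs, ht, rfl⟩
    exact ⟨t, s, ht, hs, by show P.a + s • P.v + t • P.u = _ ; module⟩
  · rintro ⟨s, t, hs, ht, rfl⟩
    exact ⟨t, s, ht, hs, by show _ = P.a + t • P.v + s • P.u ; module⟩

lemma edgeSet_flipU (P : Pgram) : (flipU P).edgeSet = P.edgeSet := by
  have h1 : segment ℝ (P.a + P.u) (P.a + P.u + -P.u) = segment ℝ P.a (P.a + P.u) := by
    rw [show P.a + P.u + -P.u = P.a from by module, segment_symm]
  have h2 : segment ℝ (P.a + P.u + P.v) (P.a + P.u + P.v + -P.u) =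
      segment ℝ (P.a + P.v) (P.a + P.v + P.u) := by
    rw [show P.a + P.u + P.v + -P.u = P.a + P.v from by module, segment_symm,
      show P.a + P.u + P.v = P.a + P.v + P.u from by module]
  have h3 : segment ℝ (P.a + P.u) (P.a + P.u + P.v) = segment ℝ (P.a + P.u) (P.a + P.u + P.v) := rfl
  have h4 : segment ℝ (P.a + P.u + -P.u) (P.a + P.u + -P.u + P.v) = segment ℝ P.a (P.a + P.v) := by
    rw [show P.a + P.u + -P.u = P.a from by module]
  show ({_, _, _, _} : Set (Set E2)) = _
  rw [show (flipU P).a = P.a + P.u from rfl, show (flipU P).u = -P.u from rfl,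
    show (flipU P).v = P.v from rfl, h1, h2, h4]
  unfold Pgram.edgeSet
  ext F
  simp only [Set.mem_insert_iff, Set.mem_singleton_iff]
  tauto

lemma edgeSet_flipV (P : Pgram) : (flipV P).edgeSet = P.edgeSet := by
  have h1 : segment ℝ (P.a + P.v) (P.a + P.v + P.u) = segment ℝ (P.a + P.v) (P.a + P.v + P.u) := rfl
  have h2 : segment ℝ (P.a + P.v + -P.v) (P.a + P.v + -P.v + P.u) = segment ℝ P.a (P.a + P.u) := by
    rw [show P.a + P.v + -P.v = P.a from by module]
  have h3 : segment ℝ (P.a + P.v) (P.a + P.v + -P.v) = segment ℝ P.a (P.a + P.v) := by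
    rw [show P.a + P.v + -P.v = P.a from by module, segment_symm]
  have h4 : segment ℝ (P.a + P.v + P.u) (P.a + P.v + P.u + -P.v) =
      segment ℝ (P.a + P.u) (P.a + P.u + P.v) := by
    rw [show P.a + P.v + P.u + -P.v = P.a + P.u from by module, segment_symm,
      show P.a + P.v + P.u = P.a + P.u + P.v from by module]
  show ({_, _, _, _} : Set (Set E2)) = _
  rw [show (flipV P).a = P.a + P.v from rfl, show (flipV P).u = P.u from rfl,
    show (flipV P).v = -P.v from rfl, h2, h3, h4]
  unfold Pgram.edgeSet
  ext F
  simp only [Set.mem_insert_iff, Set.mem_singleton_iff]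
  tauto

lemma edgeSet_swapUV (P : Pgram) : (swapUV P).edgeSet = P.edgeSet := by
  show ({_, _, _, _} : Set (Set E2)) = _
  rw [show (swapUV P).a = P.a from rfl, show (swapUV P).u = P.v from rfl,
    show (swapUV P).v = P.u from rfl]
  unfold Pgram.edgeSet
  ext F
  simp only [Set.mem_insert_iff, Set.mem_singleton_iff]
  tauto

lemma PgA_of_flipU {P : Pgram} {x d : E2} (h : PgA (flipU P) x d) : PgA P x d := by
  obtain ⟨w, h1, h2, h3, h4, h5, h6⟩ := h
  refine ⟨w, edgeSet_flipU P ▸ h1, h2, ?_, h4, ?_, ?_⟩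
  · unfold repAt at h3 ⊢; rw [← carrier_flipU P]; exact h3
  · rcases h5 with h5 | h5
    · right
      rw [h5, show (flipU P).u = -P.u from rfl, show (flipU P).v = P.v from rfl, angle_neg_left]
    · left
      rw [h5, show (flipU P).u = -P.u from rfl, show (flipU P).v = P.v from rfl, angle_neg_left]
      ring
  · intro F hF hpar
    exact h6 F (by rw [edgeSet_flipU]; exact hF) hpar

lemma PgA_of_flipV {P : Pgram} {x d : E2} (h : PgA (flipV P) x d) : PgA P x d := by
  obtain ⟨w, h1, h2, h3, h4, h5, h6⟩ := h
  refine ⟨w, edgeSet_flipV P ▸ h1, h2, ?_, h4, ?_, ?_⟩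
  · unfold repAt at h3 ⊢; rw [← carrier_flipV P]; exact h3
  · rcases h5 with h5 | h5
    · right
      rw [h5, show (flipV P).u = P.u from rfl, show (flipV P).v = -P.v from rfl, angle_neg_right]
    · left
      rw [h5, show (flipV P).u = P.u from rfl, show (flipV P).v = -P.v from rfl, angle_neg_right]
      ring
  · intro F hF hpar
    exact h6 F (by rw [edgeSet_flipV]; exact hF) hpar

lemma PgA_of_swapUV {P : Pgram} {x d : E2} (h : PgA (swapUV P) x d) : PgA P x d := by
  obtain ⟨w, h1, h2, h3, h4, h5, h6⟩ := h
  refine ⟨w, edgeSet_swapUV P ▸ h1, h2, ?_, h4, ?_, ?_⟩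
  · unfold repAt at h3 ⊢; rw [← carrier_swapUV P]; exact h3
  · rcases h5 with h5 | h5
    · left
      rw [h5, show (swapUV P).u = P.v from rfl, show (swapUV P).v = P.u from rfl, angle_comm]
    · right
      rw [h5, show (swapUV P).u = P.v from rfl, show (swapUV P).v = P.u from rfl, angle_comm]
  · intro F hF hpar
    exact h6 F (by rw [edgeSet_swapUV]; exact hF) hpar

lemma inner_self_ne_zero' {d : E2} (hd : d ≠ 0) : ⟪d, d⟫ ≠ 0 := ne_of_gt (inner_self_pos' hd)

lemma pgA_core (P : Pgram) (x d : E2) (hd : d ≠ 0) (ha : P.a = x) (hu : P.u = d) : PgA P x d := by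
  subst ha hu
  have hv : P.v ≠ 0 := by have := P.indep.ne_zero 1; simpa using this
  have hu0 : P.u ≠ 0 := hd
  refine ⟨P.v, ?_, ?_, ?_, ?_, Or.inl rfl, ?_⟩
  · show _ ∈ P.edgeSet
    unfold Pgram.edgeSet
    right; left; rfl
  · exact seg_ne hd hv
  · rfl
  · intro h0
    have hexp := perp_expand P.u P.v
    rw [h0, zero_smul, add_zero] at hexp
    have : (-⟪P.v, P.u⟫) • P.u + ⟪P.u, P.u⟫ • P.v = 0 := by
      rw [neg_smul, hexp]; abel
    exact inner_self_ne_zero' hd (pair_zero P.indep _ _ this).2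
  · intro F hF hpar
    unfold Pgram.edgeSet at hF
    simp only [Set.mem_insert_iff, Set.mem_singleton_iff] at hF
    obtain ⟨y, c, hc, hFy⟩ := hpar
    have hyd : y ≠ y + c • P.u := self_ne_add (by
      intro h; rcases smul_eq_zero.mp h with h | h; exacts [hc h, hd h])
    rcases hF with hF | hF | hF | hF
    · left; rw [hF]
    · right; rw [hF]
    · exfalso
      rw [hF] at hFy
      have hav : P.a ≠ P.a + P.v := self_ne_add hv
      rcases seg_eq hav hFy with ⟨h1, h2⟩ | ⟨h1, h2⟩
      · -- y = P.a, y + c•u = P.a + P.v  ⇒ c•u − v = 0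
        rw [h1] at h2
        have : c • P.u + (-1 : ℝ) • P.v = 0 := by
          rw [neg_one_smul]
          have h3 : c • P.u = P.v := add_left_cancel h2
          rw [h3]; abel
        have := (pair_zero P.indep _ _ this).2
        norm_num at this
      · -- y = P.a + P.v, y + c•u = P.a ⇒ c•u + v = 0
        rw [h1] at h2
        have : c • P.u + (1 : ℝ) • P.v = 0 := by
          rw [one_smul]
          have h3 : P.a + (P.v + c • P.u) = P.a + 0 := by rw [← add_assoc, add_zero]; exact h2
          have h4 : P.v + c • P.u = 0 := add_left_cancel h3
          rw [← h4]; abel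
        have := (pair_zero P.indep _ _ this).2
        norm_num at this
    · exfalso
      rw [hF] at hFy
      have hav : P.a + P.u ≠ P.a + P.u + P.v := self_ne_add hv
      rcases seg_eq hav hFy with ⟨h1, h2⟩ | ⟨h1, h2⟩
      · rw [h1] at h2
        have : c • P.u + (-1 : ℝ) • P.v = 0 := by
          rw [neg_one_smul]
          have h3 : c • P.u = P.v := add_left_cancel h2
          rw [h3]; abel
        have := (pair_zero P.indep _ _ this).2
        norm_num at this
      · rw [h1] at h2
        have : c • P.u + (1 : ℝ) • P.v = 0 := by
          rw [one_smul]
          have h3 : P.a + P.u + (P.v + c • P.u) = P.a + P.u + 0 := by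
            rw [← add_assoc, add_zero]; exact h2
          have h4 : P.v + c • P.u = 0 := add_left_cancel h3
          rw [← h4]; abel
        have := (pair_zero P.indep _ _ this).2
        norm_num at this

lemma pgA (P : Pgram) (x d : E2) (hd : d ≠ 0) (hE : segment ℝ x (x + d) ∈ P.edgeSet) :
    PgA P x d := by
  have hxd : x ≠ x + d := self_ne_add hd
  unfold Pgram.edgeSet at hE
  simp only [Set.mem_insert_iff, Set.mem_singleton_iff] at hE
  rcases hE with hE | hE | hE | hE
  · rcases seg_eq hxd hE with ⟨h1, h2⟩ | ⟨h1, h2⟩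
    · exact pgA_core P x d hd h1 (by rw [h1] at h2; exact add_left_cancel h2)
    · apply PgA_of_flipU
      have hu : P.u = -d := by
        rw [h1] at h2
        have : d + P.u = 0 := by
          have := left_eq_add.mp (by rw [← add_assoc]; exact h2.symm : x = x + (d + P.u))
          exact this
        have h4 : P.u = 0 - d := by rw [← this]; abel
        rw [h4]; abel
      exact pgA_core (flipU P) x d hd
        (by show P.a + P.u = x; rw [h1, hu]; abel) (by show -P.u = d; rw [hu]; abel)
  · rcases seg_eq hxd hE with ⟨h1, h2⟩ | ⟨h1, h2⟩
    · apply PgA_of_flipV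
      exact pgA_core (flipV P) x d hd h1 (by rw [h1] at h2; exact add_left_cancel h2)
    · apply PgA_of_flipV; apply PgA_of_flipU
      have hu : P.u = -d := by
        rw [h1] at h2
        have : d + P.u = 0 :=
          left_eq_add.mp (by rw [← add_assoc]; exact h2.symm : x = x + (d + P.u))
        have h4 : P.u = 0 - d := by rw [← this]; abel
        rw [h4]; abel
      apply pgA_core (flipU (flipV P)) x d hd
      · show P.a + P.v + P.u = x
        rw [hu, h1]; abel
      · show -P.u = d
        rw [hu]; abel
  · rcases seg_eq hxd hE with ⟨h1, h2⟩ | ⟨h1, h2⟩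
    · apply PgA_of_swapUV
      exact pgA_core (swapUV P) x d hd h1 (by rw [h1] at h2; exact add_left_cancel h2)
    · apply PgA_of_swapUV; apply PgA_of_flipU
      have hv : P.v = -d := by
        rw [h1] at h2
        have : d + P.v = 0 :=
          left_eq_add.mp (by rw [← add_assoc]; exact h2.symm : x = x + (d + P.v))
        have h4 : P.v = 0 - d := by rw [← this]; abel
        rw [h4]; abel
      apply pgA_core (flipU (swapUV P)) x d hd
      · show P.a + P.v = x
        rw [hv, h1]; abel
      · show -P.v = d
        rw [hv]; abel
  · rcases seg_eq hxd hE with ⟨h1, h2⟩ | ⟨h1, h2⟩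
    · apply PgA_of_swapUV; apply PgA_of_flipV
      exact pgA_core (flipV (swapUV P)) x d hd (by show P.a + P.u = x; exact h1)
        (by show P.v = d; rw [h1] at h2; exact add_left_cancel h2)
    · apply PgA_of_swapUV; apply PgA_of_flipV; apply PgA_of_flipU
      have hv : P.v = -d := by
        rw [h1] at h2
        have : d + P.v = 0 :=
          left_eq_add.mp (by rw [← add_assoc]; exact h2.symm : x = x + (d + P.v))
        have h4 : P.v = 0 - d := by rw [← this]; abel
        rw [h4]; abel
      apply pgA_core (flipU (flipV (swapUV P))) x d hd
      · show P.a + P.u + P.v = x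
        rw [hv, h1]; abel
      · show -P.v = d
        rw [hv]; abel

/-! ### Unique tile on a side of an edge -/

lemma eq_of_inners {d : E2} (hd : d ≠ 0) {y z : E2}
    (h1 : ⟪y, d⟫ = ⟪z, d⟫) (h2 : ⟪y, perp d⟫ = ⟪z, perp d⟫) : y = z := by
  have e1 := perp_expand d y
  have e2 := perp_expand d z
  have : ⟪d, d⟫ • y = ⟪d, d⟫ • z := by rw [e1, e2, h1, h2]
  exact smul_right_injective E2 (inner_self_ne_zero' hd) this

/-- coordinates of a point w.r.t. base x and frame (d, w) -/
lemma coord_eq {d w : E2} (hd : d ≠ 0) (hb : ⟪w, perp d⟫ ≠ 0) (x z : E2) :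
    z = x + ((⟪z - x, d⟫ - (⟪z - x, perp d⟫ / ⟪w, perp d⟫) * ⟪w, d⟫) / ⟪d, d⟫) • d
      + (⟪z - x, perp d⟫ / ⟪w, perp d⟫) • w := by
  set t : ℝ := ⟪z - x, perp d⟫ / ⟪w, perp d⟫ with ht
  set s : ℝ := (⟪z - x, d⟫ - t * ⟪w, d⟫) / ⟪d, d⟫ with hs
  have hD : ⟪d, d⟫ ≠ 0 := inner_self_ne_zero' hd
  have hg2 : t * ⟪w, perp d⟫ = ⟪z - x, perp d⟫ := div_mul_cancel₀ _ hb
  have hg1 : s * ⟪d, d⟫ = ⟪z - x, d⟫ - t * ⟪w, d⟫ := div_mul_cancel₀ _ hD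
  symm
  apply eq_of_inners hd
  · rw [inner_add_left, inner_add_left, real_inner_smul_left, real_inner_smul_left]
    have hzx : ⟪z - x, d⟫ = ⟪z, d⟫ - ⟪x, d⟫ := inner_sub_left z x d
    rw [hzx] at hg1
    linarith [hg1]
  · rw [inner_add_left, inner_add_left, real_inner_smul_left, real_inner_smul_left,
      inner_perp_self]
    have hzx : ⟪z - x, perp d⟫ = ⟪z, perp d⟫ - ⟪x, perp d⟫ := inner_sub_left z x (perp d)
    rw [hzx] at hg2
    linarith [hg2]

lemma inner3 (x d w v : E2) (s t : ℝ) :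
    ⟪x + s • d + t • w, v⟫ = ⟪x, v⟫ + s * ⟪d, v⟫ + t * ⟪w, v⟫ := by
  rw [inner_add_left, inner_add_left, real_inner_smul_left, real_inner_smul_left]

lemma rep_mem_interior {P : Pgram} {x d w : E2} (hd : d ≠ 0) (hb : ⟪w, perp d⟫ ≠ 0)
    (hrep : repAt P x d w) {s t : ℝ} (hs0 : 0 < s) (hs1 : s < 1) (ht0 : 0 < t) (ht1 : t < 1) :
    x + s • d + t • w ∈ interior P.carrier := by
  have hD : (0:ℝ) < ⟪d, d⟫ := inner_self_pos' hd
  set g2 : E2 → ℝ := fun z => ⟪z - x, perp d⟫ / ⟪w, perp d⟫ with hg2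
  set g1 : E2 → ℝ := fun z => (⟪z - x, d⟫ - g2 z * ⟪w, d⟫) / ⟪d, d⟫ with hg1
  have contsub : Continuous fun z : E2 => z - x := continuous_id.sub continuous_const
  have cont2 : Continuous g2 := by
    apply Continuous.div_const
    exact Continuous.inner contsub continuous_const
  have cont1 : Continuous g1 := by
    apply Continuous.div_const
    exact (Continuous.inner contsub continuous_const).sub (cont2.mul continuous_const)
  set U : Set E2 := ({z | 0 < g1 z} ∩ {z | g1 z < 1}) ∩ ({z | 0 < g2 z} ∩ {z | g2 z < 1}) with hU
  have hUopen : IsOpen U :=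
    ((isOpen_lt continuous_const cont1).inter (isOpen_lt cont1 continuous_const)).inter
      ((isOpen_lt continuous_const cont2).inter (isOpen_lt cont2 continuous_const))
  have hUsub : U ⊆ P.carrier := by
    rintro z ⟨⟨hz1, hz2⟩, hz3, hz4⟩
    rw [hrep]
    exact ⟨g1 z, g2 z, ⟨le_of_lt hz1, le_of_lt hz2⟩, ⟨le_of_lt hz3, le_of_lt hz4⟩,
      coord_eq hd hb x z⟩
  have hmem : x + s • d + t • w ∈ U := by
    have hsub : x + s • d + t • w - x = s • d + t • w := by abel
    have e2 : g2 (x + s • d + t • w) = t := by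
      rw [hg2]
      show (⟪x + s • d + t • w - x, perp d⟫) / _ = t
      rw [hsub, inner_add_left, real_inner_smul_left, real_inner_smul_left, inner_perp_self]
      rw [div_eq_iff hb]; ring
    have e1 : g1 (x + s • d + t • w) = s := by
      rw [hg1]
      show (⟪x + s • d + t • w - x, d⟫ - g2 _ * ⟪w, d⟫) / _ = s
      rw [e2, hsub, inner_add_left, real_inner_smul_left, real_inner_smul_left]
      rw [div_eq_iff (ne_of_gt hD)]; ring
    refine ⟨⟨?_, ?_⟩, ?_, ?_⟩ <;> simp only [Set.mem_setOf_eq, e1, e2] <;> assumption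
  exact interior_maximal hUsub hUopen hmem

lemma side_unique (𝒯 : PgramTiling) {P Q : Pgram} (hP : P ∈ 𝒯.tiles) (hQ : Q ∈ 𝒯.tiles)
    {x d wP wQ : E2} (hd : d ≠ 0) (hbP : ⟪wP, perp d⟫ ≠ 0) (hbQ : ⟪wQ, perp d⟫ ≠ 0)
    (hsign : 0 < ⟪wP, perp d⟫ * ⟪wQ, perp d⟫)
    (hrepP : repAt P x d wP) (hrepQ : repAt Q x d wQ) : P = Q := by
  by_contra hne
  have hD : (0:ℝ) < ⟪d, d⟫ := inner_self_pos' hd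
  set ρ : ℝ := ⟪wP, perp d⟫ / ⟪wQ, perp d⟫ with hρ
  have hρpos : 0 < ρ := div_pos_iff.mpr (by
    rcases mul_pos_iff.mp hsign with ⟨h1, h2⟩ | ⟨h1, h2⟩
    · exact Or.inl ⟨h1, h2⟩
    · exact Or.inr ⟨h1, h2⟩)
  set K : ℝ := |⟪wP, d⟫ - ρ * ⟪wQ, d⟫| with hK
  set ε : ℝ := min (1/2) (min (1/(2*(ρ+1))) (⟪d, d⟫/(2*(K+1)))) with hε
  have hεpos : 0 < ε := by
    apply lt_min (by norm_num)
    apply lt_min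
    · positivity
    · positivity
  have hεhalf : ε ≤ 1/2 := min_le_left _ _
  have hε1 : ε ≤ 1/(2*(ρ+1)) := le_trans (min_le_right _ _) (min_le_left _ _)
  have hε2 : ε ≤ ⟪d, d⟫/(2*(K+1)) := le_trans (min_le_right _ _) (min_le_right _ _)
  set z : E2 := x + (1/2 : ℝ) • d + ε • wP with hz
  have hzP : z ∈ interior P.carrier :=
    rep_mem_interior hd hbP hrepP (by norm_num) (by norm_num) hεpos (by linarith)
  -- Q-coordinates of z
  set tQ : ℝ := ε * ρ with htQ
  set sQ : ℝ := 1/2 + ε * (⟪wP, d⟫ - ρ * ⟪wQ, d⟫) / ⟪d, d⟫ with hsQ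
  have hzQcoord : z = x + sQ • d + tQ • wQ := by
    apply eq_of_inners hd
    · rw [hz, inner3, inner3]
      have hsQD : sQ * ⟪d, d⟫ = 1/2 * ⟪d, d⟫ + ε * (⟪wP, d⟫ - ρ * ⟪wQ, d⟫) := by
        rw [hsQ, add_mul, div_mul_cancel₀ _ (ne_of_gt hD)]
      rw [htQ]
      linear_combination (-1 : ℝ) * hsQD
    · rw [hz, inner3, inner3, inner_perp_self]
      have hcan : ρ * ⟪wQ, perp d⟫ = ⟪wP, perp d⟫ := div_mul_cancel₀ _ hbQ
      have h2 : tQ * ⟪wQ, perp d⟫ = ε * ⟪wP, perp d⟫ := by rw [htQ, mul_assoc, hcan]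
      linarith [h2]
  have hKbound : |ε * (⟪wP, d⟫ - ρ * ⟪wQ, d⟫) / ⟪d, d⟫| < 1/2 := by
    rw [abs_div, abs_mul, abs_of_pos hD]
    rw [div_lt_iff₀ hD]
    have h1 : |ε| = ε := abs_of_pos hεpos
    have h2 : |⟪wP, d⟫ - ρ * ⟪wQ, d⟫| = K := rfl
    rw [h1, h2]
    have hKnn : 0 ≤ K := abs_nonneg _
    have : ε * (K + 1) ≤ ⟪d, d⟫ / 2 := by
      calc ε * (K + 1) ≤ (⟪d, d⟫/(2*(K+1))) * (K + 1) := by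
            apply mul_le_mul_of_nonneg_right hε2; linarith
        _ = ⟪d, d⟫ / 2 := by field_simp
    nlinarith
  have hzQ : z ∈ interior Q.carrier := by
    rw [hzQcoord]
    apply rep_mem_interior hd hbQ hrepQ
    · rw [hsQ]
      have := abs_lt.mp hKbound
      linarith [this.1]
    · rw [hsQ]
      have := abs_lt.mp hKbound
      linarith [this.2]
    · positivity
    · rw [htQ]
      have : ε * ρ ≤ (1/(2*(ρ+1))) * ρ := mul_le_mul_of_nonneg_right hε1 (le_of_lt hρpos)
      have h2 : (1/(2*(ρ+1))) * ρ < 1 := by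
        rw [div_mul_eq_mul_div, div_lt_one (by positivity)]
        nlinarith
      linarith
  have := 𝒯.disjointInt P hP Q hQ hne
  exact Set.eq_empty_iff_forall_notMem.mp this z ⟨hzP, hzQ⟩

/-! ### Worm structure -/

lemma edge_nondeg (P : Pgram) {F : Set E2} (hF : F ∈ P.edgeSet) :
    ∃ a b : E2, a ≠ b ∧ F = segment ℝ a b := by
  have hu : P.u ≠ 0 := by have := P.indep.ne_zero 0; simpa using this
  have hv : P.v ≠ 0 := by have := P.indep.ne_zero 1; simpa using this
  unfold Pgram.edgeSet at hF
  simp only [Set.mem_insert_iff, Set.mem_singleton_iff] at hF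
  rcases hF with h | h | h | h
  · exact ⟨_, _, self_ne_add hu, h⟩
  · exact ⟨_, _, self_ne_add hu, h⟩
  · exact ⟨_, _, self_ne_add hv, h⟩
  · exact ⟨_, _, self_ne_add hv, h⟩

lemma xuniq {d : E2} (hd : d ≠ 0) {x y : E2}
    (h : segment ℝ x (x + d) = segment ℝ y (y + d)) : x = y := by
  rcases seg_eq (self_ne_add hd) h with ⟨h1, h2⟩ | ⟨h1, h2⟩
  · exact h1.symm
  · exfalso
    have h3 : x + (d + d) = x + 0 := by
      rw [add_zero, ← add_assoc, ← h1]; exact h2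
    have h4 : d + d = 0 := add_left_cancel h3
    apply hd
    have h2d : (2:ℝ) • d = 0 := by rw [two_smul]; exact h4
    rcases smul_eq_zero.mp h2d with h | h
    · norm_num at h
    · exact h

lemma slope_bound {α : ℝ} (hα : 0 < α) (hαπ : α ≤ π/2) {d w : E2} (hd : d ≠ 0) (hw : w ≠ 0)
    (h1 : α ≤ angle d w) (h2 : angle d w ≤ π - α) :
    sin α * |⟪w, d⟫| ≤ cos α * |⟪w, perp d⟫| := by
  have hsin : 0 ≤ sin α := le_of_lt (Real.sin_pos_of_pos_of_lt_pi hα (by linarith [Real.pi_pos]))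
  have hcos : 0 ≤ cos α := Real.cos_nonneg_of_mem_Icc ⟨by linarith, hαπ⟩
  have hc1 : cos (angle d w) ≤ cos α :=
    Real.cos_le_cos_of_nonneg_of_le_pi (le_of_lt hα) (angle_le_pi d w) h1
  have hc2 : -cos α ≤ cos (angle d w) := by
    have := Real.cos_le_cos_of_nonneg_of_le_pi (angle_nonneg d w) (by linarith [hα] : π - α ≤ π) h2
    rw [Real.cos_pi_sub] at this
    linarith
  have hnd : 0 < ‖d‖ := norm_pos_iff.mpr hd
  have hnw : 0 < ‖w‖ := norm_pos_iff.mpr hw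
  have hca := InnerProductGeometry.cos_angle d w
  have habs : |⟪d, w⟫| ≤ cos α * (‖d‖ * ‖w‖) := by
    have h3 : |cos (angle d w)| ≤ cos α := abs_le.mpr ⟨hc2, hc1⟩
    have h4 : |⟪d, w⟫| = |cos (angle d w)| * (‖d‖ * ‖w‖) := by
      rw [hca, abs_div, abs_of_pos (by positivity : (0:ℝ) < ‖d‖ * ‖w‖)]
      field_simp
    rw [h4]
    exact mul_le_mul_of_nonneg_right h3 (by positivity)
  have hsq : ⟪w, d⟫^2 ≤ cos α ^ 2 * (⟪w, d⟫^2 + ⟪w, perp d⟫^2) := by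
    have hid : ⟪w, d⟫^2 + ⟪w, perp d⟫^2 = ⟪d, d⟫ * ⟪w, w⟫ := inner_sq_add d w
    have hnorm : ⟪d, d⟫ * ⟪w, w⟫ = (‖d‖ * ‖w‖)^2 := by
      rw [real_inner_self_eq_norm_mul_norm, real_inner_self_eq_norm_mul_norm]; ring
    have hdw : ⟪w, d⟫ = ⟪d, w⟫ := real_inner_comm d w
    rw [hid, hnorm, hdw]
    calc ⟪d, w⟫^2 = |⟪d, w⟫|^2 := (sq_abs _).symm
      _ ≤ (cos α * (‖d‖ * ‖w‖))^2 := by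
          apply sq_le_sq' _ habs
          linarith [abs_nonneg ⟪d, w⟫]
      _ = cos α ^2 * (‖d‖ * ‖w‖)^2 := by ring
  have hsin2 : sin α ^2 * ⟪w, d⟫^2 ≤ cos α ^2 * ⟪w, perp d⟫^2 := by
    have hpyth : sin α ^2 + cos α ^2 = 1 := Real.sin_sq_add_cos_sq α
    nlinarith [hsq]
  nlinarith [hsin2, mul_nonneg hsin (abs_nonneg ⟪w, d⟫), mul_nonneg hcos (abs_nonneg ⟪w, perp d⟫),
    sq_abs ⟪w, d⟫, sq_abs ⟪w, perp d⟫,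
    mul_nonneg (mul_nonneg hsin (abs_nonneg ⟪w, d⟫)) (mul_nonneg hcos (abs_nonneg ⟪w, perp d⟫))]

section WormCtx

variable {𝒯 : PgramTiling} (W : Worm 𝒯) {d : E2}

lemma edge_par' (hd : d ≠ 0) (hdir : ∃ c₀ : ℝ, c₀ ≠ 0 ∧ d = c₀ • W.dir) (n : ℤ) :
    ∃ (y : E2) (cc : ℝ), cc ≠ 0 ∧ W.edge n = segment ℝ y (y + cc • d) := by
  obtain ⟨c₀, hc₀, hdd⟩ := hdir
  obtain ⟨pn, qn, hen, cn, hcn⟩ := W.edge_par n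
  have hcn0 : cn ≠ 0 := by
    intro h
    rw [h, zero_smul, sub_eq_zero] at hcn
    obtain ⟨a, b, hab, hseg⟩ := edge_nondeg (W.seq n) (W.edge_mem n).1
    rw [hen, ← hcn, segment_same] at hseg
    have ha : a ∈ segment ℝ a b := left_mem_segment ℝ a b
    have hb : b ∈ segment ℝ a b := right_mem_segment ℝ a b
    rw [← hseg] at ha hb
    exact hab (ha.trans hb.symm)
  refine ⟨pn, cn / c₀, div_ne_zero hcn0 hc₀, ?_⟩
  have hsm : (cn / c₀) • d = cn • W.dir := by
    rw [hdd, smul_smul, div_mul_cancel₀ _ hc₀]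
  have hq : pn + (cn / c₀) • d = qn := by
    rw [hsm, ← hcn]; abel
  rw [hen, hq]

lemma exists_X (hd : d ≠ 0) (hdir : ∃ c₀ : ℝ, c₀ ≠ 0 ∧ d = c₀ • W.dir) {x₀ : E2}
    (h0 : W.edge 0 = segment ℝ x₀ (x₀ + d)) :
    ∃ X : ℤ → E2, X 0 = x₀ ∧ ∀ n : ℤ, 0 ≤ n → W.edge n = segment ℝ (X n) (X n + d) := by
  have hstep : ∀ n : ℤ, 0 ≤ n → (∃ y, W.edge n = segment ℝ y (y + d)) →
      ∃ y, W.edge (n+1) = segment ℝ y (y + d) := by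
    rintro n hn ⟨y, hy⟩
    have hmem : segment ℝ y (y + d) ∈ (W.seq (n+1)).edgeSet := hy ▸ (W.edge_mem n).2
    obtain ⟨w, hw1, hw2, hw3, hw4, hw5, hw6⟩ := pgA (W.seq (n+1)) y d hd hmem
    have hmem1 : W.edge (n+1) ∈ (W.seq (n+1)).edgeSet := (W.edge_mem (n+1)).1
    obtain ⟨y', cc, hcc, hy'⟩ := edge_par' W hd hdir (n+1)
    rcases hw6 (W.edge (n+1)) hmem1 ⟨y', cc, hcc, hy'⟩ with h | h
    · exfalso
      apply W.edge_opp (n+1)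
      rw [show (n:ℤ)+1-1 = n from by ring, hy]
      exact h
    · exact ⟨y + w, h⟩
  have hall : ∀ n : ℤ, 0 ≤ n → ∃ y, W.edge n = segment ℝ y (y + d) :=
    fun n hn => Int.le_induction (m := 0) (motive := fun n _ => ∃ y, W.edge n = segment ℝ y (y + d))
      ⟨x₀, h0⟩ (fun n hn ih => hstep n hn ih) n hn
  have hch : ∀ n : ℤ, ∃ y, (0 ≤ n → W.edge n = segment ℝ y (y + d)) := by
    intro n
    by_cases h : 0 ≤ n
    · exact (hall n h).imp (fun y hy => fun _ => hy)
    · exact ⟨0, fun hc => absurd hc h⟩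
  choose X hX using hch
  have hX' : ∀ n : ℤ, 0 ≤ n → W.edge n = segment ℝ (X n) (X n + d) := fun n hn => hX n hn
  have hX0 : X 0 = x₀ := xuniq hd ((hX' 0 le_rfl).symm.trans h0)
  exact ⟨X, hX0, hX'⟩

lemma tile_rep_gen {α : ℝ} (hα : 0 < α) (hαπ : α ≤ π/2)
    (hang : ∀ θ ∈ interiorAngles 𝒯, α ≤ θ)
    (hd : d ≠ 0) (hdir : ∃ c₀ : ℝ, c₀ ≠ 0 ∧ d = c₀ • W.dir)
    (X : ℤ → E2) (hX : ∀ n : ℤ, 0 ≤ n → W.edge n = segment ℝ (X n) (X n + d))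
    (i m n : ℤ) (hm : 0 ≤ m) (hn : 0 ≤ n)
    (hmE : W.edge m ∈ (W.seq i).edgeSet) (hnE : W.edge n ∈ (W.seq i).edgeSet)
    (hnm : W.edge n ≠ W.edge m) :
    repAt (W.seq i) (X m) d (X n - X m) ∧ ⟪X n - X m, perp d⟫ ≠ 0 ∧
    sin α * |⟪X n - X m, d⟫| ≤ cos α * |⟪X n - X m, perp d⟫| ∧
    (∀ F ∈ (W.seq i).edgeSet, (∃ y cc, cc ≠ (0:ℝ) ∧ F = segment ℝ y (y + cc • d)) →
      F = W.edge m ∨ F = W.edge n) := by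
  have hEm : segment ℝ (X m) (X m + d) ∈ (W.seq i).edgeSet := hX m hm ▸ hmE
  obtain ⟨w, hw1, hw2, hw3, hw4, hw5, hw6⟩ := pgA (W.seq i) (X m) d hd hEm
  obtain ⟨y', cc, hcc, hy'⟩ := edge_par' W hd hdir n
  have hidE : W.edge n = segment ℝ (X m + w) (X m + w + d) := by
    rcases hw6 (W.edge n) hnE ⟨y', cc, hcc, hy'⟩ with h | h
    · exfalso; apply hnm; rw [h, ← hX m hm]
    · exact h
  have hXn : X n = X m + w := xuniq hd ((hX n hn).symm.trans hidE)
  have hweq : w = X n - X m := by rw [hXn]; abel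
  subst hweq
  refine ⟨hw3, hw4, ?_, ?_⟩
  · -- slope
    have hwne : X n - X m ≠ 0 := fun h0 => hw4 (by rw [h0, inner_zero_left])
    have hθ1 : α ≤ angle (W.seq i).u (W.seq i).v :=
      hang _ ⟨W.seq i, W.mem i, Or.inl rfl⟩
    have hθ2 : α ≤ π - angle (W.seq i).u (W.seq i).v :=
      hang _ ⟨W.seq i, W.mem i, Or.inr rfl⟩
    have h1 : α ≤ angle d (X n - X m) := by
      rcases hw5 with h | h <;> rw [h] <;> linarith
    have h2 : angle d (X n - X m) ≤ π - α := by
      rcases hw5 with h | h <;> rw [h] <;> linarith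
    exact slope_bound hα hαπ hd hwne h1 h2
  · intro F hF hpar
    rcases hw6 F hF hpar with h | h
    · left; rw [h, ← hX m hm]
    · right; rw [h, ← hidE]

lemma dich {α : ℝ} (hα : 0 < α) (hαπ : α ≤ π/2)
    (hang : ∀ θ ∈ interiorAngles 𝒯, α ≤ θ)
    (hd : d ≠ 0) (hdir : ∃ c₀ : ℝ, c₀ ≠ 0 ∧ d = c₀ • W.dir)
    (X : ℤ → E2) (hX : ∀ n : ℤ, 0 ≤ n → W.edge n = segment ℝ (X n) (X n + d))
    (k : ℤ) (hk : 1 ≤ k) :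
    (W.seq (k+1) = W.seq k ∧ X (k+1) = X (k-1)) ∨
    (W.seq (k+1) ≠ W.seq k ∧ ⟪X (k+1) - X k, perp d⟫ * ⟪X (k-1) - X k, perp d⟫ < 0) := by
  have hkm : (0:ℤ) ≤ k - 1 := by omega
  have hk0 : (0:ℤ) ≤ k := by omega
  have hk1 : (0:ℤ) ≤ k + 1 := by omega
  have hmem_km : W.edge (k-1) ∈ (W.seq k).edgeSet := by
    have := (W.edge_mem (k-1)).2
    rwa [show k-1+1 = k from by ring] at this
  have hmem_k : W.edge k ∈ (W.seq k).edgeSet := (W.edge_mem k).1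
  have hmem_k' : W.edge k ∈ (W.seq (k+1)).edgeSet := (W.edge_mem k).2
  have hmem_k1 : W.edge (k+1) ∈ (W.seq (k+1)).edgeSet := (W.edge_mem (k+1)).1
  have hopp_k : W.edge (k-1) ≠ W.edge k := fun h => W.edge_opp k h.symm
  have hopp_k1 : W.edge (k+1) ≠ W.edge k := by
    have := W.edge_opp (k+1)
    rwa [show k+1-1 = k from by ring] at this
  have tr_k := tile_rep_gen W hα hαπ hang hd hdir X hX k k (k-1) hk0 hkm hmem_k hmem_km hopp_k
  have tr_k1 := tile_rep_gen W hα hαπ hang hd hdir X hX (k+1) k (k+1) hk0 hk1 hmem_k' hmem_k1 hopp_k1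
  by_cases heq : W.seq (k+1) = W.seq k
  · left
    refine ⟨heq, ?_⟩
    have hmem : W.edge (k+1) ∈ (W.seq k).edgeSet := heq ▸ hmem_k1
    obtain ⟨y', cc, hcc, hy'⟩ := edge_par' W hd hdir (k+1)
    rcases tr_k.2.2.2 (W.edge (k+1)) hmem ⟨y', cc, hcc, hy'⟩ with h | h
    · exact absurd h hopp_k1
    · exact xuniq hd ((hX (k+1) hk1).symm.trans (h.trans (hX (k-1) hkm)))
  · right
    refine ⟨heq, ?_⟩
    by_contra hprod
    push_neg at hprod
    have hne0 : ⟪X (k+1) - X k, perp d⟫ * ⟪X (k-1) - X k, perp d⟫ ≠ 0 :=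
      mul_ne_zero tr_k1.2.1 tr_k.2.1
    have hpos : 0 < ⟪X (k+1) - X k, perp d⟫ * ⟪X (k-1) - X k, perp d⟫ :=
      lt_of_le_of_ne hprod (Ne.symm hne0)
    exact heq (side_unique 𝒯 (W.mem (k+1)) (W.mem k) hd tr_k1.2.1 tr_k.2.1 hpos tr_k1.1 tr_k.1)

end WormCtx

section WormInv

variable {𝒯 : PgramTiling} (W : Worm 𝒯) {d : E2} {α : ℝ}

lemma inner_sub3 (a b c v : E2) : ⟪a - b, v⟫ = ⟪a - c, v⟫ - ⟪b - c, v⟫ := by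
  rw [inner_sub_left, inner_sub_left, inner_sub_left]; ring

lemma tile_basic (hα : 0 < α) (hαπ : α ≤ π/2)
    (hang : ∀ θ ∈ interiorAngles 𝒯, α ≤ θ)
    (hd : d ≠ 0) (hdir : ∃ c₀ : ℝ, c₀ ≠ 0 ∧ d = c₀ • W.dir)
    (X : ℤ → E2) (hX : ∀ n : ℤ, 0 ≤ n → W.edge n = segment ℝ (X n) (X n + d))
    (k : ℤ) (hk : 1 ≤ k) :
    repAt (W.seq k) (X (k-1)) d (X k - X (k-1)) ∧ ⟪X k - X (k-1), perp d⟫ ≠ 0 ∧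
    sin α * |⟪X k - X (k-1), d⟫| ≤ cos α * |⟪X k - X (k-1), perp d⟫| ∧
    (∀ F ∈ (W.seq k).edgeSet, (∃ y cc, cc ≠ (0:ℝ) ∧ F = segment ℝ y (y + cc • d)) →
      F = W.edge (k-1) ∨ F = W.edge k) := by
  have hmem_km : W.edge (k-1) ∈ (W.seq k).edgeSet := by
    have := (W.edge_mem (k-1)).2
    rwa [show k-1+1 = k from by ring] at this
  have hmem_k : W.edge k ∈ (W.seq k).edgeSet := (W.edge_mem k).1
  have hopp : W.edge k ≠ W.edge (k-1) := W.edge_opp k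
  exact tile_rep_gen W hα hαπ hang hd hdir X hX k (k-1) k (by omega) (by omega)
    hmem_km hmem_k hopp

abbrev InvBody (W : Worm 𝒯) (α : ℝ) (d : E2) (X : ℤ → E2) (N : ℤ) : Prop :=
  ∀ k : ℤ, 0 ≤ k → k ≤ N →
    (sin α * |⟪X k - X 0, d⟫| ≤ cos α * |⟪X k - X 0, perp d⟫|) ∧
    (1 ≤ k → 0 ≤ ⟪X (k-1) - X 0, perp d⟫ * ⟪X k - X 0, perp d⟫ ∧
      (|⟪X k - X 0, perp d⟫| < |⟪X (k-1) - X 0, perp d⟫| →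
        ∃ j : ℤ, 1 ≤ j ∧ j < k ∧ X j = X (k-1) ∧ X (j-1) = X k ∧ W.seq j = W.seq k))

theorem invariant (hα : 0 < α) (hαπ : α ≤ π/2)
    (hang : ∀ θ ∈ interiorAngles 𝒯, α ≤ θ)
    (hd : d ≠ 0) (hdir : ∃ c₀ : ℝ, c₀ ≠ 0 ∧ d = c₀ • W.dir)
    (X : ℤ → E2) (hX : ∀ n : ℤ, 0 ≤ n → W.edge n = segment ℝ (X n) (X n + d)) :
    ∀ N : ℤ, 0 ≤ N → InvBody W α d X N := by
  have hsin : 0 < sin α := Real.sin_pos_of_pos_of_lt_pi hα (by linarith [Real.pi_pos])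
  have hcos : 0 ≤ cos α := Real.cos_nonneg_of_mem_Icc ⟨by linarith, hαπ⟩
  intro N hN
  refine Int.le_induction (motive := fun N _ => InvBody W α d X N) ?_ ?_ N hN
  · intro k hk0 hk1
    have hk : k = 0 := by omega
    subst hk
    refine ⟨by simp, fun h1 => absurd h1 (by omega)⟩
  · intro N hN IH
    intro k hk0 hkN1
    rcases lt_or_ge k (N+1) with hlt | hge
    · exact IH k hk0 (by omega)
    have hkeq : k = N + 1 := by omega
    subst hkeq
    rw [show N+1-1 = N from by ring]
    rcases eq_or_lt_of_le hN with hN0 | hN1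
    · -- N = 0 : first step
      have hN0' : N = 0 := hN0.symm
      subst hN0'
      have tb := tile_basic W hα hαπ hang hd hdir X hX 1 le_rfl
      rw [show (1:ℤ)-1 = 0 from by ring] at tb
      refine ⟨?_, fun _ => ⟨?_, ?_⟩⟩
      · rw [show (0:ℤ)+1 = 1 from by ring]
        exact tb.2.2.1
      · simp
      · intro habs
        rw [sub_self, inner_zero_left, abs_zero] at habs
        exact absurd habs (abs_nonneg _).not_gt
    · -- N ≥ 1
      have hN1' : 1 ≤ N := hN1
      rcases dich W hα hαπ hang hd hdir X hX N hN1' with ⟨hseq, hxx⟩ | ⟨hnseq, hprod⟩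
      · -- bounce
        refine ⟨?_, fun _ => ⟨?_, ?_⟩⟩
        · rw [hxx]; exact (IH (N-1) (by omega) (by omega)).1
        · rw [hxx]
          have h := ((IH N (by omega) le_rfl).2 hN1').1
          linarith [mul_comm ⟪X (N-1) - X 0, perp d⟫ ⟪X N - X 0, perp d⟫, h]
        · intro _
          exact ⟨N, hN1', by omega, rfl, hxx.symm, hseq.symm⟩
      · -- straight
        have tbN1 := tile_basic W hα hαπ hang hd hdir X hX (N+1) (by omega)
        rw [show N+1-1 = N from by ring] at tbN1
        have tbN := tile_basic W hα hαπ hang hd hdir X hX N hN1'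
        set a1 := ⟪X N - X 0, d⟫ with ha1
        set a2 := ⟪X (N+1) - X 0, d⟫ with ha2
        set b0 := ⟪X (N-1) - X 0, perp d⟫ with hb0
        set b1 := ⟪X N - X 0, perp d⟫ with hb1
        set b2 := ⟪X (N+1) - X 0, perp d⟫ with hb2
        have had2 : ⟪X (N+1) - X N, d⟫ = a2 - a1 := inner_sub3 _ _ (X 0) d
        have hbd2 : ⟪X (N+1) - X N, perp d⟫ = b2 - b1 := inner_sub3 _ _ (X 0) (perp d)
        have hbd1 : ⟪X N - X (N-1), perp d⟫ = b1 - b0 := inner_sub3 _ _ (X 0) (perp d)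
        have hbd0 : ⟪X (N-1) - X N, perp d⟫ = b0 - b1 := inner_sub3 _ _ (X 0) (perp d)
        have hprod' : (b2 - b1) * (b0 - b1) < 0 := by rw [← hbd2, ← hbd0]; exact hprod
        have hslope2 : sin α * |a2 - a1| ≤ cos α * |b2 - b1| := by
          rw [← had2, ← hbd2]; exact tbN1.2.2.1
        have hb10 : b1 - b0 ≠ 0 := by rw [← hbd1]; exact tbN.2.1
        have hbound1 : sin α * |a1| ≤ cos α * |b1| := (IH N (by omega) le_rfl).1
        have hpair1 : 0 ≤ b0 * b1 := ((IH N (by omega) le_rfl).2 hN1').1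
        by_cases hb1z : b1 = 0
        · -- crossing through level zero
          have ha1z : a1 = 0 := by
            rw [hb1z, abs_zero, mul_zero] at hbound1
            have h2 : |a1| ≤ 0 := by nlinarith [abs_nonneg a1]
            exact abs_eq_zero.mp (le_antisymm h2 (abs_nonneg a1))
          refine ⟨?_, fun _ => ⟨?_, ?_⟩⟩
          · rw [ha1z, hb1z, sub_zero, sub_zero] at hslope2
            exact hslope2
          · rw [hb1z, zero_mul]
          · intro habs
            rw [hb1z, abs_zero] at habs
            exact absurd habs (abs_nonneg b2).not_gt
        by_cases hinw : |b1| < |b0|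
        · -- inward: use witness machinery
          obtain ⟨j, hj1, hjN, hxj, hxj1, hsj⟩ := ((IH N (by omega) le_rfl).2 hN1').2 hinw
          have AUX : ∀ jn : ℕ, ∀ j : ℤ, j.natAbs ≤ jn → 1 ≤ j → j < N →
              X j = X (N-1) → X (j-1) = X N → W.seq j = W.seq N →
              ∃ j' : ℤ, 2 ≤ j' ∧ j' < N ∧ X j' = X (N-1) ∧ X (j'-1) = X N ∧
                W.seq j' = W.seq N ∧
                ⟪X j' - X (j'-1), perp d⟫ * ⟪X (j'-2) - X (j'-1), perp d⟫ < 0 := by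
            intro jn
            induction jn using Nat.strong_induction_on with
            | _ jn IHs =>
              intro j hjn hj1' hjN' hxj' hxj1' hsj'
              have hj2 : 2 ≤ j := by
                rcases eq_or_lt_of_le hj1' with h | h
                · exfalso
                  apply hb1z
                  rw [hb1]
                  have hX0 : X (j-1) = X 0 := by rw [← h]; norm_num
                  rw [← hxj1', hX0, sub_self, inner_zero_left]
                · omega
              rcases dich W hα hαπ hang hd hdir X hX (j-1) (by omega) with ⟨hs, hxb⟩ | ⟨hs, hp⟩
              · -- bounce at j-1
                rw [show j-1+1 = j from by ring] at hs hxb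
                rw [show j-1-1 = j-2 from by ring] at hxb
                have hin : |⟪X (j-1) - X 0, perp d⟫| < |⟪X (j-1-1) - X 0, perp d⟫| := by
                  rw [show j-1-1 = j-2 from by ring, hxj1', ← hxb, hxj', ← hb0, ← hb1]
                  exact hinw
                obtain ⟨j₂, hj₂1, hj₂lt, hxj₂, hxj₂1, hsj₂⟩ :=
                  ((IH (j-1) (by omega) (by omega)).2 (by omega)).2 hin
                have hj₂N : j₂ < N := by omega
                apply IHs j₂.natAbs (by omega) j₂ le_rfl hj₂1 hj₂N
                · rw [hxj₂, show j-1-1 = j-2 from by ring, ← hxb, hxj']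
                · rw [hxj₂1, hxj1']
                · rw [hsj₂, ← hs, hsj']
              · -- straight at j-1
                rw [show j-1+1 = j from by ring] at hs hp
                rw [show j-1-1 = j-2 from by ring] at hp
                exact ⟨j, hj2, hjN', hxj', hxj1', hsj', hp⟩
          obtain ⟨j', hj'2, hj'N, hxj', hxj'1, hsj', hp'⟩ :=
            AUX j.natAbs j le_rfl hj1 hjN hxj hxj1 hsj
          have hmem1 : W.edge (j'-1) ∈ (W.seq (j'-1)).edgeSet := (W.edge_mem (j'-1)).1
          have hmem2 : W.edge (j'-2) ∈ (W.seq (j'-1)).edgeSet := by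
            have := (W.edge_mem (j'-2)).2
            rwa [show j'-2+1 = j'-1 from by ring] at this
          have hopp : W.edge (j'-2) ≠ W.edge (j'-1) := by
            intro h
            apply W.edge_opp (j'-1)
            rw [show j'-1-1 = j'-2 from by ring]
            exact h.symm
          have trj := tile_rep_gen W hα hαπ hang hd hdir X hX (j'-1) (j'-1) (j'-2)
            (by omega) (by omega) hmem1 hmem2 hopp
          have hvw : ⟪X j' - X (j'-1), perp d⟫ = b0 - b1 := by
            rw [hxj', hxj'1, ← hbd0]
          have hsign : 0 < ⟪X (N+1) - X N, perp d⟫ * ⟪X (j'-2) - X (j'-1), perp d⟫ := by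
            rw [hbd2]
            rw [hvw] at hp'
            rcases mul_neg_iff.mp hprod' with ⟨h1, h2⟩ | ⟨h1, h2⟩ <;>
              rcases mul_neg_iff.mp hp' with ⟨h3, h4⟩ | ⟨h3, h4⟩
            · linarith
            · exact mul_pos h1 h4
            · exact mul_pos_of_neg_of_neg h1 h4
            · linarith
          have hrepj : repAt (W.seq (j'-1)) (X N) d (X (j'-2) - X (j'-1)) := by
            rw [← hxj'1]; exact trj.1
          have heqtile : W.seq (N+1) = W.seq (j'-1) :=
            side_unique 𝒯 (W.mem (N+1)) (W.mem (j'-1)) hd tbN1.2.1 trj.2.1 hsign tbN1.1 hrepj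
          have hmemN1 : W.edge (N+1) ∈ (W.seq (j'-1)).edgeSet := by
            rw [← heqtile]; exact (W.edge_mem (N+1)).1
          obtain ⟨y', cc, hcc, hy'⟩ := edge_par' W hd hdir (N+1)
          have hXN1 : X (N+1) = X (j'-2) := by
            rcases trj.2.2.2 (W.edge (N+1)) hmemN1 ⟨y', cc, hcc, hy'⟩ with h | h
            · exfalso
              apply W.edge_opp (N+1)
              rw [show N+1-1 = N from by ring]
              rw [h, hX (j'-1) (by omega), hX N (by omega), hxj'1]
            · exact xuniq hd ((hX (N+1) (by omega)).symm.trans (h.trans (hX (j'-2) (by omega))))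
          refine ⟨?_, fun _ => ⟨?_, ?_⟩⟩
          · rw [ha2, hb2, hXN1]
            exact (IH (j'-2) (by omega) (by omega)).1
          · have hpairj : 0 ≤ ⟪X (j'-1-1) - X 0, perp d⟫ * ⟪X (j'-1) - X 0, perp d⟫ :=
              ((IH (j'-1) (by omega) (by omega)).2 (by omega)).1
            rw [show j'-1-1 = j'-2 from by ring] at hpairj
            have he1 : ⟪X (j'-1) - X 0, perp d⟫ = b1 := by rw [hxj'1, hb1]
            rw [he1] at hpairj
            rw [hb2, hXN1]
            linarith [mul_comm b1 ⟪X (j'-2) - X 0, perp d⟫, hpairj]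
          · intro _
            refine ⟨j'-1, by omega, by omega, hxj'1, ?_, heqtile.symm⟩
            rw [show j'-1-1 = j'-2 from by ring, ← hXN1]
        · -- outward
          push_neg at hinw
          have hb01 : b0 ≠ b1 := fun h => hb10 (by rw [h]; ring)
          rcases lt_or_gt_of_ne hb1z with hb1neg | hb1pos
          · -- b1 < 0
            have hb0np : b0 ≤ 0 := by
              by_contra hpos
              push_neg at hpos
              have := mul_neg_of_pos_of_neg hpos hb1neg
              linarith [mul_comm b0 b1, hpair1]
            have hb0abs : |b0| = -b0 := abs_of_nonpos hb0np
            have hb1abs : |b1| = -b1 := abs_of_neg hb1neg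
            have hb0gt : b1 < b0 := by
              rw [hb0abs, hb1abs] at hinw
              rcases eq_or_lt_of_le (by linarith : b1 ≤ b0) with h | h
              · exact absurd h.symm hb01
              · exact h
            have hb2lt : b2 < b1 := by
              by_contra hge2
              push_neg at hge2
              have := mul_nonneg (by linarith : (0:ℝ) ≤ b2 - b1) (by linarith : (0:ℝ) ≤ b0 - b1)
              linarith
            refine ⟨?_, fun _ => ⟨?_, ?_⟩⟩
            · have habs2 : |a2| - |a1| ≤ |a2 - a1| := abs_sub_abs_le_abs_sub a2 a1
              have hm := mul_le_mul_of_nonneg_left habs2 hsin.le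
              rw [mul_sub] at hm
              have hb2abs : |b2| = -b2 := abs_of_neg (by linarith)
              have hd2abs : |b2 - b1| = -(b2 - b1) := abs_of_neg (by linarith)
              rw [hd2abs] at hslope2
              rw [hb1abs] at hbound1
              rw [hb2abs]
              linarith
            · exact le_of_lt (mul_pos_of_neg_of_neg hb1neg (by linarith))
            · intro habs
              rw [hb1abs, abs_of_neg (by linarith : b2 < 0)] at habs
              linarith
          · -- 0 < b1
            have hb0nn : 0 ≤ b0 := by
              by_contra hneg
              push_neg at hneg
              have := mul_neg_of_neg_of_pos hneg hb1pos
              linarith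
            have hb0abs : |b0| = b0 := abs_of_nonneg hb0nn
            have hb1abs : |b1| = b1 := abs_of_pos hb1pos
            have hb0lt : b0 < b1 := by
              rw [hb0abs, hb1abs] at hinw
              rcases eq_or_lt_of_le hinw with h | h
              · exact absurd h hb01
              · exact h
            have hb2gt : b1 < b2 := by
              by_contra hge2
              push_neg at hge2
              have := mul_nonneg (by linarith : (0:ℝ) ≤ b1 - b2) (by linarith : (0:ℝ) ≤ b1 - b0)
              nlinarith
            refine ⟨?_, fun _ => ⟨?_, ?_⟩⟩
            · have habs2 : |a2| - |a1| ≤ |a2 - a1| := abs_sub_abs_le_abs_sub a2 a1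
              have hm := mul_le_mul_of_nonneg_left habs2 hsin.le
              rw [mul_sub] at hm
              have hb2abs : |b2| = b2 := abs_of_pos (by linarith)
              have hd2abs : |b2 - b1| = b2 - b1 := abs_of_pos (by linarith)
              rw [hd2abs] at hslope2
              rw [hb1abs] at hbound1
              rw [hb2abs]
              linarith
            · exact le_of_lt (mul_pos hb1pos (by linarith))
            · intro habs
              rw [hb1abs, abs_of_pos (by linarith : 0 < b2)] at habs
              linarith

end WormInv

section Final

variable {𝒯 : PgramTiling} {α : ℝ}

lemma perp_neg (d : E2) : perp (-d) = -perp d := by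
  ext i
  fin_cases i <;> simp [perp]

lemma tile_point_bound (W : Worm 𝒯) {d : E2} (hα : 0 < α) (hαπ : α ≤ π/2)
    (hang : ∀ θ ∈ interiorAngles 𝒯, α ≤ θ)
    (hd : d ≠ 0) (hdir : ∃ c₀ : ℝ, c₀ ≠ 0 ∧ d = c₀ • W.dir)
    (X : ℤ → E2) (hX : ∀ n : ℤ, 0 ≤ n → W.edge n = segment ℝ (X n) (X n + d))
    (k : ℤ) (hk : 1 ≤ k) :
    ∀ z ∈ (W.seq k).carrier,
      sin α * (-⟪z - X 0, d⟫) ≤ cos α * |⟪z - X 0, perp d⟫| ∧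
      sin α * (⟪z - X 0, d⟫ - ⟪d, d⟫) ≤ cos α * |⟪z - X 0, perp d⟫| := by
  intro z hz
  have hsin : 0 < sin α := Real.sin_pos_of_pos_of_lt_pi hα (by linarith [Real.pi_pos])
  have hcos : 0 ≤ cos α := Real.cos_nonneg_of_mem_Icc ⟨by linarith, hαπ⟩
  have hD : (0:ℝ) < ⟪d, d⟫ := inner_self_pos' hd
  have tb := tile_basic W hα hαπ hang hd hdir X hX k hk
  have inv := invariant W hα hαπ hang hd hdir X hX k (by omega)
  have hbound1 : sin α * |⟪X k - X 0, d⟫| ≤ cos α * |⟪X k - X 0, perp d⟫| :=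
    (inv k (by omega) le_rfl).1
  have hbound0 : sin α * |⟪X (k-1) - X 0, d⟫| ≤ cos α * |⟪X (k-1) - X 0, perp d⟫| :=
    (inv (k-1) (by omega) (by omega)).1
  have hpair : 0 ≤ ⟪X (k-1) - X 0, perp d⟫ * ⟪X k - X 0, perp d⟫ :=
    ((inv k (by omega) le_rfl).2 hk).1
  rw [tb.1] at hz
  obtain ⟨s, t, hs, ht, rfl⟩ := hz
  have hrw : X (k-1) + s • d + t • (X k - X (k-1)) - X 0
      = (X (k-1) - X 0) + s • d + t • (X k - X (k-1)) := by abel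
  rw [hrw, inner3, inner3]
  set A0 := ⟪X (k-1) - X 0, d⟫ with hA0
  set A1 := ⟪X k - X 0, d⟫ with hA1
  set B0 := ⟪X (k-1) - X 0, perp d⟫ with hB0
  set B1 := ⟪X k - X 0, perp d⟫ with hB1
  have hdA : ⟪X k - X (k-1), d⟫ = A1 - A0 := inner_sub3 _ _ (X 0) d
  have hdB : ⟪X k - X (k-1), perp d⟫ = B1 - B0 := inner_sub3 _ _ (X 0) (perp d)
  rw [hdA, hdB, inner_perp_self, mul_zero, add_zero]
  have hsD : 0 ≤ s * ⟪d, d⟫ := mul_nonneg hs.1 hD.le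
  have hsD1 : (s - 1) * ⟪d, d⟫ ≤ 0 := mul_nonpos_of_nonpos_of_nonneg (by linarith [hs.2]) hD.le
  have ht0 : 0 ≤ t := ht.1
  have ht1 : 0 ≤ 1 - t := by linarith [ht.2]
  have hm0 : sin α * (-A0) ≤ sin α * |A0| := mul_le_mul_of_nonneg_left (neg_le_abs A0) hsin.le
  have hm1 : sin α * (-A1) ≤ sin α * |A1| := mul_le_mul_of_nonneg_left (neg_le_abs A1) hsin.le
  have hm0' : sin α * A0 ≤ sin α * |A0| := mul_le_mul_of_nonneg_left (le_abs_self A0) hsin.le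
  have hm1' : sin α * A1 ≤ sin α * |A1| := mul_le_mul_of_nonneg_left (le_abs_self A1) hsin.le
  have hsS : 0 ≤ s * (sin α * ⟪d, d⟫) := mul_nonneg hs.1 (mul_nonneg hsin.le hD.le)
  have hsS1 : (s - 1) * (sin α * ⟪d, d⟫) ≤ 0 :=
    mul_nonpos_of_nonpos_of_nonneg (by linarith [hs.2]) (mul_nonneg hsin.le hD.le)
  rcases mul_nonneg_iff.mp hpair with ⟨hB0n, hB1n⟩ | ⟨hB0n, hB1n⟩
  · -- both ≥ 0
    have hBz : 0 ≤ B0 + t * (B1 - B0) := by nlinarith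
    rw [abs_of_nonneg hBz]
    rw [abs_of_nonneg hB0n] at hbound0
    rw [abs_of_nonneg hB1n] at hbound1
    have P0 : (1 - t) * (sin α * |A0|) ≤ (1 - t) * (cos α * B0) :=
      mul_le_mul_of_nonneg_left hbound0 ht1
    have P1 : t * (sin α * |A1|) ≤ t * (cos α * B1) :=
      mul_le_mul_of_nonneg_left hbound1 ht0
    have R0 : (1 - t) * (sin α * (-A0)) ≤ (1 - t) * (cos α * B0) :=
      le_trans (mul_le_mul_of_nonneg_left hm0 ht1) P0
    have R1 : t * (sin α * (-A1)) ≤ t * (cos α * B1) :=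
      le_trans (mul_le_mul_of_nonneg_left hm1 ht0) P1
    have R0' : (1 - t) * (sin α * A0) ≤ (1 - t) * (cos α * B0) :=
      le_trans (mul_le_mul_of_nonneg_left hm0' ht1) P0
    have R1' : t * (sin α * A1) ≤ t * (cos α * B1) :=
      le_trans (mul_le_mul_of_nonneg_left hm1' ht0) P1
    constructor
    · linarith [R0, R1, hsS]
    · linarith [R0', R1', hsS1]
  · -- both ≤ 0
    have hBz : B0 + t * (B1 - B0) ≤ 0 := by nlinarith
    rw [abs_of_nonpos hBz]
    rw [abs_of_nonpos hB0n] at hbound0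
    rw [abs_of_nonpos hB1n] at hbound1
    have P0 : (1 - t) * (sin α * |A0|) ≤ (1 - t) * (cos α * (-B0)) :=
      mul_le_mul_of_nonneg_left hbound0 ht1
    have P1 : t * (sin α * |A1|) ≤ t * (cos α * (-B1)) :=
      mul_le_mul_of_nonneg_left hbound1 ht0
    have R0 : (1 - t) * (sin α * (-A0)) ≤ (1 - t) * (cos α * (-B0)) :=
      le_trans (mul_le_mul_of_nonneg_left hm0 ht1) P0
    have R1 : t * (sin α * (-A1)) ≤ t * (cos α * (-B1)) :=
      le_trans (mul_le_mul_of_nonneg_left hm1 ht0) P1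
    have R0' : (1 - t) * (sin α * A0) ≤ (1 - t) * (cos α * (-B0)) :=
      le_trans (mul_le_mul_of_nonneg_left hm0' ht1) P0
    have R1' : t * (sin α * A1) ≤ t * (cos α * (-B1)) :=
      le_trans (mul_le_mul_of_nonneg_left hm1' ht0) P1
    constructor
    · linarith [R0, R1, hsS]
    · linarith [R0', R1', hsS1]

lemma key_contra (hsin : 0 < sin α) (hcos : 0 ≤ cos α) (d w : E2) (hd : d ≠ 0)
    (h1 : cos α * (‖d‖ * ‖w‖) < ⟪d, w⟫)
    (h2 : sin α * ⟪w, d⟫ ≤ cos α * |⟪w, perp d⟫|) : False := by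
  have hcomm : ⟪d, w⟫ = ⟪w, d⟫ := real_inner_comm w d
  set a := ⟪w, d⟫ with ha
  set b := ⟪w, perp d⟫ with hb
  rw [hcomm] at h1
  have hna : 0 ≤ cos α * (‖d‖ * ‖w‖) := by positivity
  have hpos : 0 < a := lt_of_le_of_lt hna h1
  rcases eq_or_lt_of_le hcos with hc0 | hc0
  · rw [← hc0, zero_mul] at h2
    nlinarith
  · have hid : a^2 + b^2 = ‖d‖^2 * ‖w‖^2 := by
      have := inner_sq_add d w
      rw [real_inner_self_eq_norm_sq, real_inner_self_eq_norm_sq] at this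
      rw [← hb, ← ha] at this
      linarith [this]
    have hsq1 : cos α^2 * (‖d‖^2 * ‖w‖^2) < a^2 := by nlinarith [h1, hna]
    have hsq2 : sin α^2 * a^2 ≤ cos α^2 * b^2 := by
      nlinarith [h2, sq_abs b, mul_nonneg hsin.le hpos.le, mul_nonneg hcos (abs_nonneg b)]
    have hpyth : sin α^2 + cos α^2 = 1 := Real.sin_sq_add_cos_sq α
    have ha2 : sin α^2 * a^2 = a^2 - cos α^2 * a^2 := by linear_combination a^2 * hpyth
    nlinarith [hsq1, hsq2, hid, ha2]

def revWorm (W : Worm 𝒯) : Worm 𝒯 where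
  seq n := W.seq (1 - n)
  edge n := W.edge (-n)
  dir := W.dir
  dir_ne := W.dir_ne
  mem n := W.mem _
  edge_mem n := by
    refine ⟨?_, ?_⟩
    · show W.edge (-n) ∈ (W.seq (1 - n)).edgeSet
      rw [show (1:ℤ) - n = -n + 1 from by ring]
      exact (W.edge_mem (-n)).2
    · show W.edge (-n) ∈ (W.seq (1 - (n+1))).edgeSet
      rw [show (1:ℤ) - (n+1) = -n from by ring]
      exact (W.edge_mem (-n)).1
  edge_par n := W.edge_par (-n)
  edge_opp n := by
    intro h
    have h' : W.edge (-n) = W.edge (-(n-1)) := h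
    rw [show -(n-1) = -n+1 from by ring] at h'
    apply W.edge_opp (-n + 1)
    rw [show -n + 1 - 1 = -n from by ring]
    exact h'.symm

lemma worm_main (hα : 0 < α)
    (hang : ∀ θ ∈ interiorAngles 𝒯, α ≤ θ)
    (W : Worm 𝒯) (p q : EuclideanSpace ℝ (Fin 2)) (hpq : W.edge 0 = segment ℝ p q)
    (hne : p ≠ q) :
    ∀ k : ℤ, 1 ≤ k → ∀ z ∈ (W.seq k).carrier,
      z ∉ ((p + ·) '' cone (p - q) α) ∧ z ∉ ((q + ·) '' cone (q - p) α) := by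
  set d : E2 := q - p with hdqp
  have hd : d ≠ 0 := sub_ne_zero.mpr (Ne.symm hne)
  have hαπ : α ≤ π/2 := by
    have h1 : α ≤ angle (W.seq 0).u (W.seq 0).v := hang _ ⟨_, W.mem 0, Or.inl rfl⟩
    have h2 : α ≤ π - angle (W.seq 0).u (W.seq 0).v := hang _ ⟨_, W.mem 0, Or.inr rfl⟩
    linarith
  have hsin : 0 < sin α := Real.sin_pos_of_pos_of_lt_pi hα (by linarith [Real.pi_pos])
  have hcos : 0 ≤ cos α := Real.cos_nonneg_of_mem_Icc ⟨by linarith, hαπ⟩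
  have hdir : ∃ c₀ : ℝ, c₀ ≠ 0 ∧ d = c₀ • W.dir := by
    obtain ⟨p₀, q₀, he, c₀, hc⟩ := W.edge_par 0
    rw [hpq] at he
    have hc₀ : c₀ ≠ 0 := by
      intro h
      rw [h, zero_smul, sub_eq_zero] at hc
      rw [hc, segment_same] at he
      have hp : p ∈ ({p₀} : Set E2) := he ▸ left_mem_segment ℝ p q
      have hq : q ∈ ({p₀} : Set E2) := he ▸ right_mem_segment ℝ p q
      exact hne (hp.trans hq.symm)
    rcases seg_eq hne he with ⟨h1, h2⟩ | ⟨h1, h2⟩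
    · exact ⟨c₀, hc₀, by rw [hdqp, ← h1, ← h2]; exact hc⟩
    · refine ⟨-c₀, neg_ne_zero.mpr hc₀, ?_⟩
      rw [neg_smul, ← hc, hdqp, ← h1, ← h2]
      abel
  have h0 : W.edge 0 = segment ℝ p (p + d) := by
    have hpd : p + d = q := by rw [hdqp]; module
    rw [hpq, hpd]
  obtain ⟨X, hX0, hX⟩ := exists_X W hd hdir h0
  intro k hk z hz
  have hb := tile_point_bound W hα hαπ hang hd hdir X hX k hk z hz
  rw [hX0] at hb
  constructor
  · rintro ⟨w, ⟨hw0, hwang⟩, hwz⟩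
    have hd' : p - q ≠ 0 := fun h => hne (sub_eq_zero.mp h)
    have hcoslt : cos α < cos (angle (p - q) w) :=
      Real.cos_lt_cos_of_nonneg_of_le_pi (angle_nonneg _ _) (by linarith [Real.pi_pos]) hwang
    have hca := InnerProductGeometry.cos_angle (p - q) w
    have hnorm : (0:ℝ) < ‖p - q‖ * ‖w‖ :=
      mul_pos (norm_pos_iff.mpr hd') (norm_pos_iff.mpr hw0)
    have h1 : cos α * (‖p - q‖ * ‖w‖) < ⟪p - q, w⟫ := by
      rw [hca] at hcoslt
      calc cos α * (‖p - q‖ * ‖w‖) < (⟪p - q, w⟫ / (‖p - q‖ * ‖w‖)) * (‖p - q‖ * ‖w‖) := by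
            exact mul_lt_mul_of_pos_right hcoslt hnorm
        _ = ⟪p - q, w⟫ := by field_simp
    have hwzp : w = z - p := by
      have : p + w = z := hwz
      rw [← this]; module
    have h2 : sin α * ⟪w, p - q⟫ ≤ cos α * |⟪w, perp (p - q)⟫| := by
      have hpq' : p - q = -d := by rw [hdqp]; abel
      rw [hwzp, hpq', inner_neg_right, perp_neg, inner_neg_right, abs_neg]
      exact hb.1
    exact key_contra hsin hcos (p - q) w hd' h1 h2
  · rintro ⟨w, ⟨hw0, hwang⟩, hwz⟩
    have hd'' : q - p ≠ 0 := hd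
    have hcoslt : cos α < cos (angle (q - p) w) :=
      Real.cos_lt_cos_of_nonneg_of_le_pi (angle_nonneg _ _) (by linarith [Real.pi_pos]) hwang
    have hca := InnerProductGeometry.cos_angle (q - p) w
    have hnorm : (0:ℝ) < ‖q - p‖ * ‖w‖ :=
      mul_pos (norm_pos_iff.mpr hd'') (norm_pos_iff.mpr hw0)
    have h1 : cos α * (‖q - p‖ * ‖w‖) < ⟪q - p, w⟫ := by
      rw [hca] at hcoslt
      calc cos α * (‖q - p‖ * ‖w‖) < (⟪q - p, w⟫ / (‖q - p‖ * ‖w‖)) * (‖q - p‖ * ‖w‖) := by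
            exact mul_lt_mul_of_pos_right hcoslt hnorm
        _ = ⟪q - p, w⟫ := by field_simp
    have hwzq : w = z - q := by
      have : q + w = z := hwz
      rw [← this]; module
    have h2 : sin α * ⟪w, q - p⟫ ≤ cos α * |⟪w, perp (q - p)⟫| := by
      have hsub : z - q = (z - p) - d := by rw [hdqp]; abel
      have hi1 : ⟪z - q, d⟫ = ⟪z - p, d⟫ - ⟪d, d⟫ := by
        rw [hsub, inner_sub_left]
      have hi2 : ⟪z - q, perp d⟫ = ⟪z - p, perp d⟫ := by
        rw [hsub, inner_sub_left, inner_perp_self, sub_zero]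
      rw [hwzq]
      rw [show q - p = d from rfl] at *
      rw [hi1, hi2]
      exact hb.2
    exact key_contra hsin hcos (q - p) w hd'' h1 h2

end Final

/-- Cone Lemma: no tile of the worm defined by an edge with endpoints p, q
meets the open cones p + C(p - q, α), q + C(q - p, α), where α > 0 is a lower bound
on all interior angles. -/
theorem stmt3 (𝒯 : PgramTiling) (α : ℝ) (hα : 0 < α)
    (hang : ∀ θ ∈ interiorAngles 𝒯, α ≤ θ)
    (W : Worm 𝒯) (p q : EuclideanSpace ℝ (Fin 2)) (hpq : W.edge 0 = segment ℝ p q) (hne : p ≠ q) :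
    W.carrier ∩ (((p + ·) '' cone (p - q) α) ∪ ((q + ·) '' cone (q - p) α)) = ∅ := by
  rw [Set.eq_empty_iff_forall_notMem]
  rintro z ⟨hzW, hzC⟩
  obtain ⟨n, hn⟩ := Set.mem_iUnion.mp hzW
  have hcases : (z ∉ ((p + ·) '' cone (p - q) α)) ∧ (z ∉ ((q + ·) '' cone (q - p) α)) := by
    rcases le_or_gt 1 n with h1 | h1
    · exact worm_main hα hang W p q hpq hne n h1 z hn
    · have hpq' : (revWorm W).edge 0 = segment ℝ p q := by
        show W.edge (-0) = _
        rw [show -(0:ℤ) = 0 from by ring]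
        exact hpq
      have hk : 1 ≤ 1 - n := by omega
      have hseq : (revWorm W).seq (1 - n) = W.seq n := by
        show W.seq (1 - (1 - n)) = W.seq n
        rw [show 1 - (1 - n) = n from by ring]
      have hn' : z ∈ ((revWorm W).seq (1 - n)).carrier := by rw [hseq]; exact hn
      exact worm_main hα hang (revWorm W) p q hpq' hne (1 - n) hk z hn'
  rcases hzC with h | h
  · exact hcases.1 h
  · exact hcases.2 h
end
end

section
/- In a parallelogram tiling whose interior angles have infimum α = 0, the worm W determined by a tile T and an edge e is contained in e ∪ (ℝ² \ aff(e)), where aff(e) is the affine line spanned by e; that is, W meets the line through e only in the edge e itself. -/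
open InnerProductGeometry Real RealInnerProductSpace

noncomputable section

namespace S4
open Set FiniteDimensional

abbrev E2 := EuclideanSpace ℝ (Fin 2)

def ff (dir : E2) : E2 →ₗ[ℝ] ℝ where
  toFun x := dir 1 * x 0 - dir 0 * x 1
  map_add' x y := by simp [PiLp.add_apply]; ring
  map_smul' c x := by simp [PiLp.smul_apply, smul_eq_mul]; ring

lemma ff_dir (dir : E2) : ff dir dir = 0 := by simp [ff]; ring

lemma e2_ext {x y : E2} (h0 : x 0 = y 0) (h1 : x 1 = y 1) : x = y := by
  apply PiLp.ext; intro i; fin_cases i <;> assumption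

lemma ff_vanish {dir u v : E2} (hdir : dir ≠ 0) (hu : ff dir u = 0) (hv : ff dir v = 0) :
    ¬ LinearIndependent ℝ ![u, v] := by
  intro hind
  rw [linearIndependent_fin2] at hind
  obtain ⟨hv0, hns⟩ := hind
  simp only [Matrix.cons_val_one, Matrix.head_cons, Matrix.cons_val_zero] at hv0 hns
  have hd : dir 0 ≠ 0 ∨ dir 1 ≠ 0 := by
    by_contra h
    push_neg at h
    exact hdir (e2_ext (by simpa using h.1) (by simpa using h.2))
  have hu' : dir 1 * u 0 - dir 0 * u 1 = 0 := hu
  have hv' : dir 1 * v 0 - dir 0 * v 1 = 0 := hv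
  have det : u 0 * v 1 - u 1 * v 0 = 0 := by
    rcases hd with h | h
    · have h2 : dir 0 * (u 0 * v 1 - u 1 * v 0) = 0 := by linear_combination v 0 * hu' - u 0 * hv'
      rcases mul_eq_zero.mp h2 with h3 | h3
      · exact absurd h3 h
      · exact h3
    · have h2 : dir 1 * (u 0 * v 1 - u 1 * v 0) = 0 := by linear_combination v 1 * hu' - u 1 * hv'
      rcases mul_eq_zero.mp h2 with h3 | h3
      · exact absurd h3 h
      · exact h3
  have hv01 : v 0 ≠ 0 ∨ v 1 ≠ 0 := by
    by_contra h
    push_neg at h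
    exact hv0 (e2_ext (by simpa using h.1) (by simpa using h.2))
  rcases hv01 with h | h
  · refine hns (u 0 / v 0) (e2_ext ?_ ?_) <;>
      simp only [PiLp.smul_apply, smul_eq_mul] <;> field_simp <;> nlinarith [det]
  · refine hns (u 1 / v 1) (e2_ext ?_ ?_) <;>
      simp only [PiLp.smul_apply, smul_eq_mul] <;> field_simp <;> nlinarith [det]

end S4
namespace S4
open Set

def fc (f : E2 →ₗ[ℝ] ℝ) (e : Set E2) : Prop := ∀ x ∈ e, ∀ y ∈ e, f x = f y

lemma fc_segment {f : E2 →ₗ[ℝ] ℝ} {c c' : E2} (h : f c = f c') : fc f (segment ℝ c c') := by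
  intro x hx y hy
  rw [segment_eq_image'] at hx hy
  obtain ⟨s, hs, rfl⟩ := hx
  obtain ⟨t, ht, rfl⟩ := hy
  simp [map_add, map_smul, map_sub, h]

lemma fc_edge_vec {f : E2 →ₗ[ℝ] ℝ} {c z : E2} (h : fc f (segment ℝ c (c + z))) : f z = 0 := by
  have h1 := h c (left_mem_segment ℝ c (c + z)) (c + z) (right_mem_segment ℝ c (c + z))
  simp [map_add] at h1
  linarith [h1]

def pgC (a d w : E2) : Set E2 :=
  {x | ∃ s t : ℝ, s ∈ Icc (0:ℝ) 1 ∧ t ∈ Icc (0:ℝ) 1 ∧ x = a + s • d + t • w}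

def pgO (a d w : E2) : Set E2 :=
  {x | ∃ s t : ℝ, s ∈ Ioo (0:ℝ) 1 ∧ t ∈ Ioo (0:ℝ) 1 ∧ x = a + s • d + t • w}

lemma pgC_carrier (P : Pgram) : P.carrier = pgC P.a P.u P.v := rfl

lemma pgC_swap (a d w : E2) : pgC a d w = pgC a w d := by
  ext x
  constructor <;> rintro ⟨s, t, hs, ht, rfl⟩ <;> exact ⟨t, s, ht, hs, by module⟩

lemma pgC_flip (a d w : E2) : pgC a d w = pgC (a + w) d (-w) := by
  ext x
  constructor <;> rintro ⟨s, t, hs, ht, rfl⟩ <;>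
    exact ⟨s, 1 - t, hs, ⟨by linarith [ht.2], by linarith [ht.1]⟩, by module⟩

lemma mem_seg {a d : E2} {s : ℝ} (hs : s ∈ Icc (0:ℝ) 1) : a + s • d ∈ segment ℝ a (a + d) := by
  rw [segment_eq_image']
  exact ⟨s, hs, by rw [add_sub_cancel_left]⟩

lemma seg_mem {a d x : E2} (hx : x ∈ segment ℝ a (a + d)) : ∃ s ∈ Icc (0:ℝ) 1, x = a + s • d := by
  rw [segment_eq_image'] at hx
  obtain ⟨s, hs, hx⟩ := hx
  rw [add_sub_cancel_left] at hx
  exact ⟨s, hs, hx.symm⟩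

set_option maxHeartbeats 1000000 in
lemma seg_endpoints {a b c d : E2} (hab : a ≠ b) (h : segment ℝ a b = segment ℝ c d) :
    (c = a ∧ d = b) ∨ (c = b ∧ d = a) := by
  have hba : b - a ≠ 0 := sub_ne_zero.mpr (Ne.symm hab)
  have hc : c ∈ segment ℝ a b := h ▸ left_mem_segment ℝ c d
  have hd : d ∈ segment ℝ a b := h ▸ right_mem_segment ℝ c d
  have ha : a ∈ segment ℝ c d := h ▸ left_mem_segment ℝ a b
  have hb : b ∈ segment ℝ c d := h ▸ right_mem_segment ℝ a b
  rw [segment_eq_image'] at hc hd ha hb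
  obtain ⟨s, hs, hcs⟩ := hc
  obtain ⟨s', hs', hds⟩ := hd
  obtain ⟨t, ht, hat⟩ := ha
  obtain ⟨t', ht', hbt⟩ := hb
  simp only at hcs hds hat hbt
  have key : ∀ u : ℝ, c + u • (d - c) = a + (s + u * (s' - s)) • (b - a) := by
    intro u
    rw [← hcs, ← hds]
    module
  have c1 : s + t * (s' - s) = 0 := by
    have h2 : a + (s + t * (s' - s)) • (b - a) = a := by rw [← key t, hat]
    have h3 : (s + t * (s' - s)) • (b - a) = 0 := by
      have := congrArg (fun z => z - a) h2
      simpa using this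
    rcases smul_eq_zero.mp h3 with h4 | h4
    · exact h4
    · exact absurd h4 hba
  have c2 : s + t' * (s' - s) = 1 := by
    have h4 : a + (s + t' * (s' - s)) • (b - a) = b := by rw [← key t', hbt]
    have h3 : (s + t' * (s' - s) - 1) • (b - a) = 0 := by
      have h5 : (s + t' * (s' - s) - 1) • (b - a) = (a + (s + t' * (s' - s)) • (b - a)) - b := by
        module
      rw [h5, h4, sub_self]
    rcases smul_eq_zero.mp h3 with h4 | h4
    · linarith [h4]
    · exact absurd h4 hba
  obtain ⟨hs0, hs1⟩ := hs
  obtain ⟨hs'0, hs'1⟩ := hs'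
  obtain ⟨ht0, ht1⟩ := ht
  obtain ⟨ht'0, ht'1⟩ := ht'
  have hval : (s = 0 ∧ s' = 1) ∨ (s = 1 ∧ s' = 0) := by
    rcases lt_trichotomy s' s with hlt | heq | hgt
    · right
      have hs1' : s = 1 := by nlinarith [c2, mul_nonneg ht'0 (sub_nonneg.mpr (le_of_lt hlt))]
      constructor
      · exact hs1'
      · nlinarith [c1, hs1']
    · exfalso
      rw [heq] at c1 c2
      simp at c1 c2
      linarith [c1, c2]
    · left
      have hs0' : s = 0 := by nlinarith [c1, mul_nonneg ht0 (sub_nonneg.mpr (le_of_lt hgt))]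
      constructor
      · exact hs0'
      · nlinarith [c2, hs0']
  rcases hval with ⟨h1, h2⟩ | ⟨h1, h2⟩
  · left
    constructor
    · rw [← hcs, h1]; module
    · rw [← hds, h2]; module
  · right
    constructor
    · rw [← hcs, h1]; module
    · rw [← hds, h2]; module

end S4
namespace S4
open Set Module

lemma indep_ne_zero {d w : E2} (h : LinearIndependent ℝ ![d, w]) : d ≠ 0 := by
  have := h.ne_zero 0
  simpa using this

lemma pgO_subset_interior {a d w : E2} (hind : LinearIndependent ℝ ![d, w]) :
    pgO a d w ⊆ interior (pgC a d w) := by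
  have hcard : Fintype.card (Fin 2) = Module.finrank ℝ E2 := by
    simp [finrank_euclideanSpace_fin]
  let B : Basis (Fin 2) ℝ E2 := basisOfLinearIndependentOfCardEqFinrank hind hcard
  have hB0 : B 0 = d := by
    simp [B, coe_basisOfLinearIndependentOfCardEqFinrank]
  have hB1 : B 1 = w := by
    simp [B, coe_basisOfLinearIndependentOfCardEqFinrank]
  have hO : IsOpen (pgO a d w) := by
    have hcont : Continuous fun x : E2 => B.equivFun (x - a) :=
      B.equivFun.toLinearMap.continuous_of_finiteDimensional.comp
        (continuous_id.sub continuous_const)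
    have heq : pgO a d w =
        (fun x : E2 => B.equivFun (x - a)) ⁻¹'
          {v : Fin 2 → ℝ | v 0 ∈ Ioo (0:ℝ) 1 ∧ v 1 ∈ Ioo (0:ℝ) 1} := by
      ext x
      simp only [pgO, mem_preimage, mem_setOf_eq]
      constructor
      · rintro ⟨s, t, hs, ht, rfl⟩
        have hx : a + s • d + t • w - a = s • B 0 + t • B 1 := by
          rw [hB0, hB1]; module
        rw [hx]
        simp only [map_add, map_smul, Basis.equivFun_self, Pi.add_apply, Pi.smul_apply,
          smul_eq_mul]
        constructor <;> simp [hs, ht]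
      · rintro ⟨h0, h1⟩
        refine ⟨B.equivFun (x - a) 0, B.equivFun (x - a) 1, h0, h1, ?_⟩
        have hsym : x - a = B.equivFun.symm (B.equivFun (x - a)) :=
          (B.equivFun.symm_apply_apply _).symm
        rw [Basis.equivFun_symm_apply, Fin.sum_univ_two, hB0, hB1] at hsym
        have hx2 : x = a + (B.equivFun (x - a) 0 • d + B.equivFun (x - a) 1 • w) := by
          rw [← hsym]; abel
        rw [add_assoc]
        exact hx2
    rw [heq]
    refine hcont.isOpen_preimage _ ?_
    exact ((isOpen_Ioo.preimage (continuous_apply 0)).inter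
      (isOpen_Ioo.preimage (continuous_apply 1)))
  refine interior_maximal ?_ hO
  rintro x ⟨s, t, hs, ht, rfl⟩
  exact ⟨s, t, ⟨le_of_lt hs.1, le_of_lt hs.2⟩, ⟨le_of_lt ht.1, le_of_lt ht.2⟩, rfl⟩

set_option maxHeartbeats 1000000 in
/-- Distinct tiles whose carriers are slabs over the same edge lie on opposite sides. -/
lemma opp_core (𝒯 : PgramTiling) {P Q : Pgram} (hP : P ∈ 𝒯.tiles) (hQ : Q ∈ 𝒯.tiles)
    (hPQ : P ≠ Q) {a d w a' d' w' : E2}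
    (hind : LinearIndependent ℝ ![d, w]) (hind' : LinearIndependent ℝ ![d', w'])
    (hPc : P.carrier = pgC a d w) (hQc : Q.carrier = pgC a' d' w')
    (hee : segment ℝ a (a + d) = segment ℝ a' (a' + d'))
    {f : E2 →ₗ[ℝ] ℝ} (hfd : f d = 0) (hfw : f w ≠ 0) (hfw' : f w' ≠ 0) :
    f w * f w' < 0 := by
  by_contra hcon
  push_neg at hcon
  have hprod : 0 < f w * f w' :=
    lt_of_le_of_ne hcon (Ne.symm (mul_ne_zero hfw hfw'))
  have hcard : Fintype.card (Fin 2) = Module.finrank ℝ E2 := by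
    simp [finrank_euclideanSpace_fin]
  let B : Basis (Fin 2) ℝ E2 := basisOfLinearIndependentOfCardEqFinrank hind hcard
  have hB0 : B 0 = d := by simp [B, coe_basisOfLinearIndependentOfCardEqFinrank]
  have hB1 : B 1 = w := by simp [B, coe_basisOfLinearIndependentOfCardEqFinrank]
  set α := B.equivFun w' 0 with hα
  set β := B.equivFun w' 1 with hβ
  have hw' : w' = α • d + β • w := by
    have hsym : w' = B.equivFun.symm (B.equivFun w') := (B.equivFun.symm_apply_apply _).symm
    rw [Basis.equivFun_symm_apply, Fin.sum_univ_two, hB0, hB1] at hsym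
    exact hsym
  have hfwβ : f w' = β * f w := by
    rw [hw']
    simp [map_add, map_smul, hfd, smul_eq_mul]
  have hprod2 : 0 < β * (f w * f w) := by
    rw [hfwβ] at hprod
    nlinarith [hprod]
  have hβpos : 0 < β := by
    by_contra hb
    push_neg at hb
    nlinarith [hprod2, mul_self_pos.mpr hfw]
  set A := |α| with hA
  have hA0 : 0 ≤ A := abs_nonneg α
  have hA1 : (0:ℝ) < A + 1 := by linarith
  set t1 := 1 / (2*(A+1)) with ht1def
  set t2 := 1 / (2*β) with ht2def
  have ht1pos : 0 < t1 := by positivity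
  have ht2pos : 0 < t2 := by positivity
  have ht1eq : t1 * (2*(A+1)) = 1 := by
    rw [ht1def]; field_simp
  have ht2eq : t2 * (2*β) = 1 := by
    rw [ht2def]; field_simp
  set t' := min t1 t2 with ht'
  have ht'pos : 0 < t' := lt_min ht1pos ht2pos
  have ht'le1 : t' ≤ t1 := min_le_left _ _
  have ht'le2 : t' ≤ t2 := min_le_right _ _
  have htβpos : 0 < t' * β := mul_pos ht'pos hβpos
  have htβ : t' * β ≤ 1/2 := by nlinarith [mul_le_mul_of_nonneg_right ht'le2 hβpos.le]
  have ht'lt1 : t' < 1 := by nlinarith [ht1eq, ht1pos, hA0]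
  have habs1 : t' * α < 1/2 := by
    nlinarith [mul_nonneg ht'pos.le (sub_nonneg.mpr (le_abs_self α)),
      mul_nonneg (sub_nonneg.mpr ht'le1) hA0, ht1eq, ht1pos]
  have habs2 : -(1/2) < t' * α := by
    have hna : -A ≤ α := neg_abs_le α
    nlinarith [mul_nonneg ht'pos.le (by linarith : (0:ℝ) ≤ α + A),
      mul_nonneg (sub_nonneg.mpr ht'le1) hA0, ht1eq, ht1pos]
  set x₀ := a + (1/2 : ℝ) • d + (t' * β) • w with hx₀
  have hx1 : x₀ ∈ pgO a d w :=
    ⟨1/2, t' * β, ⟨by norm_num, by norm_num⟩, ⟨htβpos, by linarith⟩, rfl⟩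
  have hd0 : d ≠ 0 := indep_ne_zero hind
  have hne_pts : a ≠ a + d := by
    intro h
    apply hd0
    have := congrArg (fun z => z - a) h
    simpa using this.symm
  have hx2 : x₀ ∈ pgO a' d' w' := by
    rcases seg_endpoints hne_pts hee with ⟨h1, h2⟩ | ⟨h1, h2⟩
    · subst h1
      have hdd : d' = d := by
        have h3 := h2
        rwa [add_right_inj] at h3
      subst hdd
      refine ⟨1/2 - t' * α, t', ⟨by linarith, by linarith⟩, ⟨ht'pos, ht'lt1⟩, ?_⟩
      rw [hw']
      module
    · subst h1
      have hdd : d' = -d := by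
        rw [add_assoc] at h2
        have h4 : d' + d = 0 := by
          rw [add_comm]
          exact add_eq_left.mp h2
        exact eq_neg_of_add_eq_zero_left h4
      subst hdd
      refine ⟨1/2 + t' * α, t', ⟨by linarith, by linarith⟩, ⟨ht'pos, ht'lt1⟩, ?_⟩
      rw [hw']
      module
  have hdisj : interior P.carrier ∩ interior Q.carrier = ∅ := 𝒯.disjointInt P hP Q hQ hPQ
  have hm1 : x₀ ∈ interior P.carrier := by
    rw [hPc]; exact pgO_subset_interior hind hx1
  have hm2 : x₀ ∈ interior Q.carrier := by
    rw [hQc]; exact pgO_subset_interior hind' hx2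
  exact (Set.eq_empty_iff_forall_notMem.mp hdisj x₀) ⟨hm1, hm2⟩

end S4
namespace S4
open Set

lemma indep_swap {u v : E2} (h : LinearIndependent ℝ ![u, v]) : LinearIndependent ℝ ![v, u] := by
  rw [linearIndependent_fin2] at h ⊢
  simp only [Matrix.cons_val_one, Matrix.head_cons, Matrix.cons_val_zero] at h ⊢
  obtain ⟨hv, hns⟩ := h
  constructor
  · intro h0
    apply hns 0
    rw [h0]
    simp
  · intro a hav
    have ha : a ≠ 0 := by
      intro h0
      rw [h0] at hav
      simp at hav
      exact hv hav.symm
    apply hns a⁻¹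
    rw [← hav, smul_smul, inv_mul_cancel₀ ha, one_smul]

lemma indep_negR {u v : E2} (h : LinearIndependent ℝ ![u, v]) : LinearIndependent ℝ ![u, -v] := by
  rw [linearIndependent_fin2] at h ⊢
  simp only [Matrix.cons_val_one, Matrix.head_cons, Matrix.cons_val_zero] at h ⊢
  obtain ⟨hv, hns⟩ := h
  refine ⟨neg_ne_zero.mpr hv, fun a ha => hns (-a) ?_⟩
  rw [← ha]
  simp

lemma slab_exists {dir : E2} (hdir : dir ≠ 0) (P : Pgram) (e : Set E2)
    (he : e ∈ P.edgeSet) (hfc : fc (ff dir) e) :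
    ∃ a d w : E2, ff dir d = 0 ∧ ff dir w ≠ 0 ∧ LinearIndependent ℝ ![d, w] ∧
      e = segment ℝ a (a + d) ∧ P.carrier = pgC a d w ∧
      ∀ e' ∈ P.edgeSet, fc (ff dir) e' →
        e' = segment ℝ a (a + d) ∨ e' = segment ℝ (a + w) (a + w + d) := by
  simp only [Pgram.edgeSet, mem_insert_iff, mem_singleton_iff] at he
  rcases he with hcase | hcase | hcase | hcase
  · -- bottom u-edge
    have hu : ff dir P.u = 0 := fc_edge_vec (by rwa [hcase] at hfc)
    have hv : ff dir P.v ≠ 0 := fun h => ff_vanish hdir hu h P.indep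
    refine ⟨P.a, P.u, P.v, hu, hv, P.indep, hcase, pgC_carrier P, ?_⟩
    intro e' he' hfc'
    simp only [Pgram.edgeSet, mem_insert_iff, mem_singleton_iff] at he'
    rcases he' with h | h | h | h
    · exact Or.inl h
    · exact Or.inr h
    · exact absurd (fc_edge_vec (by rwa [h] at hfc')) hv
    · exact absurd (fc_edge_vec (c := P.a + P.u) (by rwa [h] at hfc')) hv
  · -- top u-edge
    have hu : ff dir P.u = 0 := fc_edge_vec (c := P.a + P.v) (by rwa [hcase] at hfc)
    have hv : ff dir P.v ≠ 0 := fun h => ff_vanish hdir hu h P.indep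
    have hvneg : ff dir (-P.v) ≠ 0 := by
      simp only [map_neg, ne_eq, neg_eq_zero]
      exact hv
    refine ⟨P.a + P.v, P.u, -P.v, hu, hvneg, indep_negR P.indep, hcase, ?_, ?_⟩
    · rw [pgC_carrier, pgC_flip]
    · intro e' he' hfc'
      simp only [Pgram.edgeSet, mem_insert_iff, mem_singleton_iff] at he'
      have hback : P.a + P.v + -P.v = P.a := by module
      rcases he' with h | h | h | h
      · right
        rw [hback]
        exact h
      · exact Or.inl h
      · exact absurd (fc_edge_vec (by rwa [h] at hfc')) hv
      · exact absurd (fc_edge_vec (c := P.a + P.u) (by rwa [h] at hfc')) hv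
  · -- left v-edge
    have hv : ff dir P.v = 0 := fc_edge_vec (by rwa [hcase] at hfc)
    have hu : ff dir P.u ≠ 0 := fun h => ff_vanish hdir h hv P.indep
    refine ⟨P.a, P.v, P.u, hv, hu, indep_swap P.indep, hcase, ?_, ?_⟩
    · rw [pgC_carrier, pgC_swap]
    · intro e' he' hfc'
      simp only [Pgram.edgeSet, mem_insert_iff, mem_singleton_iff] at he'
      rcases he' with h | h | h | h
      · exact absurd (fc_edge_vec (by rwa [h] at hfc')) hu
      · exact absurd (fc_edge_vec (c := P.a + P.v) (by rwa [h] at hfc')) hu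
      · exact Or.inl h
      · exact Or.inr h
  · -- right v-edge
    have hv : ff dir P.v = 0 := fc_edge_vec (c := P.a + P.u) (by rwa [hcase] at hfc)
    have hu : ff dir P.u ≠ 0 := fun h => ff_vanish hdir h hv P.indep
    have huneg : ff dir (-P.u) ≠ 0 := by
      simp only [map_neg, ne_eq, neg_eq_zero]
      exact hu
    refine ⟨P.a + P.u, P.v, -P.u, hv, huneg, indep_negR (indep_swap P.indep), hcase, ?_, ?_⟩
    · rw [pgC_carrier, pgC_swap, pgC_flip]
    · intro e' he' hfc'
      simp only [Pgram.edgeSet, mem_insert_iff, mem_singleton_iff] at he'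
      have hback : P.a + P.u + -P.u = P.a := by module
      rcases he' with h | h | h | h
      · exact absurd (fc_edge_vec (by rwa [h] at hfc')) hu
      · exact absurd (fc_edge_vec (c := P.a + P.v) (by rwa [h] at hfc')) hu
      · right
        rw [hback]
        exact h
      · exact Or.inl h

end S4
namespace S4
open Set

variable {𝒯 : PgramTiling}

/-- level of edge n: the common value of ff W.dir on it -/
noncomputable def mlev (W : Worm 𝒯) (n : ℤ) : ℝ := ff W.dir (W.edge_par n).choose

lemma edge_fc (W : Worm 𝒯) (n : ℤ) : fc (ff W.dir) (W.edge n) := by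
  obtain ⟨p, q, hseg, c, hc⟩ := W.edge_par n
  rw [hseg]
  apply fc_segment
  have : ff W.dir q - ff W.dir p = 0 := by
    rw [← map_sub, hc, map_smul, ff_dir]
    simp
  linarith

lemma mlev_spec (W : Worm 𝒯) (n : ℤ) : ∀ x ∈ W.edge n, ff W.dir x = mlev W n := by
  intro x hx
  obtain ⟨q, hseg, c, hc⟩ := (W.edge_par n).choose_spec
  have hp : (W.edge_par n).choose ∈ W.edge n := by
    have h2 := left_mem_segment ℝ ((W.edge_par n).choose) q
    rwa [← hseg] at h2
  exact edge_fc W n x hx _ hp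

lemma edge_nonempty (W : Worm 𝒯) (n : ℤ) : (W.edge n).Nonempty := by
  obtain ⟨p, q, hseg, _⟩ := W.edge_par n
  exact ⟨p, by rw [hseg]; exact left_mem_segment ℝ p q⟩

lemma mlev_congr (W : Worm 𝒯) {i k : ℤ} (h : W.edge i = W.edge k) : mlev W i = mlev W k := by
  obtain ⟨x, hx⟩ := edge_nonempty W i
  rw [← mlev_spec W i x hx, mlev_spec W k x (h ▸ hx)]

def inIx (n : ℤ) : ℤ := if 1 ≤ n then n - 1 else n
def outIx (n : ℤ) : ℤ := if 1 ≤ n then n else n - 1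
def prevIx (n : ℤ) : ℤ := if 1 ≤ n then n - 1 else n + 1
def lvl (n : ℤ) : ℤ := if 1 ≤ n then n else 1 - n

lemma lvl_pos (n : ℤ) : 1 ≤ lvl n := by unfold lvl; split <;> omega

def inE (W : Worm 𝒯) (n : ℤ) : Set E2 := W.edge (inIx n)
def outE (W : Worm 𝒯) (n : ℤ) : Set E2 := W.edge (outIx n)
noncomputable def mIn (W : Worm 𝒯) (n : ℤ) : ℝ := mlev W (inIx n)
noncomputable def mOut (W : Worm 𝒯) (n : ℤ) : ℝ := mlev W (outIx n)

lemma edge_congr (W : Worm 𝒯) {i k : ℤ} (h : i = k) : W.edge i = W.edge k := by rw [h]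

lemma inE_mem (W : Worm 𝒯) (n : ℤ) : inE W n ∈ (W.seq n).edgeSet := by
  unfold inE inIx
  split
  · have h := (W.edge_mem (n - 1)).2
    rwa [show n - 1 + 1 = n by ring] at h
  · exact (W.edge_mem n).1

lemma outE_mem (W : Worm 𝒯) (n : ℤ) : outE W n ∈ (W.seq n).edgeSet := by
  unfold outE outIx
  split
  · exact (W.edge_mem n).1
  · have h := (W.edge_mem (n - 1)).2
    rwa [show n - 1 + 1 = n by ring] at h

lemma inE_mem_prev (W : Worm 𝒯) (n : ℤ) : inE W n ∈ (W.seq (prevIx n)).edgeSet := by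
  unfold inE inIx prevIx
  split
  · exact (W.edge_mem (n - 1)).1
  · exact (W.edge_mem n).2

lemma inE_ne_outE (W : Worm 𝒯) (n : ℤ) : inE W n ≠ outE W n := by
  unfold inE outE inIx outIx
  split
  · exact (W.edge_opp n).symm
  · exact W.edge_opp n

/-- slab data for tile n relative to its in-edge -/
lemma tile (W : Worm 𝒯) (n : ℤ) :
    ∃ a d w : E2, ff W.dir d = 0 ∧ ff W.dir w ≠ 0 ∧ LinearIndependent ℝ ![d, w] ∧
      inE W n = segment ℝ a (a + d) ∧ outE W n = segment ℝ (a + w) (a + w + d) ∧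
      (W.seq n).carrier = pgC a d w ∧ ff W.dir a = mIn W n ∧
      mOut W n = mIn W n + ff W.dir w := by
  obtain ⟨a, d, w, hfd, hfw, hind, he, hcar, huniq⟩ :=
    slab_exists W.dir_ne (W.seq n) (inE W n) (inE_mem W n) (edge_fc W (inIx n))
  have hout : outE W n = segment ℝ (a + w) (a + w + d) := by
    rcases huniq (outE W n) (outE_mem W n) (edge_fc W (outIx n)) with h | h
    · exact absurd (h ▸ he.symm ▸ rfl : outE W n = inE W n) (inE_ne_outE W n).symm
    · exact h
  have hfa : ff W.dir a = mIn W n := by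
    have ha : a ∈ inE W n := by
      rw [he]
      exact left_mem_segment ℝ a (a + d)
    exact mlev_spec W (inIx n) a ha
  have hmout : mOut W n = mIn W n + ff W.dir w := by
    have h1 : ff W.dir (a + w) = mOut W n := by
      apply mlev_spec W (outIx n)
      show a + w ∈ outE W n
      rw [hout]
      exact left_mem_segment ℝ (a + w) (a + w + d)
    rw [← h1, map_add, hfa]
  exact ⟨a, d, w, hfd, hfw, hind, he, hout, hcar, hfa, hmout⟩

lemma mIn_ne_mOut (W : Worm 𝒯) (n : ℤ) : mIn W n ≠ mOut W n := by
  obtain ⟨a, d, w, hfd, hfw, hind, he, hout, hcar, hfa, hmout⟩ := tile W n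
  intro h
  rw [hmout] at h
  apply hfw
  linarith

/-- Opposite-side lemma at the level of worm tiles sharing an f-constant edge. -/
lemma opp_tiles (W : Worm 𝒯) {m1 m2 : ℤ} (hne : W.seq m1 ≠ W.seq m2) {e : Set E2}
    (he1 : e ∈ (W.seq m1).edgeSet) (he2 : e ∈ (W.seq m2).edgeSet) (hfc : fc (ff W.dir) e)
    {e1' e2' : Set E2} (he1' : e1' ∈ (W.seq m1).edgeSet) (hfc1' : fc (ff W.dir) e1')
    (hne1 : e1' ≠ e) (he2' : e2' ∈ (W.seq m2).edgeSet) (hfc2' : fc (ff W.dir) e2')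
    (hne2 : e2' ≠ e) {x x1 x2 : E2} (hx : x ∈ e) (hx1 : x1 ∈ e1') (hx2 : x2 ∈ e2') :
    (ff W.dir x1 - ff W.dir x) * (ff W.dir x2 - ff W.dir x) < 0 := by
  obtain ⟨a, d, w, hfd, hfw, hind, he, hcar, huniq⟩ :=
    slab_exists W.dir_ne (W.seq m1) e he1 hfc
  obtain ⟨a', d', w', hfd', hfw', hind', he', hcar', huniq'⟩ :=
    slab_exists W.dir_ne (W.seq m2) e he2 hfc
  have h1 : e1' = segment ℝ (a + w) (a + w + d) := by
    rcases huniq e1' he1' hfc1' with h | h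
    · exact absurd (h.trans he.symm) hne1
    · exact h
  have h2 : e2' = segment ℝ (a' + w') (a' + w' + d') := by
    rcases huniq' e2' he2' hfc2' with h | h
    · exact absurd (h.trans he'.symm) hne2
    · exact h
  have hv1 : ff W.dir x1 = ff W.dir x + ff W.dir w := by
    have hx1' : x1 ∈ segment ℝ (a + w) (a + w + d) := h1 ▸ hx1
    have hc1 : ff W.dir x1 = ff W.dir (a + w) :=
      (fc_segment (by simp [map_add, hfd])) x1 hx1' (a + w)
        (left_mem_segment ℝ _ _)
    have hcx : ff W.dir x = ff W.dir a := hfc x hx a (he ▸ left_mem_segment ℝ a (a + d))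
    rw [hc1, map_add, hcx]
  have hv2 : ff W.dir x2 = ff W.dir x + ff W.dir w' := by
    have hx2' : x2 ∈ segment ℝ (a' + w') (a' + w' + d') := h2 ▸ hx2
    have hc2 : ff W.dir x2 = ff W.dir (a' + w') :=
      (fc_segment (by simp [map_add, hfd'])) x2 hx2' (a' + w')
        (left_mem_segment ℝ _ _)
    have hcx : ff W.dir x = ff W.dir a' := hfc x hx a' (he' ▸ left_mem_segment ℝ a' (a' + d'))
    rw [hc2, map_add, hcx]
  have hopp : ff W.dir w * ff W.dir w' < 0 := by
    refine opp_core 𝒯 (W.mem m1) (W.mem m2) hne hind hind' hcar hcar' ?_ hfd hfw hfw'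
    rw [← he, ← he']
  rw [hv1, hv2]
  ring_nf
  ring_nf at hopp
  nlinarith [hopp]

end S4
namespace S4
open Set

variable {𝒯 : PgramTiling}

def Fresh (W : Worm 𝒯) (n : ℤ) : Prop :=
  ((mlev W 0 ≤ mIn W n ∧ mIn W n < mOut W n) ∨
    (mOut W n < mIn W n ∧ mIn W n ≤ mlev W 0)) ∧
  (mIn W n = mlev W 0 → inE W n = W.edge 0)

def Psi (W : Worm 𝒯) (n : ℤ) : Prop :=
  ∃ j : ℤ, lvl j ≤ lvl n ∧ W.seq n = W.seq j ∧ Fresh W j ∧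
    (2 ≤ lvl j → W.seq j ≠ W.seq (prevIx j))

lemma fresh_goal (W : Worm 𝒯) (j : ℤ) (hF : Fresh W j) :
    ∀ x ∈ (W.seq j).carrier, ff W.dir x = mlev W 0 → x ∈ W.edge 0 := by
  obtain ⟨a, d, w, hfd, hfw, hind, he, hout, hcar, hfa, hmout⟩ := tile W j
  intro x hx hfx
  rw [hcar] at hx
  obtain ⟨s, t, hs, ht, rfl⟩ := hx
  have hfx' : ff W.dir a + t * ff W.dir w = mlev W 0 := by
    rw [← hfx]
    simp [map_add, map_smul, hfd, smul_eq_mul]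
  have htw : t * ff W.dir w = mlev W 0 - mIn W j := by
    rw [← hfa]
    linarith [hfx']
  have hkey : t = 0 ∧ mIn W j = mlev W 0 := by
    rcases hF.1 with ⟨h1, h2⟩ | ⟨h1, h2⟩
    · have hw : 0 < ff W.dir w := by
        rw [hmout] at h2
        linarith
      have htw0 : t * ff W.dir w = 0 := by
        nlinarith [mul_nonneg ht.1 hw.le]
      have ht0 : t = 0 := by
        rcases eq_or_lt_of_le ht.1 with h | h
        · exact h.symm
        · exfalso
          nlinarith [mul_pos h hw]
      exact ⟨ht0, by rw [ht0] at htw; simp at htw; linarith⟩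
    · have hw : ff W.dir w < 0 := by
        rw [hmout] at h1
        linarith
      have htw0 : t * ff W.dir w = 0 := by
        nlinarith [mul_nonpos_of_nonneg_of_nonpos ht.1 hw.le]
      have ht0 : t = 0 := by
        rcases eq_or_lt_of_le ht.1 with h | h
        · exact h.symm
        · exfalso
          nlinarith [mul_neg_of_pos_of_neg h hw]
      exact ⟨ht0, by rw [ht0] at htw; simp at htw; linarith⟩
  obtain ⟨ht0, hm⟩ := hkey
  have hin : inE W j = W.edge 0 := hF.2 hm
  rw [← hin, he]
  subst ht0
  have hx0 : a + s • d + (0:ℝ) • w = a + s • d := by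
    rw [zero_smul, add_zero]
  rw [hx0]
  exact mem_seg hs

lemma psi_base (W : Worm 𝒯) (n : ℤ) (hn : n = 0 ∨ n = 1) : Psi W n := by
  have hin : inIx n = 0 := by
    rcases hn with rfl | rfl <;> norm_num [inIx]
  refine ⟨n, le_refl _, rfl, ⟨?_, ?_⟩, ?_⟩
  · have hne := mIn_ne_mOut W n
    have hm : mIn W n = mlev W 0 := by rw [mIn, hin]
    rcases lt_or_gt_of_ne hne with h | h
    · exact Or.inl ⟨le_of_eq hm.symm, h⟩
    · exact Or.inr ⟨h, le_of_eq hm⟩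
  · intro _
    rw [inE, hin]
  · intro h2
    exfalso
    have hl : lvl n = 1 := by
      rcases hn with rfl | rfl <;> norm_num [lvl]
    omega

def wrev (W : Worm 𝒯) : Worm 𝒯 where
  seq n := W.seq (1 - n)
  edge n := W.edge (-n)
  dir := W.dir
  dir_ne := W.dir_ne
  mem n := W.mem (1 - n)
  edge_mem n := by
    constructor
    · show W.edge (-n) ∈ (W.seq (1 - n)).edgeSet
      rw [show (1 - n : ℤ) = -n + 1 by ring]
      exact (W.edge_mem (-n)).2
    · show W.edge (-n) ∈ (W.seq (1 - (n + 1))).edgeSet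
      rw [show (1 - (n + 1) : ℤ) = -n by ring]
      exact (W.edge_mem (-n)).1
  edge_par n := W.edge_par (-n)
  edge_opp n := by
    show W.edge (-n) ≠ W.edge (-(n - 1))
    have h := W.edge_opp (1 - n)
    rw [show (1 - n - 1 : ℤ) = -n by ring] at h
    rw [show (-(n - 1) : ℤ) = 1 - n by ring]
    exact h.symm

lemma wrev_seq (W : Worm 𝒯) (n : ℤ) : (wrev W).seq n = W.seq (1 - n) := rfl
lemma wrev_edge (W : Worm 𝒯) (n : ℤ) : (wrev W).edge n = W.edge (-n) := rfl

lemma wrev_mlev (W : Worm 𝒯) (n : ℤ) : mlev (wrev W) n = mlev W (-n) := by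
  obtain ⟨x, hx⟩ := edge_nonempty (wrev W) n
  have hx' : x ∈ W.edge (-n) := hx
  rw [← mlev_spec (wrev W) n x hx]
  exact (mlev_spec W (-n) x hx').symm ▸ rfl

lemma inIx_rev (n : ℤ) : -(inIx n) = inIx (1 - n) := by
  simp only [inIx]
  split_ifs <;> omega

lemma outIx_rev (n : ℤ) : -(outIx n) = outIx (1 - n) := by
  simp only [outIx]
  split_ifs <;> omega

lemma prevIx_rev (n : ℤ) : 1 - prevIx n = prevIx (1 - n) := by
  simp only [prevIx]
  split_ifs <;> omega

lemma lvl_rev (n : ℤ) : lvl (1 - n) = lvl n := by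
  simp only [lvl]
  split_ifs <;> omega

lemma wrev_mIn (W : Worm 𝒯) (n : ℤ) : mIn (wrev W) n = mIn W (1 - n) := by
  rw [mIn, mIn, wrev_mlev, inIx_rev]

lemma wrev_mOut (W : Worm 𝒯) (n : ℤ) : mOut (wrev W) n = mOut W (1 - n) := by
  rw [mOut, mOut, wrev_mlev, outIx_rev]

lemma wrev_inE (W : Worm 𝒯) (n : ℤ) : inE (wrev W) n = inE W (1 - n) := by
  rw [inE, inE, wrev_edge, inIx_rev]

lemma wrev_edge0 (W : Worm 𝒯) : (wrev W).edge 0 = W.edge 0 := by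
  rw [wrev_edge, neg_zero]

lemma wrev_mlev0 (W : Worm 𝒯) : mlev (wrev W) 0 = mlev W 0 := by
  rw [wrev_mlev, neg_zero]

lemma wrev_fresh (W : Worm 𝒯) (n : ℤ) : Fresh (wrev W) n ↔ Fresh W (1 - n) := by
  unfold Fresh
  rw [wrev_mIn, wrev_mOut, wrev_inE, wrev_mlev0, wrev_edge0]

lemma wrev_psi (W : Worm 𝒯) (n : ℤ) : Psi (wrev W) n ↔ Psi W (1 - n) := by
  unfold Psi
  constructor
  · rintro ⟨j, hl, hs, hF, h2⟩
    refine ⟨1 - j, ?_, ?_, ?_, ?_⟩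
    · rw [lvl_rev, lvl_rev]
      exact hl
    · exact hs
    · exact (wrev_fresh W j).mp hF
    · intro hj
      have h2' := h2 (by rwa [lvl_rev] at hj)
      rw [← prevIx_rev]
      exact h2'
  · rintro ⟨j, hl, hs, hF, h2⟩
    refine ⟨1 - j, ?_, ?_, ?_, ?_⟩
    · rw [lvl_rev] at hl
      rw [lvl_rev]
      exact hl
    · show W.seq (1 - n) = W.seq (1 - (1 - j))
      rw [show (1 - (1 - j) : ℤ) = j by ring]
      exact hs
    · rw [wrev_fresh, show (1 - (1 - j) : ℤ) = j by ring]
      exact hF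
    · intro hj
      rw [lvl_rev] at hj
      have h2' := h2 hj
      show W.seq (1 - (1 - j)) ≠ W.seq (1 - prevIx (1 - j))
      rw [prevIx_rev, show (1 - (1 - j) : ℤ) = j by ring]
      exact h2'

end S4
namespace S4
open Set

variable {𝒯 : PgramTiling}

lemma edge_pt (W : Worm 𝒯) (n : ℤ) : ∃ x, x ∈ W.edge n ∧ ff W.dir x = mlev W n := by
  obtain ⟨x, hx⟩ := edge_nonempty W n
  exact ⟨x, hx, mlev_spec W n x hx⟩

lemma edge_cases (W : Worm 𝒯) (n : ℤ) {e : Set E2} (he : e ∈ (W.seq n).edgeSet)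
    (hfc : fc (ff W.dir) e) : e = inE W n ∨ e = outE W n := by
  obtain ⟨a, d, w, hfd, hfw, hind, hein, hcar, huniq⟩ :=
    slab_exists W.dir_ne (W.seq n) (inE W n) (inE_mem W n) (edge_fc W (inIx n))
  have hout : outE W n = segment ℝ (a + w) (a + w + d) := by
    rcases huniq (outE W n) (outE_mem W n) (edge_fc W (outIx n)) with h | h
    · exact absurd (h.trans hein.symm) (inE_ne_outE W n).symm
    · exact h
  rcases huniq e he hfc with h | h
  · left
    rw [hein]
    exact h
  · right
    rw [hout]
    exact h

lemma lvl_prevIx_le (n : ℤ) : lvl (prevIx n) ≤ lvl n := by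
  simp only [lvl, prevIx]
  split_ifs <;> omega

set_option maxHeartbeats 1600000 in
lemma step (W : Worm 𝒯) (N : ℤ) (hN : 1 ≤ N)
    (IH : ∀ k, lvl k ≤ N → Psi W k) : Psi W (N + 1) := by
  have hin1 : inIx (N + 1) = N := by
    simp only [inIx]
    split_ifs <;> omega
  have hprev1 : prevIx (N + 1) = N := by
    simp only [prevIx]
    split_ifs <;> omega
  have hlvl1 : lvl (N + 1) = N + 1 := by
    simp only [lvl]
    split_ifs <;> omega
  have hlvlN : lvl N = N := by
    simp only [lvl]
    split_ifs <;> omega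
  obtain ⟨j, hlj, hseqNj, hFj, hfr2j⟩ := IH N (le_of_eq hlvlN)
  rw [hlvlN] at hlj
  by_cases hb : W.seq (N + 1) = W.seq N
  · exact ⟨j, by rw [hlvl1]; omega, hb.trans hseqNj, hFj, hfr2j⟩
  -- crossing case
  have hE1 : W.edge N ∈ (W.seq N).edgeSet := (W.edge_mem N).1
  have hE2 : W.edge N ∈ (W.seq (N + 1)).edgeSet := (W.edge_mem N).2
  have hEfc : fc (ff W.dir) (W.edge N) := edge_fc W N
  have hEj : W.edge N ∈ (W.seq j).edgeSet := hseqNj ▸ hE1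
  have hne1 : W.seq j ≠ W.seq (N + 1) := fun h => hb (h.symm.trans hseqNj.symm)
  obtain ⟨xE, hxE, hfxE⟩ := edge_pt W N
  obtain ⟨xIj, hxIj, hfxIj⟩ := edge_pt W (inIx j)
  obtain ⟨xOj, hxOj, hfxOj⟩ := edge_pt W (outIx j)
  obtain ⟨xO1, hxO1, hfxO1⟩ := edge_pt W (outIx (N + 1))
  have hEin1 : W.edge N = inE W (N + 1) := by rw [inE, hin1]
  have hIN1 : mIn W (N + 1) = mlev W N := by rw [mIn, hin1]
  rcases edge_cases W j hEj hEfc with hEi | hEo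
  · -- the shared edge is the in-edge of tile j
    have hmN : mlev W N = mIn W j := mlev_congr W hEi
    by_cases hpq : W.seq j = W.seq (prevIx j)
    · -- tile j bounced at its in-edge previously; must be a base tile
      have hj01 : j = 0 ∨ j = 1 := by
        by_cases h2l : 2 ≤ lvl j
        · exact absurd hpq (hfr2j h2l)
        · have := lvl_pos j
          simp only [lvl] at this h2l
          split_ifs at this h2l <;> omega
      have hinj0 : inIx j = 0 := by
        rcases hj01 with rfl | rfl <;> norm_num [inIx]
      have hE0 : W.edge N = W.edge 0 := by
        rw [hEi, inE, hinj0]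
      have hm0 : mlev W N = mlev W 0 := mlev_congr W hE0
      have hmj0 : mIn W j = mlev W 0 := by rw [← hmN, hm0]
      -- opposite sides across the shared edge
      have hopp := opp_tiles W hne1 hEj hE2 hEfc
        (e1' := outE W j) (outE_mem W j) (edge_fc W (outIx j))
        (by rw [hEi]; exact (inE_ne_outE W j).symm)
        (e2' := outE W (N + 1)) (outE_mem W (N + 1)) (edge_fc W (outIx (N + 1)))
        (by rw [hEin1]; exact (inE_ne_outE W (N + 1)).symm)
        hxE hxOj hxO1
      rw [hfxE, hfxOj, hfxO1] at hopp
      have hopp' : (mOut W j - mIn W j) * (mOut W (N + 1) - mIn W j) < 0 := by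
        rw [hmN] at hopp
        exact hopp
      refine ⟨N + 1, le_refl _, rfl, ⟨?_, ?_⟩, ?_⟩
      · rcases hFj.1 with ⟨h1, h2⟩ | ⟨h1, h2⟩
        · -- tile j above; new tile below
          have hlt : mOut W (N + 1) < mIn W j := by nlinarith [hopp', h2]
          right
          constructor
          · rw [hIN1, hmN]
            exact hlt
          · rw [hIN1, hm0]
        · have hgt : mIn W j < mOut W (N + 1) := by nlinarith [hopp', h1]
          left
          constructor
          · rw [hIN1, hm0]
          · rw [hIN1, hmN]
            exact hgt
      · intro _
        rw [← hEin1]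
        exact hE0
      · intro _
        rw [hprev1]
        exact hb
    · -- the previous tile of j exists as a distinct tile: retracing
      have hEprev : W.edge N ∈ (W.seq (prevIx j)).edgeSet := by
        rw [hEi]
        exact inE_mem_prev W j
      obtain ⟨e3, x3, he3, hfc3, hne3, hx3⟩ :
          ∃ e3 x3, e3 ∈ (W.seq (prevIx j)).edgeSet ∧ fc (ff W.dir) e3 ∧
            e3 ≠ W.edge N ∧ x3 ∈ e3 := by
        rcases eq_or_ne (inE W (prevIx j)) (W.edge N) with h | h
        · obtain ⟨x, hx⟩ := edge_nonempty W (outIx (prevIx j))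
          exact ⟨outE W (prevIx j), x, outE_mem W _, edge_fc W _,
            by rw [← h]; exact (inE_ne_outE W _).symm, hx⟩
        · obtain ⟨x, hx⟩ := edge_nonempty W (inIx (prevIx j))
          exact ⟨inE W (prevIx j), x, inE_mem W _, edge_fc W _, h, hx⟩
      have hQ : W.seq (N + 1) = W.seq (prevIx j) := by
        by_contra hQ
        have hP1 := opp_tiles W hne1 hEj hE2 hEfc
          (e1' := outE W j) (outE_mem W j) (edge_fc W (outIx j))
          (by rw [hEi]; exact (inE_ne_outE W j).symm)
          (e2' := outE W (N + 1)) (outE_mem W (N + 1)) (edge_fc W (outIx (N + 1)))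
          (by rw [hEin1]; exact (inE_ne_outE W (N + 1)).symm)
          hxE hxOj hxO1
        have hP2 := opp_tiles W hpq hEj hEprev hEfc
          (e1' := outE W j) (outE_mem W j) (edge_fc W (outIx j))
          (by rw [hEi]; exact (inE_ne_outE W j).symm)
          (e2' := e3) he3 hfc3 hne3 hxE hxOj hx3
        have hP3 := opp_tiles W hQ hE2 hEprev hEfc
          (e1' := outE W (N + 1)) (outE_mem W (N + 1)) (edge_fc W (outIx (N + 1)))
          (by rw [hEin1]; exact (inE_ne_outE W (N + 1)).symm)
          (e2' := e3) he3 hfc3 hne3 hxE hxO1 hx3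
        nlinarith [mul_pos_of_neg_of_neg hP1 hP2, hP3,
          sq_nonneg (ff W.dir xOj - ff W.dir xE)]
      have hlp : lvl (prevIx j) ≤ N := le_trans (lvl_prevIx_le j) hlj
      obtain ⟨j', hlj', hseq', hF', h2'⟩ := IH (prevIx j) hlp
      refine ⟨j', ?_, hQ.trans hseq', hF', h2'⟩
      rw [hlvl1]
      omega
  · -- the shared edge is the out-edge of tile j : fresh continuation
    have hmN : mlev W N = mOut W j := mlev_congr W hEo
    have hopp := opp_tiles W hne1 hEj hE2 hEfc
      (e1' := inE W j) (inE_mem W j) (edge_fc W (inIx j))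
      (by rw [hEo]; exact inE_ne_outE W j)
      (e2' := outE W (N + 1)) (outE_mem W (N + 1)) (edge_fc W (outIx (N + 1)))
      (by rw [hEin1]; exact (inE_ne_outE W (N + 1)).symm)
      hxE hxIj hxO1
    rw [hfxE, hfxIj, hfxO1] at hopp
    have hopp' : (mIn W j - mOut W j) * (mOut W (N + 1) - mOut W j) < 0 := by
      rw [hmN] at hopp
      exact hopp
    refine ⟨N + 1, le_refl _, rfl, ⟨?_, ?_⟩, ?_⟩
    · rcases hFj.1 with ⟨h1, h2⟩ | ⟨h1, h2⟩
      · -- going further up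
        have hgt : mOut W j < mOut W (N + 1) := by nlinarith [hopp', h2]
        left
        constructor
        · rw [hIN1, hmN]
          linarith
        · rw [hIN1, hmN]
          exact hgt
      · have hlt : mOut W (N + 1) < mOut W j := by nlinarith [hopp', h1]
        right
        constructor
        · rw [hIN1, hmN]
          exact hlt
        · rw [hIN1, hmN]
          linarith
    · intro heq
      exfalso
      rw [hIN1, hmN] at heq
      rcases hFj.1 with ⟨h1, h2⟩ | ⟨h1, h2⟩ <;> linarith
    · intro _
      rw [hprev1]
      exact hb

end S4
namespace S4
open Set

variable {𝒯 : PgramTiling}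

lemma psi_all (W : Worm 𝒯) (n : ℤ) : Psi W n := by
  suffices h : ∀ N : ℤ, 1 ≤ N → ∀ W' : Worm 𝒯, ∀ k, lvl k ≤ N → Psi W' k by
    exact h (max (lvl n) 1) (le_max_right _ _) W n (le_max_left _ _)
  refine Int.le_induction ?_ ?_
  · intro W' k hk
    have hk01 : k = 0 ∨ k = 1 := by
      have h1 := lvl_pos k
      simp only [lvl] at hk h1
      split_ifs at hk h1 <;> omega
    exact psi_base W' k hk01
  · intro N hN IH W' k hk
    by_cases h : lvl k ≤ N
    · exact IH W' k h
    have hk2 : k = N + 1 ∨ k = -N := by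
      simp only [lvl] at hk h
      split_ifs at hk h <;> omega
    rcases hk2 with rfl | rfl
    · exact step W' N hN (fun m hm => IH W' m hm)
    · have h1 : Psi (wrev W') (N + 1) := by
        apply step (wrev W') N hN
        intro m hm
        rw [wrev_psi]
        exact IH W' (1 - m) (by rw [lvl_rev]; exact hm)
      rw [wrev_psi] at h1
      rwa [show (1 - (N + 1) : ℤ) = -N by ring] at h1

end S4

/-- if the infimum of the interior angles is 0, the worm determined by an
edge e with endpoints p, q meets the affine line through e only in e itself. -/
theorem stmt4 (𝒯 : PgramTiling) (hinf : IsGLB (interiorAngles 𝒯) 0)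
    (W : Worm 𝒯) (p q : EuclideanSpace ℝ (Fin 2)) (hpq : W.edge 0 = segment ℝ p q) (hne : p ≠ q) :
    W.carrier ⊆ segment ℝ p q ∪ ((affineSpan ℝ {p, q} : Set (EuclideanSpace ℝ (Fin 2)))ᶜ) := by
  intro x hx
  rcases Set.mem_iUnion.mp hx with ⟨n, hxn⟩
  by_cases haff : x ∈ (affineSpan ℝ {p, q} : Set (EuclideanSpace ℝ (Fin 2)))
  · left
    have hp0 : p ∈ W.edge 0 := by
      rw [hpq]
      exact left_mem_segment ℝ p q
    have hq0 : q ∈ W.edge 0 := by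
      rw [hpq]
      exact right_mem_segment ℝ p q
    have hfp : S4.ff W.dir p = S4.mlev W 0 := S4.mlev_spec W 0 p hp0
    have hfq : S4.ff W.dir q = S4.mlev W 0 := S4.mlev_spec W 0 q hq0
    have hfx : S4.ff W.dir x = S4.mlev W 0 := by
      have hpmem : p ∈ affineSpan ℝ ({p, q} : Set (EuclideanSpace ℝ (Fin 2))) :=
        subset_affineSpan ℝ _ (Set.mem_insert _ _)
      have hdiff : x -ᵥ p ∈ (affineSpan ℝ ({p, q} : Set (EuclideanSpace ℝ (Fin 2)))).direction :=
        AffineSubspace.vsub_mem_direction haff hpmem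
      rw [direction_affineSpan, vectorSpan_pair] at hdiff
      obtain ⟨c, hc⟩ := Submodule.mem_span_singleton.mp hdiff
      have hc' : c • (p - q) = x - p := by
        simpa [vsub_eq_sub] using hc
      have h2 := congrArg (S4.ff W.dir) hc'
      simp only [map_smul, map_sub, smul_eq_mul] at h2
      rw [hfp, hfq] at h2
      have h3 : S4.ff W.dir x - S4.mlev W 0 = 0 := by
        rw [← h2]
        ring
      linarith
    obtain ⟨j, _, hseq, hF, _⟩ := S4.psi_all W n
    have hmem : x ∈ (W.seq j).carrier := hseq ▸ hxn
    have hx0 : x ∈ W.edge 0 := S4.fresh_goal W j hF x hmem hfx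
    rwa [hpq] at hx0
  · right
    exact haff
end
end

section
/- There exists a locally finite, vertex-to-vertex parallelogram tiling of ℝ² with infinitely many prototiles, with all interior angles bounded below by a positive constant, in which some prototile (a square) occurs in infinitely many distinct orientations. -/
open InnerProductGeometry Real RealInnerProductSpace

noncomputable section

namespace Stmt15

open Filter NNReal

/-- the rotation angle for index `k`, strictly increasing, in `(0, 1/4)`. -/
def γ (k : ℤ) : ℝ := (π/2 + Real.arctan k) / (4*π)

lemma γ_pos (k : ℤ) : 0 < γ k := by
  have h := Real.neg_pi_div_two_lt_arctan (k : ℝ)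
  have hπ : (0:ℝ) < π := Real.pi_pos
  apply div_pos <;> nlinarith

lemma γ_lt (k : ℤ) : γ k < 1/4 := by
  have h := Real.arctan_lt_pi_div_two (k : ℝ)
  have hπ : (0:ℝ) < π := Real.pi_pos
  unfold γ
  rw [div_lt_iff₀ (by positivity)]
  nlinarith

lemma γ_mono : StrictMono γ := by
  intro k l hkl
  have h : Real.arctan k < Real.arctan l :=
    Real.arctan_strictMono (by exact_mod_cast hkl)
  have hπ : (0:ℝ) < π := Real.pi_pos
  unfold γ
  have h2 : π/2 + Real.arctan k < π/2 + Real.arctan l := by linarith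
  gcongr

/-- cosine of the angle -/
def ca (k : ℤ) : ℝ := Real.cos (γ k)
/-- sine of the angle -/
def sb (k : ℤ) : ℝ := Real.sin (γ k)

lemma ca_le_one (k : ℤ) : ca k ≤ 1 := Real.cos_le_one _

lemma half_le_ca (k : ℤ) : 1/2 ≤ ca k := by
  have h1 := Real.one_sub_sq_div_two_le_cos (x := γ k)
  have h2 := γ_pos k
  have h3 := γ_lt k
  unfold ca; nlinarith

lemma sb_nonneg (k : ℤ) : 0 ≤ sb k := by
  have := Real.pi_gt_three
  exact Real.sin_nonneg_of_nonneg_of_le_pi (γ_pos k).le (by linarith [γ_lt k])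

lemma sb_pos (k : ℤ) : 0 < sb k := by
  have := Real.pi_gt_three
  exact Real.sin_pos_of_pos_of_lt_pi (γ_pos k) (by linarith [γ_lt k])

lemma sb_le (k : ℤ) : sb k ≤ 1/4 :=
  le_trans (Real.sin_le (γ_pos k).le) (γ_lt k).le

lemma ca_sq_add_sb_sq (k : ℤ) : ca k ^ 2 + sb k ^ 2 = 1 := by
  rw [ca, sb]; exact Real.cos_sq_add_sin_sq _


/-- Partial sums of a ℤ-indexed sequence. -/
def ps (f : ℤ → ℝ) (k : ℤ) : ℝ :=
  (∑ i ∈ Finset.range k.toNat, f i) - ∑ i ∈ Finset.range (-k).toNat, f (-(i+1))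

lemma ps_succ (f : ℤ → ℝ) (k : ℤ) : ps f (k+1) = ps f k + f k := by
  rcases le_or_gt 0 k with hk | hk
  · have h1 : (k+1).toNat = k.toNat + 1 := by omega
    have h2 : (-(k+1)).toNat = 0 := by omega
    have h3 : (-k).toNat = 0 := by omega
    have h4 : ((k.toNat : ℤ)) = k := by omega
    rw [ps, ps, h1, h2, h3, Finset.sum_range_succ, h4]
    simp
  · have h1 : (k+1).toNat = 0 := by omega
    have h2 : k.toNat = 0 := by omega
    have h3 : (-k).toNat = (-(k+1)).toNat + 1 := by omega
    rw [ps, ps, h1, h2, h3, Finset.sum_range_succ]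
    have h4 : (-(((-(k+1)).toNat : ℤ) + 1)) = k := by omega
    rw [h4]; simp

/-- The piecewise-linear curve with increments `f`. -/
def cur (f : ℤ → ℝ) (x : ℝ) : ℝ := ps f ⌊x⌋ + (x - ⌊x⌋) * f ⌊x⌋

lemma cur_int (f : ℤ → ℝ) (m : ℤ) : cur f m = ps f m := by
  simp [cur]

lemma cur_cell (f : ℤ → ℝ) (m : ℤ) {s : ℝ} (h0 : 0 ≤ s) (h1 : s ≤ 1) :
    cur f (m + s) = ps f m + s * f m := by
  rcases lt_or_eq_of_le h1 with h | h
  · have hm : ⌊(m:ℝ) + s⌋ = m := by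
      rw [Int.floor_eq_iff] <;> constructor <;> simp <;> linarith
    rw [cur, hm]; ring_nf
  · subst h
    rw [show ((m:ℝ) + 1) = ((m+1 : ℤ) : ℝ) by push_cast; ring, cur_int, ps_succ]
    ring

/-- Bounds on increments of the curve. -/
lemma cur_mono {f : ℤ → ℝ} {lo hi : ℝ} (hb : ∀ k, lo ≤ f k ∧ f k ≤ hi) :
    ∀ {x x' : ℝ}, x ≤ x' →
      lo * (x' - x) ≤ cur f x' - cur f x ∧ cur f x' - cur f x ≤ hi * (x' - x) := by
  suffices H : ∀ n : ℕ, ∀ x x' : ℝ, x ≤ x' → (⌊x'⌋ - ⌊x⌋).toNat = n →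
      lo * (x' - x) ≤ cur f x' - cur f x ∧ cur f x' - cur f x ≤ hi * (x' - x) by
    intro x x' hxx'
    exact H _ x x' hxx' rfl
  intro n
  induction n with
  | zero =>
    intro x x' hxx' hn
    have hfl : ⌊x'⌋ = ⌊x⌋ := by
      have := Int.floor_le_floor (R := ℝ) hxx'
      omega
    have h1 : cur f x' - cur f x = (x' - x) * f ⌊x⌋ := by
      rw [cur, cur, hfl]; ring
    obtain ⟨hl, hh⟩ := hb ⌊x⌋
    rw [h1]
    constructor <;> nlinarith
  | succ n ih =>
    intro x x' hxx' hn
    set m := ⌊x⌋ with hm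
    have hflx' : ⌊x'⌋ = m + n + 1 := by omega
    have hc1 : (m:ℝ) + 1 ≤ x' := by
      have := Int.floor_le x'
      push_cast [hflx'] at this ⊢
      linarith
    have hxm1 : x ≤ (m:ℝ) + 1 := by
      have := Int.lt_floor_add_one x
      linarith
    have step1 : lo * (((m:ℝ)+1) - x) ≤ cur f ((m:ℝ)+1) - cur f x ∧
        cur f ((m:ℝ)+1) - cur f x ≤ hi * (((m:ℝ)+1) - x) := by
      have hx_eq : x = (m:ℝ) + (x - m) := by ring
      have h0 : (0:ℝ) ≤ x - m := by
        have := Int.floor_le x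
        linarith
      have h1 : x - (m:ℝ) ≤ 1 := by linarith
      have e1 : cur f x = ps f m + (x - m) * f m := by
        rw [cur, ← hm]
      have e2 : cur f ((m:ℝ)+1) = ps f m + 1 * f m := by
        rw [show ((m:ℝ)+1) = ((m+1:ℤ):ℝ) by push_cast; ring, cur_int, ps_succ]; ring
      obtain ⟨hl, hh⟩ := hb m
      rw [e1, e2]
      constructor <;> nlinarith
    have step2 := ih ((m:ℝ)+1) x' hc1 (by
      rw [show ((m:ℝ)+1) = ((m+1:ℤ):ℝ) by push_cast; ring, Int.floor_intCast]
      omega)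
    constructor <;> [linarith [step1.1, step2.1]; linarith [step1.2, step2.2]]


/-- horizontal coordinate curve -/
def A : ℝ → ℝ := cur ca
/-- vertical drift curve -/
def B : ℝ → ℝ := cur sb

lemma A_mono {x x' : ℝ} (h : x ≤ x') :
    (x' - x)/2 ≤ A x' - A x ∧ A x' - A x ≤ x' - x := by
  have := cur_mono (f := ca) (lo := 1/2) (hi := 1)
    (fun k => ⟨half_le_ca k, ca_le_one k⟩) h
  unfold A
  constructor <;> linarith [this.1, this.2]

lemma B_mono {x x' : ℝ} (h : x ≤ x') :
    0 ≤ B x' - B x ∧ B x' - B x ≤ (x' - x)/4 := by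
  have := cur_mono (f := sb) (lo := 0) (hi := 1/4)
    (fun k => ⟨sb_nonneg k, sb_le k⟩) h
  unfold B
  constructor <;> linarith [this.1, this.2]

lemma abs_A_lower (x x' : ℝ) : |x' - x| / 2 ≤ |A x' - A x| := by
  rcases le_total x x' with h | h
  · have := A_mono h
    rw [abs_of_nonneg (by linarith), abs_of_nonneg (by linarith)]
    linarith [this.1]
  · have := A_mono h
    rw [abs_of_nonpos (by linarith), abs_of_nonpos (by linarith)]
    linarith [this.1]

lemma abs_A_upper (x x' : ℝ) : |A x' - A x| ≤ |x' - x| := by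
  rcases le_total x x' with h | h
  · have := A_mono h
    rw [abs_of_nonneg (by linarith), abs_of_nonneg (by linarith)]
    linarith [this.2]
  · have := A_mono h
    rw [abs_of_nonpos (by linarith), abs_of_nonpos (by linarith)]
    linarith [this.2]

lemma abs_B_upper (x x' : ℝ) : |B x' - B x| ≤ |x' - x| / 4 := by
  rcases le_total x x' with h | h
  · have := B_mono h
    rw [abs_of_nonneg (by linarith), abs_of_nonneg (by linarith)]
    linarith [this.2]
  · have := B_mono h
    rw [abs_of_nonpos (by linarith), abs_of_nonpos (by linarith)]
    linarith [this.2]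

lemma A_surj : Function.Surjective A := by
  have hcont : Continuous A := by
    refine (LipschitzWith.of_dist_le_mul (K := 1) fun x y => ?_).continuous
    rw [Real.dist_eq, Real.dist_eq]
    simpa using abs_A_upper y x
  apply hcont.surjective
  · apply tendsto_atTop_mono' atTop
      (show (fun x : ℝ => A 0 + x/2) ≤ᶠ[atTop] A from ?_) ?_
    · filter_upwards [eventually_ge_atTop (0:ℝ)] with x hx
      have := (A_mono hx).1
      show A 0 + x/2 ≤ A x
      linarith
    · exact tendsto_atTop_add_const_left atTop (A 0)
        (tendsto_id.atTop_div_const (by norm_num))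
  · apply tendsto_atBot_mono' atBot
      (show A ≤ᶠ[atBot] (fun x : ℝ => A 0 + x/2) from ?_) ?_
    · filter_upwards [eventually_le_atBot (0:ℝ)] with x hx
      have := (A_mono hx).1
      show A x ≤ A 0 + x/2
      linarith
    · exact tendsto_atBot_add_const_left atBot (A 0)
        (tendsto_id.atBot_div_const (by norm_num))

/-- Inverse of A -/
def Ainv (t : ℝ) : ℝ := (A_surj t).choose

lemma A_Ainv (t : ℝ) : A (Ainv t) = t := (A_surj t).choose_spec

lemma abs_Ainv (s t : ℝ) : |Ainv s - Ainv t| ≤ 2 * |s - t| := by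
  have := abs_A_lower (Ainv t) (Ainv s)
  rw [A_Ainv, A_Ainv] at this
  linarith

/-- Surjectivity of the piecewise-linear plane map. -/
lemma phi_surj (z1 z2 : ℝ) : ∃ x y : ℝ, A x - B y = z1 ∧ B x + A y = z2 := by
  set T : ℝ × ℝ → ℝ × ℝ := fun p => (Ainv (z1 + B p.2), Ainv (z2 - B p.1)) with hT
  have hcontr : ContractingWith (1/2 : ℝ≥0) T := by
    constructor
    · rw [← NNReal.coe_lt_coe]; norm_num
    · apply LipschitzWith.of_dist_le_mul
      intro p q
      rw [Prod.dist_eq]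
      have h1 : dist (T p).1 (T q).1 ≤ (1/2) * dist p.2 q.2 := by
        rw [Real.dist_eq, Real.dist_eq]
        calc |Ainv (z1 + B p.2) - Ainv (z1 + B q.2)| ≤ 2 * |(z1 + B p.2) - (z1 + B q.2)| :=
              abs_Ainv _ _
          _ = 2 * |B p.2 - B q.2| := by ring_nf
          _ ≤ 2 * (|p.2 - q.2|/4) := by linarith [abs_B_upper q.2 p.2]
          _ = (1/2) * |p.2 - q.2| := by ring
      have h2 : dist (T p).2 (T q).2 ≤ (1/2) * dist p.1 q.1 := by
        rw [Real.dist_eq, Real.dist_eq]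
        calc |Ainv (z2 - B p.1) - Ainv (z2 - B q.1)| ≤ 2 * |(z2 - B p.1) - (z2 - B q.1)| :=
              abs_Ainv _ _
          _ = 2 * |B q.1 - B p.1| := by ring_nf
          _ ≤ 2 * (|q.1 - p.1|/4) := by linarith [abs_B_upper p.1 q.1]
          _ = (1/2) * |p.1 - q.1| := by rw [abs_sub_comm]; ring
      have hd : (1/2 : ℝ≥0) * dist p q = (1/2 :ℝ) * max (dist p.1 q.1) (dist p.2 q.2) := by
        rw [Prod.dist_eq]; norm_num
      rw [hd]
      apply max_le
      · exact h1.trans (by apply mul_le_mul_of_nonneg_left (le_max_right _ _); norm_num)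
      · exact h2.trans (by apply mul_le_mul_of_nonneg_left (le_max_left _ _); norm_num)
  obtain ⟨p, hp, -⟩ := hcontr.exists_fixedPoint (0,0) (by
    rw [edist_dist]; exact ENNReal.ofReal_ne_top)
  have h1 : Ainv (z1 + B p.2) = p.1 := congrArg Prod.fst hp
  have h2 : Ainv (z2 - B p.1) = p.2 := congrArg Prod.snd hp
  refine ⟨p.1, p.2, ?_, ?_⟩
  · have := A_Ainv (z1 + B p.2); rw [h1] at this; linarith
  · have := A_Ainv (z2 - B p.1); rw [h2] at this; linarith

/-- Injectivity of the plane map. -/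
lemma phi_inj {x y x' y' : ℝ} (h1 : A x - B y = A x' - B y')
    (h2 : B x + A y = B x' + A y') : x = x' ∧ y = y' := by
  have e1 : |A x - A x'| = |B y - B y'| := by
    rw [show A x - A x' = B y - B y' by linarith]
  have e2 : |A y - A y'| = |B x - B x'| := by
    rw [show A y - A y' = B x' - B x by linarith, abs_sub_comm]
  have l1 := abs_A_lower x' x
  have l2 := abs_A_lower y' y
  have u1 := abs_B_upper y' y
  have u2 := abs_B_upper x' x
  have hx : |x - x'| = 0 := by
    nlinarith [abs_nonneg (x - x'), abs_nonneg (y - y')]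
  have hy : |y - y'| = 0 := by
    nlinarith [abs_nonneg (x - x'), abs_nonneg (y - y')]
  exact ⟨sub_eq_zero.1 (abs_eq_zero.1 hx), sub_eq_zero.1 (abs_eq_zero.1 hy)⟩


lemma A_int (m : ℤ) : A m = ps ca m := cur_int ca m
lemma B_int (m : ℤ) : B m = ps sb m := cur_int sb m
lemma A_cell (m : ℤ) {s : ℝ} (h0 : 0 ≤ s) (h1 : s ≤ 1) : A ((m:ℝ) + s) = ps ca m + s * ca m :=
  cur_cell ca m h0 h1
lemma B_cell (m : ℤ) {s : ℝ} (h0 : 0 ≤ s) (h1 : s ≤ 1) : B ((m:ℝ) + s) = ps sb m + s * sb m :=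
  cur_cell sb m h0 h1
def mk2 (x y : ℝ) : EuclideanSpace ℝ (Fin 2) := WithLp.toLp 2 ![x, y]

lemma mk2_ext {z w : EuclideanSpace ℝ (Fin 2)} (h0 : z 0 = w 0) (h1 : z 1 = w 1) : z = w := by
  apply PiLp.ext
  intro i
  fin_cases i
  · exact h0
  · exact h1

def uvec (k : ℤ) : EuclideanSpace ℝ (Fin 2) := mk2 (ca k) (sb k)
def vvec (l : ℤ) : EuclideanSpace ℝ (Fin 2) := mk2 (-(sb l)) (ca l)
def bpt (k l : ℤ) : EuclideanSpace ℝ (Fin 2) := mk2 (ps ca k - ps sb l) (ps sb k + ps ca l)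

lemma indep (k l : ℤ) : LinearIndependent ℝ ![uvec k, vvec l] := by
  rw [linearIndependent_fin2]
  constructor
  · intro h
    have := congrArg (fun z => z 1) h
    have h2 := half_le_ca l
    simp [vvec, mk2] at this
    linarith
  · intro c h
    have h0 := congrArg (fun z => z 0) h
    have h1 := congrArg (fun z => z 1) h
    simp [vvec, uvec, mk2] at h0 h1
    have h2 := half_le_ca l
    have h3 := half_le_ca k
    have h4 := sb_nonneg l
    have h5 := sb_nonneg k
    nlinarith

def tile (k l : ℤ) : Pgram := ⟨bpt k l, uvec k, vvec l, indep k l⟩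

lemma point_eq (k l : ℤ) (s t : ℝ) :
    bpt k l + s • uvec k + t • vvec l
      = mk2 ((ps ca k + s * ca k) - (ps sb l + t * sb l))
            ((ps sb k + s * sb k) + (ps ca l + t * ca l)) := by
  apply mk2_ext
  · show bpt k l 0 + s * uvec k 0 + t * vvec l 0 = _
    simp only [mk2, bpt, uvec, vvec, Matrix.cons_val_zero]
    ring
  · show bpt k l 1 + s * uvec k 1 + t * vvec l 1 = _
    simp only [mk2, bpt, uvec, vvec, Matrix.cons_val_one, Matrix.head_cons, Matrix.cons_val_zero]
    ring

lemma mem_carrier {k l : ℤ} {z : EuclideanSpace ℝ (Fin 2)} :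
    z ∈ (tile k l).carrier ↔
      ∃ x y : ℝ, x ∈ Set.Icc (k:ℝ) (k+1) ∧ y ∈ Set.Icc (l:ℝ) (l+1) ∧
        A x - B y = z 0 ∧ B x + A y = z 1 := by
  constructor
  · rintro ⟨s, t, hs, ht, rfl⟩
    refine ⟨k + s, l + t, ⟨by linarith [hs.1], by linarith [hs.2]⟩,
      ⟨by linarith [ht.1], by linarith [ht.2]⟩, ?_, ?_⟩
    · rw [A_cell k hs.1 hs.2, B_cell l ht.1 ht.2]
      show _ = (bpt k l + s • uvec k + t • vvec l) 0
      rw [point_eq]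
      rfl
    · rw [B_cell k hs.1 hs.2, A_cell l ht.1 ht.2]
      show _ = (bpt k l + s • uvec k + t • vvec l) 1
      rw [point_eq]
      rfl
  · rintro ⟨x, y, hx, hy, h0, h1⟩
    have hs0 : (0:ℝ) ≤ x - k := by linarith [hx.1]
    have hs1 : x - (k:ℝ) ≤ 1 := by linarith [hx.2]
    have ht0 : (0:ℝ) ≤ y - l := by linarith [hy.1]
    have ht1 : y - (l:ℝ) ≤ 1 := by linarith [hy.2]
    have hA : A x = ps ca k + (x - k) * ca k := by
      have := A_cell k hs0 hs1; rwa [show (k:ℝ) + (x - k) = x by ring] at this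
    have hB : B x = ps sb k + (x - k) * sb k := by
      have := B_cell k hs0 hs1; rwa [show (k:ℝ) + (x - k) = x by ring] at this
    have hA' : A y = ps ca l + (y - l) * ca l := by
      have := A_cell l ht0 ht1; rwa [show (l:ℝ) + (y - l) = y by ring] at this
    have hB' : B y = ps sb l + (y - l) * sb l := by
      have := B_cell l ht0 ht1; rwa [show (l:ℝ) + (y - l) = y by ring] at this
    refine ⟨x - k, y - l, ⟨hs0, hs1⟩, ⟨ht0, ht1⟩, ?_⟩
    show z = bpt k l + (x - k) • uvec k + (y - l) • vvec l
    rw [point_eq]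
    apply mk2_ext
    · show z 0 = ps ca k + (x - k) * ca k - (ps sb l + (y - l) * sb l)
      rw [← h0]; rw [hA, hB']
    · show z 1 = ps sb k + (x - k) * sb k + (ps ca l + (y - l) * ca l)
      rw [← h1]; rw [hB, hA']


lemma norm_mk2 (x y : ℝ) : ‖mk2 x y‖ = Real.sqrt (x^2 + y^2) := by
  rw [EuclideanSpace.norm_eq]
  simp [Fin.sum_univ_two, mk2, sq_abs]

lemma abs_coord (z : EuclideanSpace ℝ (Fin 2)) (i : Fin 2) : |z i| ≤ ‖z‖ := by
  rw [EuclideanSpace.norm_eq, ← Real.sqrt_sq_eq_abs]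
  apply Real.sqrt_le_sqrt
  fin_cases i <;>
  · rw [Fin.sum_univ_two]
    simp [sq_abs]
    positivity

def tiles : Set Pgram := {P | ∃ k l : ℤ, P = tile k l}

lemma covers (z : EuclideanSpace ℝ (Fin 2)) : ∃ P ∈ tiles, z ∈ P.carrier := by
  obtain ⟨x, y, h0, h1⟩ := phi_surj (z 0) (z 1)
  exact ⟨tile ⌊x⌋ ⌊y⌋, ⟨_, _, rfl⟩, mem_carrier.2 ⟨x, y,
    ⟨Int.floor_le x, (Int.lt_floor_add_one x).le⟩,
    ⟨Int.floor_le y, (Int.lt_floor_add_one y).le⟩, h0, h1⟩⟩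

lemma carrier_param_shift {k l : ℤ} {z w : EuclideanSpace ℝ (Fin 2)} {s t e c1 c2 : ℝ}
    (hz : z = bpt k l + s • uvec k + t • vvec l)
    (hw : w ∈ (tile k l).carrier) (hwz : w = z + e • mk2 c1 c2) :
    ∃ s' t', s' ∈ Set.Icc (0:ℝ) 1 ∧ t' ∈ Set.Icc (0:ℝ) 1 ∧
      (s' - s) * (ca k * ca l + sb k * sb l) = e * (c1 * ca l + c2 * sb l) ∧
      (t' - t) * (ca k * ca l + sb k * sb l) = e * (-(c1 * sb k) + c2 * ca k) := by
  obtain ⟨s', t', hs', ht', hw'⟩ := hw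
  have hw2 : bpt k l + s' • uvec k + t' • vvec l
      = (bpt k l + s • uvec k + t • vvec l) + e • mk2 c1 c2 := by
    rw [← hz]
    exact hw'.symm.trans hwz
  rw [point_eq, point_eq] at hw2
  have f0 : ps ca k + s' * ca k - (ps sb l + t' * sb l)
      = (ps ca k + s * ca k - (ps sb l + t * sb l)) + e * c1 := congrArg (fun z => z 0) hw2
  have f1 : ps sb k + s' * sb k + (ps ca l + t' * ca l)
      = (ps sb k + s * sb k + (ps ca l + t * ca l)) + e * c2 := congrArg (fun z => z 1) hw2
  refine ⟨s', t', hs', ht', ?_, ?_⟩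
  · linear_combination (ca l) * f0 + (sb l) * f1
  · linear_combination (-(sb k)) * f0 + (ca k) * f1

lemma c_pos (k l : ℤ) : (1:ℝ)/4 ≤ ca k * ca l + sb k * sb l := by
  nlinarith [half_le_ca k, half_le_ca l, sb_nonneg k, sb_nonneg l, ca_le_one k, ca_le_one l]

lemma interior_param {k l : ℤ} {z : EuclideanSpace ℝ (Fin 2)}
    (hz : z ∈ interior (tile k l).carrier) :
    ∃ s t : ℝ, s ∈ Set.Ioo (0:ℝ) 1 ∧ t ∈ Set.Ioo (0:ℝ) 1 ∧
      z = bpt k l + s • uvec k + t • vvec l := by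
  obtain ⟨ε, εpos, hball⟩ := Metric.mem_nhds_iff.1 (mem_interior_iff_mem_nhds.1 hz)
  have hball' : Metric.ball z ε ⊆ (tile k l).carrier := hball
  obtain ⟨s, t, hs, ht, hzeq⟩ := interior_subset hz
  have hc := c_pos k l
  have hmem : ∀ c1 c2 : ℝ, c1^2 + c2^2 = 1 → ∀ e : ℝ, |e| < ε →
      z + e • mk2 c1 c2 ∈ (tile k l).carrier := by
    intro c1 c2 hcc e he
    apply hball'
    rw [Metric.mem_ball, dist_eq_norm, add_sub_cancel_left, norm_smul, norm_mk2, hcc,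
      Real.sqrt_one, mul_one]
    exact he
  have hεlt : |ε/2| < ε := by rw [abs_of_pos (by linarith)]; linarith
  have hεlt' : |(-(ε/2))| < ε := by rw [abs_neg]; exact hεlt
  have hA : (ca l)^2 + (sb l)^2 = 1 := ca_sq_add_sb_sq l
  have hB : (-(sb k))^2 + (ca k)^2 = 1 := by
    have := ca_sq_add_sb_sq k; nlinarith
  refine ⟨s, t, ⟨?_, ?_⟩, ⟨?_, ?_⟩, hzeq⟩
  · obtain ⟨s', t', hs', ht', key, -⟩ :=
      carrier_param_shift hzeq (hmem (ca l) (sb l) hA (-(ε/2)) hεlt') rfl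
    have key' : (s' - s) * (ca k * ca l + sb k * sb l) = -(ε/2) := by
      rw [key]; linear_combination (-(ε/2)) * hA
    nlinarith [hs'.1, hc, εpos]
  · obtain ⟨s', t', hs', ht', key, -⟩ :=
      carrier_param_shift hzeq (hmem (ca l) (sb l) hA (ε/2) hεlt) rfl
    have key' : (s' - s) * (ca k * ca l + sb k * sb l) = ε/2 := by
      rw [key]; linear_combination (ε/2) * hA
    nlinarith [hs'.2, hc, εpos]
  · obtain ⟨s', t', hs', ht', -, key⟩ :=
      carrier_param_shift hzeq (hmem (-(sb k)) (ca k) hB (-(ε/2)) hεlt') rfl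
    have key' : (t' - t) * (ca k * ca l + sb k * sb l) = -(ε/2) := by
      rw [key]; linear_combination (-(ε/2)) * hB
    nlinarith [ht'.1, hc, εpos]
  · obtain ⟨s', t', hs', ht', -, key⟩ :=
      carrier_param_shift hzeq (hmem (-(sb k)) (ca k) hB (ε/2) hεlt) rfl
    have key' : (t' - t) * (ca k * ca l + sb k * sb l) = ε/2 := by
      rw [key]; linear_combination (ε/2) * hB
    nlinarith [ht'.2, hc, εpos]


lemma interior_phi {k l : ℤ} {z : EuclideanSpace ℝ (Fin 2)}
    (hz : z ∈ interior (tile k l).carrier) :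
    ∃ x y : ℝ, x ∈ Set.Ioo (k:ℝ) (k+1) ∧ y ∈ Set.Ioo (l:ℝ) (l+1) ∧
      A x - B y = z 0 ∧ B x + A y = z 1 := by
  obtain ⟨s, t, hs, ht, hzeq⟩ := interior_param hz
  refine ⟨k + s, l + t, ⟨by linarith [hs.1], by linarith [hs.2]⟩,
    ⟨by linarith [ht.1], by linarith [ht.2]⟩, ?_, ?_⟩
  · rw [A_cell k hs.1.le hs.2.le, B_cell l ht.1.le ht.2.le, hzeq, point_eq]
    rfl
  · rw [B_cell k hs.1.le hs.2.le, A_cell l ht.1.le ht.2.le, hzeq, point_eq]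
    rfl

lemma disjointInt : ∀ P ∈ tiles, ∀ Q ∈ tiles, P ≠ Q →
    interior P.carrier ∩ interior Q.carrier = ∅ := by
  rintro P ⟨k, l, rfl⟩ Q ⟨k', l', rfl⟩ hne
  rw [Set.eq_empty_iff_forall_notMem]
  rintro z ⟨hz1, hz2⟩
  obtain ⟨x, y, hx, hy, h0, h1⟩ := interior_phi hz1
  obtain ⟨x', y', hx', hy', h0', h1'⟩ := interior_phi hz2
  obtain ⟨rfl, rfl⟩ := phi_inj (h0.trans h0'.symm) (h1.trans h1'.symm)
  have hk : k = k' := by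
    have h1 := hx.1; have h2 := hx.2; have h3 := hx'.1; have h4 := hx'.2
    have : (k:ℝ) < k' + 1 := by linarith
    have : (k':ℝ) < k + 1 := by linarith
    have e1 : k < k' + 1 := by exact_mod_cast ‹(k:ℝ) < k' + 1›
    have e2 : k' < k + 1 := by exact_mod_cast ‹(k':ℝ) < k + 1›
    omega
  have hl : l = l' := by
    have h1 := hy.1; have h2 := hy.2; have h3 := hy'.1; have h4 := hy'.2
    have : (l:ℝ) < l' + 1 := by linarith
    have : (l':ℝ) < l + 1 := by linarith
    have e1 : l < l' + 1 := by exact_mod_cast ‹(l:ℝ) < l' + 1›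
    have e2 : l' < l + 1 := by exact_mod_cast ‹(l':ℝ) < l + 1›
    omega
  exact hne (by rw [hk, hl])

lemma bpt_vertices (k l : ℤ) :
    (tile k l).a = bpt k l ∧
    (tile k l).a + (tile k l).u = bpt (k+1) l ∧
    (tile k l).a + (tile k l).u + (tile k l).v = bpt (k+1) (l+1) ∧
    (tile k l).a + (tile k l).v = bpt k (l+1) := by
  refine ⟨rfl, ?_, ?_, ?_⟩
  · apply mk2_ext
    · show bpt k l 0 + uvec k 0 = bpt (k+1) l 0
      simp only [bpt, uvec, mk2, Matrix.cons_val_zero, ps_succ]; ring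
    · show bpt k l 1 + uvec k 1 = bpt (k+1) l 1
      simp only [bpt, uvec, mk2, Matrix.cons_val_one, Matrix.head_cons, Matrix.cons_val_zero, ps_succ]; ring
  · apply mk2_ext
    · show bpt k l 0 + uvec k 0 + vvec l 0 = bpt (k+1) (l+1) 0
      simp only [bpt, uvec, vvec, mk2, Matrix.cons_val_zero, ps_succ]; ring
    · show bpt k l 1 + uvec k 1 + vvec l 1 = bpt (k+1) (l+1) 1
      simp only [bpt, uvec, vvec, mk2, Matrix.cons_val_one, Matrix.head_cons, Matrix.cons_val_zero, ps_succ]; ring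
  · apply mk2_ext
    · show bpt k l 0 + vvec l 0 = bpt k (l+1) 0
      simp only [bpt, vvec, mk2, Matrix.cons_val_zero, ps_succ]; ring
    · show bpt k l 1 + vvec l 1 = bpt k (l+1) 1
      simp only [bpt, vvec, mk2, Matrix.cons_val_one, Matrix.head_cons, Matrix.cons_val_zero, ps_succ]; ring

lemma bpt_phi (m n : ℤ) : A m - B n = bpt m n 0 ∧ B m + A n = bpt m n 1 := by
  rw [A_int, B_int, A_int, B_int]
  exact ⟨rfl, rfl⟩

lemma vertexToVertex : ∀ P ∈ tiles, ∀ Q ∈ tiles, ∀ z ∈ P.vertexSet,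
    z ∈ Q.carrier → z ∈ Q.vertexSet := by
  rintro P ⟨k, l, rfl⟩ Q ⟨k', l', rfl⟩ z hv hc
  obtain ⟨v1, v2, v3, v4⟩ := bpt_vertices k l
  have hzb : ∃ m n : ℤ, z = bpt m n := by
    rcases hv with h | h | h | h
    · exact ⟨k, l, by rw [h, v1]⟩
    · exact ⟨k+1, l, by rw [h, v2]⟩
    · exact ⟨k+1, l+1, by rw [h, v3]⟩
    · exact ⟨k, l+1, by rw [h, v4]⟩
  obtain ⟨m, n, rfl⟩ := hzb
  obtain ⟨x, y, hx, hy, h0, h1⟩ := mem_carrier.1 hc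
  obtain ⟨g0, g1⟩ := bpt_phi m n
  obtain ⟨rfl, rfl⟩ := phi_inj (h0.trans g0.symm) (h1.trans g1.symm)
  have hm : m = k' ∨ m = k' + 1 := by
    have h1 := hx.1; have h2 := hx.2
    have e1 : k' ≤ m := by exact_mod_cast h1
    have e2 : m ≤ k' + 1 := by exact_mod_cast h2
    omega
  have hn : n = l' ∨ n = l' + 1 := by
    have h1 := hy.1; have h2 := hy.2
    have e1 : l' ≤ n := by exact_mod_cast h1
    have e2 : n ≤ l' + 1 := by exact_mod_cast h2
    omega
  obtain ⟨w1, w2, w3, w4⟩ := bpt_vertices k' l'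
  rcases hm with rfl | rfl <;> rcases hn with rfl | rfl
  · exact Or.inl w1.symm
  · exact Or.inr (Or.inr (Or.inr w4.symm))
  · exact Or.inr (Or.inl w2.symm)
  · exact Or.inr (Or.inr (Or.inl w3.symm))



lemma locallyFinite (z : EuclideanSpace ℝ (Fin 2)) (r : ℝ) :
    {P | P ∈ tiles ∧ (P.carrier ∩ Metric.ball z r).Nonempty}.Finite := by
  obtain ⟨x₀, y₀, h0, h1⟩ := phi_surj (z 0) (z 1)
  have key : {P | P ∈ tiles ∧ (P.carrier ∩ Metric.ball z r).Nonempty} ⊆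
      (fun p : ℤ × ℤ => tile p.1 p.2) ''
        {p : ℤ × ℤ | (p.1:ℝ) ∈ Set.Icc (x₀ - (4*r+1)) (x₀ + (4*r+1)) ∧
                     (p.2:ℝ) ∈ Set.Icc (y₀ - (4*r+1)) (y₀ + (4*r+1))} := by
    rintro P ⟨⟨k, l, rfl⟩, w, hwc, hwb⟩
    refine ⟨(k, l), ?_, rfl⟩
    obtain ⟨x, y, hx, hy, g0, g1⟩ := mem_carrier.1 hwc
    have hdist : dist w z < r := hwb
    have hd0 : |w 0 - z 0| < r := by
      calc |w 0 - z 0| = |(w - z) 0| := rfl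
        _ ≤ ‖w - z‖ := abs_coord _ _
        _ < r := by rwa [dist_eq_norm] at hdist
    have hd1 : |w 1 - z 1| < r := by
      calc |w 1 - z 1| = |(w - z) 1| := rfl
        _ ≤ ‖w - z‖ := abs_coord _ _
        _ < r := by rwa [dist_eq_norm] at hdist
    rw [← g0, ← h0] at hd0
    rw [← g1, ← h1] at hd1
    have l1 := abs_A_lower x₀ x
    have l2 := abs_A_lower y₀ y
    have u1 := abs_B_upper y₀ y
    have u2 := abs_B_upper x₀ x
    have t1 : |A x - A x₀| - |B y - B y₀| ≤ |A x - B y - (A x₀ - B y₀)| := by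
      have := abs_sub_abs_le_abs_sub (A x - A x₀) (B y - B y₀)
      have h := abs_sub_comm (A x - A x₀) (B y - B y₀)
      calc |A x - A x₀| - |B y - B y₀| ≤ |A x - A x₀ - (B y - B y₀)| := this
        _ = |A x - B y - (A x₀ - B y₀)| := by ring_nf
    have t2 : |A y - A y₀| - |B x - B x₀| ≤ |B x + A y - (B x₀ + A y₀)| := by
      have := abs_sub_abs_le_abs_sub (A y - A y₀) (-(B x - B x₀))
      calc |A y - A y₀| - |B x - B x₀| ≤ |A y - A y₀| - |(-(B x - B x₀))| := by
            rw [abs_neg]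
        _ ≤ |A y - A y₀ - -(B x - B x₀)| := this
        _ = |B x + A y - (B x₀ + A y₀)| := by ring_nf
    have hDx : |x - x₀| ≤ 4*r := by
      nlinarith [abs_nonneg (x - x₀), abs_nonneg (y - y₀)]
    have hDy : |y - y₀| ≤ 4*r := by
      nlinarith [abs_nonneg (x - x₀), abs_nonneg (y - y₀)]
    have hxk : |x - k| ≤ 1 := by
      rw [abs_le]; constructor <;> [linarith [hx.1]; linarith [hx.2]]
    have hyl : |y - l| ≤ 1 := by
      rw [abs_le]; constructor <;> [linarith [hy.1]; linarith [hy.2]]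
    constructor
    · constructor <;> linarith [(abs_le.1 hDx).1, (abs_le.1 hDx).2,
        (abs_le.1 hxk).1, (abs_le.1 hxk).2]
    · constructor <;> linarith [(abs_le.1 hDy).1, (abs_le.1 hDy).2,
        (abs_le.1 hyl).1, (abs_le.1 hyl).2]
  apply Set.Finite.subset _ key
  apply Set.Finite.image
  apply Set.Finite.subset (Set.Finite.prod (Set.finite_Icc ⌈x₀ - (4*r+1)⌉ ⌊x₀ + (4*r+1)⌋)
    (Set.finite_Icc ⌈y₀ - (4*r+1)⌉ ⌊y₀ + (4*r+1)⌋))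
  rintro ⟨k, l⟩ ⟨hk, hl⟩
  constructor
  · exact ⟨Int.ceil_le.2 hk.1, Int.le_floor.2 hk.2⟩
  · exact ⟨Int.ceil_le.2 hl.1, Int.le_floor.2 hl.2⟩

/-- Rotation by angle θ as a linear isometry equivalence of the plane. -/
def rotE (θ : ℝ) : EuclideanSpace ℝ (Fin 2) ≃ₗ[ℝ] EuclideanSpace ℝ (Fin 2) where
  toFun z := mk2 (cos θ * z 0 - sin θ * z 1) (sin θ * z 0 + cos θ * z 1)
  invFun z := mk2 (cos θ * z 0 + sin θ * z 1) (-(sin θ) * z 0 + cos θ * z 1)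
  map_add' x y := by
    apply mk2_ext
    · show cos θ * (x 0 + y 0) - sin θ * (x 1 + y 1) = _ + _
      show _ = (cos θ * x 0 - sin θ * x 1) + (cos θ * y 0 - sin θ * y 1)
      ring
    · show sin θ * (x 0 + y 0) + cos θ * (x 1 + y 1) = _ + _
      show _ = (sin θ * x 0 + cos θ * x 1) + (sin θ * y 0 + cos θ * y 1)
      ring
  map_smul' c x := by
    apply mk2_ext
    · show cos θ * (c * x 0) - sin θ * (c * x 1) = c * (cos θ * x 0 - sin θ * x 1)
      ring
    · show sin θ * (c * x 0) + cos θ * (c * x 1) = c * (sin θ * x 0 + cos θ * x 1)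
      ring
  left_inv x := by
    have h := sin_sq_add_cos_sq θ
    apply mk2_ext
    · show cos θ * (cos θ * x 0 - sin θ * x 1) + sin θ * (sin θ * x 0 + cos θ * x 1) = x 0
      linear_combination (x 0) * h
    · show -(sin θ) * (cos θ * x 0 - sin θ * x 1) + cos θ * (sin θ * x 0 + cos θ * x 1) = x 1
      linear_combination (x 1) * h
  right_inv x := by
    have h := sin_sq_add_cos_sq θ
    apply mk2_ext
    · show cos θ * (cos θ * x 0 + sin θ * x 1) - sin θ * (-(sin θ) * x 0 + cos θ * x 1) = x 0
      linear_combination (x 0) * h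
    · show sin θ * (cos θ * x 0 + sin θ * x 1) + cos θ * (-(sin θ) * x 0 + cos θ * x 1) = x 1
      linear_combination (x 1) * h

def rotI (θ : ℝ) : EuclideanSpace ℝ (Fin 2) ≃ₗᵢ[ℝ] EuclideanSpace ℝ (Fin 2) :=
  ⟨rotE θ, by
    intro x
    show ‖mk2 (cos θ * x 0 - sin θ * x 1) (sin θ * x 0 + cos θ * x 1)‖ = ‖x‖
    have hx : x = mk2 (x 0) (x 1) := mk2_ext rfl rfl
    rw [norm_mk2]
    conv_rhs => rw [hx, norm_mk2]
    have h := sin_sq_add_cos_sq θ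
    congr 1
    linear_combination (x 0 ^ 2 + x 1 ^ 2) * h⟩

/-- The translation isometry. -/
def transI (c : EuclideanSpace ℝ (Fin 2)) :
    EuclideanSpace ℝ (Fin 2) ≃ᵢ EuclideanSpace ℝ (Fin 2) := IsometryEquiv.addRight c

lemma transI_apply (c z : EuclideanSpace ℝ (Fin 2)) : transI c z = z + c := rfl


end Stmt15


namespace Stmt15

/-! ### Geometry of individual tiles -/

def sg (k l : ℤ) : ℝ := sb k * ca l - ca k * sb l

lemma sg_eq (k l : ℤ) : sg k l = Real.sin (γ k - γ l) := by
  rw [Real.sin_sub, sg, ca, sb, ca, sb]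

lemma sg_bounds (k l : ℤ) : -(1/4) ≤ sg k l ∧ sg k l ≤ 1/4 := by
  rw [sg_eq]
  have h1 := γ_pos k; have h2 := γ_lt k
  have h3 := γ_pos l; have h4 := γ_lt l
  rcases le_total (γ k) (γ l) with h | h
  · have hs := Real.le_sin (x := γ k - γ l) (by linarith)
    have hs2 := Real.sin_nonpos_of_nonpos_of_neg_pi_le (x := γ k - γ l) (by linarith)
      (by have := Real.pi_gt_three; linarith)
    exact ⟨by linarith, by linarith [hs2]⟩
  · have hs := Real.sin_le (x := γ k - γ l) (by linarith)
    have hs2 := Real.sin_nonneg_of_nonneg_of_le_pi (x := γ k - γ l) (by linarith)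
      (by have := Real.pi_gt_three; linarith)
    exact ⟨by linarith, by linarith⟩

lemma sg_pos {k l : ℤ} (h : l < k) : 0 < sg k l := by
  rw [sg_eq]
  apply Real.sin_pos_of_pos_of_lt_pi
  · have := γ_mono h; linarith
  · have := Real.pi_gt_three
    have := γ_pos l; have := γ_lt k
    linarith

lemma norm_uvec (k : ℤ) : ‖uvec k‖ = 1 := by
  rw [uvec, norm_mk2]
  rw [show ca k ^ 2 + sb k ^ 2 = 1 from ca_sq_add_sb_sq k, Real.sqrt_one]

lemma norm_vvec (l : ℤ) : ‖vvec l‖ = 1 := by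
  rw [vvec, norm_mk2]
  rw [show (-(sb l)) ^ 2 + ca l ^ 2 = ca l ^ 2 + sb l ^ 2 by ring,
    show ca l ^ 2 + sb l ^ 2 = 1 from ca_sq_add_sb_sq l, Real.sqrt_one]

lemma inner_uv (k l : ℤ) : (inner ℝ (uvec k) (vvec l) : ℝ) = sg k l := by
  simp [PiLp.inner_apply, Fin.sum_univ_two, RCLike.inner_apply, uvec, vvec, mk2, sg]
  ring

lemma angle_uv (k l : ℤ) :
    InnerProductGeometry.angle (uvec k) (vvec l) = Real.arccos (sg k l) := by
  rw [InnerProductGeometry.angle, inner_uv, norm_uvec, norm_vvec]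
  norm_num

lemma mk2_sub (a b c d : ℝ) : mk2 a b - mk2 c d = mk2 (a-c) (b-d) := by
  apply mk2_ext <;> rfl

lemma dist_param (k l : ℤ) (s t s' t' : ℝ) :
    dist (bpt k l + s • uvec k + t • vvec l) (bpt k l + s' • uvec k + t' • vvec l)
      = Real.sqrt (((s - s') * ca k - (t - t') * sb l)^2
          + ((s - s') * sb k + (t - t') * ca l)^2) := by
  rw [dist_eq_norm, point_eq, point_eq, mk2_sub, norm_mk2]
  congr 2 <;> ring

lemma diam_carrier {k l : ℤ} (h : 0 ≤ sg k l) :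
    Metric.diam (tile k l).carrier = Real.sqrt (2 + 2 * sg k l) := by
  have e1 := ca_sq_add_sb_sq k
  have e2 := ca_sq_add_sb_sq l
  have hb : ∀ p ∈ (tile k l).carrier, ∀ q ∈ (tile k l).carrier,
      dist p q ≤ Real.sqrt (2 + 2 * sg k l) := by
    rintro p ⟨s, t, hs, ht, rfl⟩ q ⟨s', t', hs', ht', rfl⟩
    show dist (bpt k l + s • uvec k + t • vvec l) (bpt k l + s' • uvec k + t' • vvec l) ≤ _
    rw [dist_param]
    apply Real.sqrt_le_sqrt
    have key : ((s - s') * ca k - (t - t') * sb l)^2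
        + ((s - s') * sb k + (t - t') * ca l)^2
        = (s - s')^2 + (t - t')^2 + 2*(s - s')*(t - t')*sg k l := by
      rw [sg]; linear_combination ((s - s')^2) * e1 + ((t - t')^2) * e2
    rw [key]
    have hα : (s - s')^2 ≤ 1 := by nlinarith [hs.1, hs.2, hs'.1, hs'.2]
    have hβ : (t - t')^2 ≤ 1 := by nlinarith [ht.1, ht.2, ht'.1, ht'.2]
    nlinarith [sq_nonneg ((s - s') - (t - t')), sq_nonneg ((s - s') + (t - t'))]
  apply le_antisymm
  · exact Metric.diam_le_of_forall_dist_le (Real.sqrt_nonneg _) hb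
  · have hm1 : bpt k l + (1:ℝ) • uvec k + (1:ℝ) • vvec l ∈ (tile k l).carrier :=
      ⟨1, 1, ⟨zero_le_one, le_refl 1⟩, ⟨zero_le_one, le_refl 1⟩, rfl⟩
    have hm0 : bpt k l + (0:ℝ) • uvec k + (0:ℝ) • vvec l ∈ (tile k l).carrier :=
      ⟨0, 0, ⟨le_refl 0, zero_le_one⟩, ⟨le_refl 0, zero_le_one⟩, rfl⟩
    have hdist : dist (bpt k l + (1:ℝ) • uvec k + (1:ℝ) • vvec l)
        (bpt k l + (0:ℝ) • uvec k + (0:ℝ) • vvec l) = Real.sqrt (2 + 2 * sg k l) := by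
      rw [dist_param]
      congr 1
      rw [sg]; linear_combination e1 + e2
    rw [← hdist]
    apply Metric.dist_le_diam_of_mem _ hm1 hm0
    exact Metric.isBounded_iff.2 ⟨Real.sqrt (2 + 2 * sg k l), fun x hx y hy => hb x hx y hy⟩

/-! ### Rotational congruence of the square tiles -/

lemma cos_gamma_add (i j : ℤ) : Real.cos (γ j)
    = Real.cos (γ j - γ i) * Real.cos (γ i) - Real.sin (γ j - γ i) * Real.sin (γ i) := by
  rw [← Real.cos_add]; congr 1; ring

lemma sin_gamma_add (i j : ℤ) : Real.sin (γ j)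
    = Real.sin (γ j - γ i) * Real.cos (γ i) + Real.cos (γ j - γ i) * Real.sin (γ i) := by
  rw [← Real.sin_add]; congr 1; ring

lemma rot_uvec {i j : ℤ} : rotI (γ j - γ i) (uvec i) = uvec j := by
  apply mk2_ext
  · show Real.cos (γ j - γ i) * ca i - Real.sin (γ j - γ i) * sb i = ca j
    rw [ca, sb, ca]
    linear_combination - cos_gamma_add i j
  · show Real.sin (γ j - γ i) * ca i + Real.cos (γ j - γ i) * sb i = sb j
    rw [ca, sb, sb]
    linear_combination - sin_gamma_add i j

lemma rot_vvec {i j : ℤ} : rotI (γ j - γ i) (vvec i) = vvec j := by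
  apply mk2_ext
  · show Real.cos (γ j - γ i) * (-(sb i)) - Real.sin (γ j - γ i) * ca i = -(sb j)
    rw [ca, sb, sb]
    linear_combination sin_gamma_add i j
  · show Real.sin (γ j - γ i) * (-(sb i)) + Real.cos (γ j - γ i) * ca i = ca j
    rw [ca, sb, ca]
    linear_combination - cos_gamma_add i j

def congrF (i j : ℤ) : (EuclideanSpace ℝ (Fin 2)) ≃ᵢ (EuclideanSpace ℝ (Fin 2)) :=
  (transI (-(bpt i i))).trans (((rotI (γ j - γ i)).toIsometryEquiv).trans (transI (bpt j j)))

lemma congrF_apply (i j : ℤ) (z : EuclideanSpace ℝ (Fin 2)) :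
    congrF i j z = rotI (γ j - γ i) (z - bpt i i) + bpt j j := by
  show rotI (γ j - γ i) (z + -(bpt i i)) + bpt j j = _
  rw [← sub_eq_add_neg]

lemma congrF_param (i j : ℤ) (s t : ℝ) :
    congrF i j (bpt i i + s • uvec i + t • vvec i) = bpt j j + s • uvec j + t • vvec j := by
  rw [congrF_apply]
  have h1 : bpt i i + s • uvec i + t • vvec i - bpt i i = s • uvec i + t • vvec i := by abel
  rw [h1, map_add, map_smul, map_smul, rot_uvec, rot_vvec]
  abel

lemma congruent_tiles (i j : ℤ) :
    ∃ f : (EuclideanSpace ℝ (Fin 2)) ≃ᵢ (EuclideanSpace ℝ (Fin 2)),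
      f '' (tile i i).carrier = (tile j j).carrier := by
  refine ⟨congrF i j, ?_⟩
  ext z
  constructor
  · rintro ⟨w, ⟨s, t, hs, ht, rfl⟩, rfl⟩
    exact ⟨s, t, hs, ht, congrF_param i j s t⟩

  · rintro ⟨s, t, hs, ht, rfl⟩
    exact ⟨bpt i i + s • uvec i + t • vvec i, ⟨s, t, hs, ht, rfl⟩, congrF_param i j s t⟩

lemma one_lt_sin_add_cos {x : ℝ} (h0 : 0 < x) (h1 : x < 1) : 1 < Real.sin x + Real.cos x := by
  have hs : 0 < Real.sin x := Real.sin_pos_of_pos_of_lt_pi h0 (by have := Real.pi_gt_three; linarith)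
  have hc : 0 < Real.cos x := Real.cos_pos_of_mem_Ioo
    ⟨by have := Real.pi_gt_three; linarith, by have := Real.pi_gt_three; linarith⟩
  have hpy := Real.sin_sq_add_cos_sq x
  nlinarith [mul_pos hs hc, sq_nonneg (Real.sin x + Real.cos x - 1),
    sq_nonneg (Real.sin x + Real.cos x + 1)]

lemma not_translate {i j : ℤ} (hij : i ≠ j)
    (h : ∃ tv : EuclideanSpace ℝ (Fin 2),
      (tile j j).carrier = (fun x => x + tv) '' (tile i i).carrier) : False := by
  obtain ⟨tv, htv⟩ := h
  have hm0 : bpt j j ∈ (tile j j).carrier := by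
    refine ⟨0, 0, ⟨le_refl 0, zero_le_one⟩, ⟨le_refl 0, zero_le_one⟩, ?_⟩
    show bpt j j = bpt j j + (0:ℝ) • uvec j + (0:ℝ) • vvec j
    rw [zero_smul, zero_smul, add_zero, add_zero]
  have hm1 : bpt j j + uvec j + vvec j ∈ (tile j j).carrier := by
    refine ⟨1, 1, ⟨zero_le_one, le_refl 1⟩, ⟨zero_le_one, le_refl 1⟩, ?_⟩
    rw [one_smul, one_smul]
    rfl
  rw [htv] at hm0 hm1
  obtain ⟨p1, ⟨s1, t1, hs1, ht1, hp1⟩, e1⟩ := hm0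
  obtain ⟨p2, ⟨s2, t2, hs2, ht2, hp2⟩, e2⟩ := hm1
  have e1' : p1 + tv = bpt j j := e1
  have e2' : p2 + tv = bpt j j + uvec j + vvec j := e2
  have hsub : p2 - p1 = uvec j + vvec j := by
    calc p2 - p1 = (p2 + tv) - (p1 + tv) := by abel
      _ = (bpt j j + uvec j + vvec j) - bpt j j := by rw [e1', e2']
      _ = uvec j + vvec j := by abel
  rw [hp1, hp2] at hsub
  have hsub2 : mk2 (ps ca i + s2*ca i - (ps sb i + t2*sb i)) (ps sb i + s2*sb i + (ps ca i + t2*ca i))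
      - mk2 (ps ca i + s1*ca i - (ps sb i + t1*sb i)) (ps sb i + s1*sb i + (ps ca i + t1*ca i))
      = uvec j + vvec j := by
    rw [← point_eq, ← point_eq]
    exact hsub
  rw [mk2_sub] at hsub2
  have f0 : (ps ca i + s2*ca i - (ps sb i + t2*sb i)) - (ps ca i + s1*ca i - (ps sb i + t1*sb i))
      = ca j + -(sb j) := congrArg (fun z => z 0) hsub2
  have f1 : (ps sb i + s2*sb i + (ps ca i + t2*ca i)) - (ps sb i + s1*sb i + (ps ca i + t1*ca i))
      = sb j + ca j := congrArg (fun z => z 1) hsub2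
  have e := ca_sq_add_sb_sq i
  have hsin := Real.sin_sub (γ j) (γ i)
  have hcos := Real.cos_sub (γ j) (γ i)
  rcases lt_or_gt_of_ne hij with hlt | hlt
  · -- i < j : use the t-coefficient
    have key : t2 - t1 = Real.sin (γ j - γ i) + Real.cos (γ j - γ i) := by
      simp only [ca, sb] at f0 f1
      linear_combination (-(Real.sin (γ i))) * f0 + (Real.cos (γ i)) * f1
        - hsin - hcos - (t2 - t1) * (Real.cos_sq_add_sin_sq (γ i))
    have hδ0 : 0 < γ j - γ i := by linarith [γ_mono hlt]
    have hδ1 : γ j - γ i < 1 := by linarith [γ_pos i, γ_lt j]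
    have := one_lt_sin_add_cos hδ0 hδ1
    have ht := ht1.1; have ht' := ht2.2
    linarith [key]
  · -- j < i : use the s-coefficient
    have key : s2 - s1 = Real.cos (γ j - γ i) - Real.sin (γ j - γ i) := by
      simp only [ca, sb] at f0 f1
      linear_combination (Real.cos (γ i)) * f0 + (Real.sin (γ i)) * f1
        + hsin - hcos - (s2 - s1) * (Real.cos_sq_add_sin_sq (γ i))
    have hδ0 : 0 < γ i - γ j := by linarith [γ_mono hlt]
    have hδ1 : γ i - γ j < 1 := by linarith [γ_pos j, γ_lt i]
    have h2 := one_lt_sin_add_cos hδ0 hδ1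
    have hrw : Real.cos (γ j - γ i) - Real.sin (γ j - γ i)
        = Real.sin (γ i - γ j) + Real.cos (γ i - γ j) := by
      rw [show γ j - γ i = -(γ i - γ j) by ring, Real.cos_neg, Real.sin_neg]
      ring
    have hs := hs1.1; have hs' := hs2.2
    rw [hrw] at key
    linarith [key]

end Stmt15

/-- there is a locally finite, vertex-to-vertex parallelogram tiling with
infinitely many prototiles, interior angles bounded below by a positive constant, in
which a square prototile occurs in infinitely many orientations. -/
theorem stmt15 :
    ∃ (𝒯 : PgramTiling) (α : ℝ), 0 < α ∧ (∀ θ ∈ interiorAngles 𝒯, α ≤ θ) ∧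
      (∃ f : ℕ → Pgram, (∀ n, f n ∈ 𝒯.tiles) ∧
        ∀ i j, i ≠ j → ¬ PgramCongruent (f i) (f j)) ∧
      (∃ g : ℕ → Pgram, (∀ n, g n ∈ 𝒯.tiles) ∧
        (∀ n, (inner ℝ (g n).u (g n).v : ℝ) = 0 ∧ ‖(g n).u‖ = ‖(g n).v‖) ∧
        (∀ i j, PgramCongruent (g i) (g j)) ∧
        ∀ i j, i ≠ j → ¬ IsTranslate (g i) (g j)) := by
  classical
  refine ⟨⟨Stmt15.tiles, Stmt15.covers, Stmt15.disjointInt, Stmt15.locallyFinite,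
    Stmt15.vertexToVertex⟩, π/2 - Real.arcsin (1/2), ?_, ?_, ?_, ?_⟩
  · have : Real.arcsin (1/2) < π/2 := Real.arcsin_lt_pi_div_two.2 (by norm_num)
    linarith
  · rintro θ ⟨P, ⟨k, l, rfl⟩, hθ⟩
    have hang : InnerProductGeometry.angle (Stmt15.tile k l).u (Stmt15.tile k l).v
        = π/2 - Real.arcsin (Stmt15.sg k l) := by
      show InnerProductGeometry.angle (Stmt15.uvec k) (Stmt15.vvec l) = _
      rw [Stmt15.angle_uv, Real.arccos_eq_pi_div_two_sub_arcsin]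
    obtain ⟨hb1, hb2⟩ := Stmt15.sg_bounds k l
    have m1 : Real.arcsin (Stmt15.sg k l) ≤ Real.arcsin (1/2) :=
      Real.monotone_arcsin (by linarith)
    have m2 : Real.arcsin (-(1/2)) ≤ Real.arcsin (Stmt15.sg k l) :=
      Real.monotone_arcsin (by linarith)
    rw [Real.arcsin_neg] at m2
    rcases hθ with rfl | rfl
    · rw [hang]; linarith
    · rw [hang]; linarith
  · refine ⟨fun n => Stmt15.tile ((n:ℤ)+1) 0, fun n => ⟨_, _, rfl⟩, ?_⟩
    intro i j hij ⟨F, hF⟩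
    have hd : Metric.diam (Stmt15.tile ((i:ℤ)+1) 0).carrier
        = Metric.diam (Stmt15.tile ((j:ℤ)+1) 0).carrier := by
      rw [← hF, F.diam_image]
    have hi : (0:ℤ) < (i:ℤ)+1 := by positivity
    have hj : (0:ℤ) < (j:ℤ)+1 := by positivity
    rw [Stmt15.diam_carrier (Stmt15.sg_pos hi).le,
      Stmt15.diam_carrier (Stmt15.sg_pos hj).le] at hd
    have h1 : 0 < Stmt15.sg ((i:ℤ)+1) 0 := Stmt15.sg_pos hi
    have h2 : 0 < Stmt15.sg ((j:ℤ)+1) 0 := Stmt15.sg_pos hj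
    have heq : Stmt15.sg ((i:ℤ)+1) 0 = Stmt15.sg ((j:ℤ)+1) 0 := by
      have := (Real.sqrt_inj (by linarith) (by linarith)).1 hd
      linarith
    rw [Stmt15.sg_eq, Stmt15.sg_eq] at heq
    have hmem : ∀ m : ℤ, Stmt15.γ m - Stmt15.γ 0 ∈ Set.Icc (-(π/2)) (π/2) := by
      intro m
      have h1 := Stmt15.γ_pos m; have h2 := Stmt15.γ_lt m
      have h3 := Stmt15.γ_pos 0; have h4 := Stmt15.γ_lt 0
      have := Real.pi_gt_three
      rw [Set.mem_Icc]
      constructor <;> linarith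
    have := Real.injOn_sin (hmem ((i:ℤ)+1)) (hmem ((j:ℤ)+1)) heq
    have : Stmt15.γ ((i:ℤ)+1) = Stmt15.γ ((j:ℤ)+1) := by linarith
    have : ((i:ℤ)+1) = ((j:ℤ)+1) := Stmt15.γ_mono.injective this
    exact hij (by exact_mod_cast sub_eq_zero.1 (by omega : ((i:ℤ)) - ((j:ℤ)) = 0) )
  · refine ⟨fun n => Stmt15.tile (n:ℤ) (n:ℤ), fun n => ⟨_, _, rfl⟩, ?_, ?_, ?_⟩
    · intro n
      refine ⟨?_, ?_⟩
      · show (inner ℝ (Stmt15.uvec n) (Stmt15.vvec n) : ℝ) = 0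
        rw [Stmt15.inner_uv, Stmt15.sg]
        ring
      · show ‖Stmt15.uvec (n:ℤ)‖ = ‖Stmt15.vvec (n:ℤ)‖
        rw [Stmt15.norm_uvec, Stmt15.norm_vvec]
    · intro i j
      exact Stmt15.congruent_tiles i j
    · intro i j hij h
      exact Stmt15.not_translate (by exact_mod_cast hij) h
end
end
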